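/- arXiv:1205.1193 — 9 statements merged into one kernel-verified Lean document; each statement's English description precedes it below -/
import Mathlib

section
/- Let m be a positive integer and let γ ≥ 1 be a real number. If x₁ ≥ x₂ ≥ … ≥ x_m ≥ 0 are real numbers, then (∑_{i=1}^m (−1)^{i−1} x_i)^γ ≤ ∑_{i=1}^m (−1)^{i−1} x_i^γ. -/
open Finset

private lemma rpow_second_diff {γ : ℝ} (hγ : 1 ≤ γ) {a b d : ℝ}
    (ha : 0 ≤ a) (hab : a ≤ b) (hd : 0 ≤ d) :
    (a + d) ^ γ - a ^ γ ≤ (b + d) ^ γ - b ^ γ := by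
  rcases eq_or_lt_of_le hd with rfl | hd
  · simp
  rcases eq_or_lt_of_le hab with rfl | hab
  · exact le_rfl
  have hb : 0 ≤ b := ha.trans hab.le
  have hcv := convexOn_rpow hγ
  have h1 := hcv.secant_mono (a := a) (x := a + d) (y := b + d)
    (Set.mem_Ici.2 ha) (Set.mem_Ici.2 (by linarith)) (Set.mem_Ici.2 (by linarith))
    (by intro h; nlinarith) (by intro h; nlinarith) (by linarith)
  have h2 := hcv.secant_mono (a := b + d) (x := a) (y := b)
    (Set.mem_Ici.2 (by linarith)) (Set.mem_Ici.2 ha) (Set.mem_Ici.2 hb)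
    (by intro h; nlinarith) (by intro h; nlinarith) hab.le
  have e1 : ((b + d) ^ γ - a ^ γ) / (b + d - a) = (a ^ γ - (b + d) ^ γ) / (a - (b + d)) := by
    rw [← neg_div_neg_eq]; ring_nf
  have e2 : (b ^ γ - (b + d) ^ γ) / (b - (b + d)) = ((b + d) ^ γ - b ^ γ) / d := by
    rw [← neg_div_neg_eq]; ring_nf
  have h3 : ((a + d) ^ γ - a ^ γ) / (a + d - a) ≤ ((b + d) ^ γ - b ^ γ) / d := by
    calc ((a + d) ^ γ - a ^ γ) / (a + d - a) ≤ ((b + d) ^ γ - a ^ γ) / (b + d - a) := h1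
      _ = (a ^ γ - (b + d) ^ γ) / (a - (b + d)) := e1
      _ ≤ (b ^ γ - (b + d) ^ γ) / (b - (b + d)) := h2
      _ = ((b + d) ^ γ - b ^ γ) / d := e2
  have e3 : a + d - a = d := by ring
  rw [e3, div_le_div_iff₀ hd hd] at h3
  nlinarith

private lemma shift2 (n : ℕ) (f : ℕ → ℝ) :
    ∑ i ∈ range (n + 2), (-1 : ℝ) ^ i * f i
      = f 0 - f 1 + ∑ i ∈ range n, (-1 : ℝ) ^ i * f (i + 2) := by
  rw [Finset.sum_range_succ' _ (n + 1), Finset.sum_range_succ' _ n]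
  have : ∀ i, (-1 : ℝ) ^ (i + 1 + 1) * f (i + 1 + 1) = (-1 : ℝ) ^ i * f (i + 2) := by
    intro i; rw [pow_succ, pow_succ]; ring_nf
  rw [Finset.sum_congr rfl fun i _ => this i]
  ring

private lemma aux_alt (γ : ℝ) (hγ : 1 ≤ γ) :
    ∀ m : ℕ, ∀ x : ℕ → ℝ, (∀ i j, i ≤ j → j < m → x j ≤ x i) →
      (∀ i, i < m → 0 ≤ x i) →
      0 ≤ (∑ i ∈ range m, (-1 : ℝ) ^ i * x i) ∧
      (0 < m → (∑ i ∈ range m, (-1 : ℝ) ^ i * x i) ≤ x 0) ∧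
      (∑ i ∈ range m, (-1 : ℝ) ^ i * x i) ^ γ ≤ ∑ i ∈ range m, (-1 : ℝ) ^ i * x i ^ γ := by
  intro m
  induction m using Nat.strong_induction_on with
  | _ m ih =>
    match m with
    | 0 =>
      intro x _ _
      simp [Real.zero_rpow (by linarith : γ ≠ 0)]
    | 1 =>
      intro x hmono hnn
      have := hnn 0 (by omega)
      simp [this]
    | (n + 2) =>
      intro x hmono hnn
      obtain ⟨hs0, hsle, hst⟩ := ih n (by omega) (fun i => x (i + 2))
        (fun i j hij hj => hmono (i + 2) (j + 2) (by omega) (by omega))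
        (fun i hi => hnn (i + 2) (by omega))
      rw [shift2 n x, shift2 n (fun i => x i ^ γ)]
      set s := ∑ i ∈ range n, (-1 : ℝ) ^ i * x (i + 2) with hs
      set t := ∑ i ∈ range n, (-1 : ℝ) ^ i * x (i + 2) ^ γ with ht
      have hx1 : 0 ≤ x 1 := hnn 1 (by omega)
      have h01 : x 1 ≤ x 0 := hmono 0 1 (by omega) (by omega)
      have hsx1 : s ≤ x 1 := by
        rcases Nat.eq_zero_or_pos n with rfl | hn
        · simpa [hs] using hx1
        · exact (hsle hn).trans (hmono 1 2 (by omega) (by omega))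
      refine ⟨by linarith, fun _ => by linarith, ?_⟩
      have hkey := rpow_second_diff hγ hs0 hsx1 (show (0:ℝ) ≤ x 0 - x 1 by linarith)
      have e4 : s + (x 0 - x 1) = x 0 - x 1 + s := by ring
      have e5 : x 1 + (x 0 - x 1) = x 0 := by ring
      rw [e4, e5] at hkey
      linarith
  
/-- If `m ≥ 1`, `γ ≥ 1` and `x₁ ≥ x₂ ≥ … ≥ x_m ≥ 0`, then
`(∑_{i=1}^m (−1)^{i−1} x_i)^γ ≤ ∑_{i=1}^m (−1)^{i−1} x_i^γ`. -/
theorem alternating_sum_rpow_le (m : ℕ) (hm : 0 < m) (γ : ℝ) (hγ : 1 ≤ γ)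
    (x : ℕ → ℝ) (hmono : ∀ i j, i ≤ j → j < m → x j ≤ x i)
    (hnonneg : ∀ i, i < m → 0 ≤ x i) :
    (∑ i ∈ Finset.range m, (-1 : ℝ) ^ i * x i) ^ γ ≤
      ∑ i ∈ Finset.range m, (-1 : ℝ) ^ i * x i ^ γ :=
  (aux_alt γ hγ m x hmono hnonneg).2.2
end

section
/- Let n > d > k ≥ 0 be integers. There exists a constant C > 0 such that for every measurable set E ⊆ (0,∞) and every s > 0, ∫_s^∞ χ_E(t) (t² − s²)^{((d−k)/2) − 1} t dt ≤ C (∫_s^∞ χ_E(t) t^{n−k−1} dt)^{(d−k)/(n−k)}. -/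
open MeasureTheory Set
open scoped ENNReal

/-- Key computation: the Abel weight integrates over `(s, √(s²+m)]` to
`m^(α+1)/(2(α+1))` (we only need `≤`). -/
lemma abel_aux_key (α : ℝ) (hα : -1 < α) (s m : ℝ) (hs : 0 < s) (hm : 0 < m) :
    (∫⁻ t in Set.Ioc s (Real.sqrt (s ^ 2 + m)),
        ENNReal.ofReal ((t ^ 2 - s ^ 2) ^ α * t)) ≤
      ENNReal.ofReal (m ^ (α + 1) / (α + 1) / 2) := by
  set φ : ℝ → ℝ := fun u => Real.sqrt (u + s ^ 2) with hφ
  set ψ : ℝ → ℝ := fun u => 1 / (2 * Real.sqrt (u + s ^ 2)) with hψ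
  have hpos : ∀ u ∈ Set.Ioc (0 : ℝ) m, 0 < u + s ^ 2 := by
    intro u hu; nlinarith [hu.1, sq_nonneg s]
  have himg : φ '' Set.Ioc 0 m = Set.Ioc s (Real.sqrt (s ^ 2 + m)) := by
    ext t
    simp only [Set.mem_image, Set.mem_Ioc]
    constructor
    · rintro ⟨u, ⟨hu0, hum⟩, rfl⟩
      constructor
      · have : Real.sqrt (s ^ 2) < Real.sqrt (u + s ^ 2) :=
          Real.sqrt_lt_sqrt (sq_nonneg s) (by linarith)
        rwa [Real.sqrt_sq hs.le] at this
      · exact Real.sqrt_le_sqrt (by linarith)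
    · rintro ⟨hts, htr⟩
      have ht0 : 0 < t := hs.trans hts
      refine ⟨t ^ 2 - s ^ 2, ⟨by nlinarith, ?_⟩, ?_⟩
      · have := (Real.le_sqrt ht0.le (by nlinarith)).mp htr
        linarith
      · show Real.sqrt (t ^ 2 - s ^ 2 + s ^ 2) = t
        rw [sub_add_cancel, Real.sqrt_sq ht0.le]
  have hderiv : ∀ u ∈ Set.Ioc (0 : ℝ) m,
      HasDerivWithinAt φ (ψ u) (Set.Ioc 0 m) u := by
    intro u hu
    have h1 : HasDerivAt (fun u : ℝ => u + s ^ 2) 1 u := by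
      simpa using (hasDerivAt_id u).add_const (s ^ 2)
    have h2 : HasDerivAt φ (ψ u) u := by
      have := (Real.hasDerivAt_sqrt (hpos u hu).ne').comp u h1
      simpa [hφ, hψ, Function.comp_def] using this
    exact h2.hasDerivWithinAt
  have hinj : Set.InjOn φ (Set.Ioc 0 m) := by
    intro u hu v hv huv
    have h1 : u + s ^ 2 = v + s ^ 2 := by
      have e1 := Real.sq_sqrt (hpos u hu).le
      have e2 := Real.sq_sqrt (hpos v hv).le
      have h := congrArg (fun x => x ^ 2) huv
      simp only [hφ] at h
      rw [e1, e2] at h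
      exact h
    linarith
  have hchg := lintegral_image_eq_lintegral_abs_det_fderiv_mul volume measurableSet_Ioc
    (f' := fun u => (1 : ℝ →L[ℝ] ℝ).smulRight (ψ u))
    (fun u hu => (hderiv u hu).hasFDerivWithinAt) hinj
    (fun t => ENNReal.ofReal ((t ^ 2 - s ^ 2) ^ α * t))
  rw [← himg, hchg]
  have hcongr : ∫⁻ u in Set.Ioc (0:ℝ) m,
      ENNReal.ofReal |((1 : ℝ →L[ℝ] ℝ).smulRight (ψ u)).det| *
        ENNReal.ofReal ((φ u ^ 2 - s ^ 2) ^ α * φ u)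
      = ∫⁻ u in Set.Ioc (0:ℝ) m, ENNReal.ofReal (u ^ α / 2) := by
    refine setLIntegral_congr_fun measurableSet_Ioc ?_
    intro u hu
    beta_reduce
    have hc : 0 < Real.sqrt (u + s ^ 2) := Real.sqrt_pos.mpr (hpos u hu)
    have hsq : Real.sqrt (u + s ^ 2) ^ 2 = u + s ^ 2 := Real.sq_sqrt (hpos u hu).le
    have hdet : ((1 : ℝ →L[ℝ] ℝ).smulRight (ψ u)).det = ψ u := ContinuousLinearMap.det_toSpanSingleton _
    rw [hdet]
    have hψpos : 0 < ψ u := by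
      simp only [hψ]
      positivity
    have : (φ u ^ 2 - s ^ 2) ^ α * φ u = u ^ α * Real.sqrt (u + s ^ 2) := by
      simp only [hφ, hsq, add_sub_cancel_right]
    rw [this, abs_of_pos hψpos, ← ENNReal.ofReal_mul hψpos.le]
    congr 1
    simp only [hψ]
    field_simp
  rw [hcongr]
  have hint : IntegrableOn (fun u : ℝ => u ^ α / 2) (Set.Ioc 0 m) := by
    have := (intervalIntegral.intervalIntegrable_rpow' (a := 0) (b := m) hα)
    exact ((intervalIntegrable_iff_integrableOn_Ioc_of_le hm.le).mp this).div_const 2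
  have hnn : 0 ≤ᵐ[volume.restrict (Set.Ioc (0:ℝ) m)] fun u : ℝ => u ^ α / 2 := by
    rw [Filter.EventuallyLE, ae_restrict_iff' measurableSet_Ioc]
    refine Filter.Eventually.of_forall fun u hu => ?_
    have := Real.rpow_nonneg hu.1.le α
    positivity
  rw [← MeasureTheory.ofReal_integral_eq_lintegral_ofReal hint hnn]
  apply ENNReal.ofReal_le_ofReal
  rw [← intervalIntegral.integral_of_le hm.le, intervalIntegral.integral_div,
    integral_rpow (Or.inl hα)]
  rw [Real.zero_rpow (by linarith : α + 1 ≠ 0), sub_zero]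

set_option maxHeartbeats 1000000 in
/-- Endpoint estimate on indicators for the Abel-type transform associated with the
`d`-plane transform of radial functions on the affine Grassmannian `G(n,k)`:
for `n > d > k ≥ 0` there is `C > 0` such that for every measurable `E ⊆ (0,∞)` and `s > 0`,
`∫_s^∞ χ_E(t) (t² − s²)^{((d−k)/2) − 1} t dt ≤ C (∫_s^∞ χ_E(t) t^{n−k−1} dt)^{(d−k)/(n−k)}`. -/
theorem abel_grassmannian_indicator_endpoint (n d k : ℕ) (hkd : k < d) (hdn : d < n) :
    ∃ C : ℝ, 0 < C ∧ ∀ E : Set ℝ, MeasurableSet E → E ⊆ Set.Ioi 0 →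
      ∀ s : ℝ, 0 < s →
        (∫⁻ t in E ∩ Set.Ioi s,
            ENNReal.ofReal ((t ^ 2 - s ^ 2) ^ (((d : ℝ) - k) / 2 - 1) * t)) ≤
          ENNReal.ofReal C *
            (∫⁻ t in E ∩ Set.Ioi s, ENNReal.ofReal (t ^ (n - k - 1)))
              ^ (((d : ℝ) - k) / ((n : ℝ) - k)) := by
  have hk_d : (1:ℝ) ≤ (d:ℝ) - k := by
    have : ((k:ℝ) + 1) ≤ (d:ℝ) := by exact_mod_cast hkd
    linarith
  have hd_n : (d:ℝ) + 1 ≤ (n:ℝ) := by exact_mod_cast hdn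
  have hk_n : (2:ℝ) ≤ (n:ℝ) - k := by linarith
  have hdk : (0:ℝ) < (d:ℝ) - k := by linarith
  have hnk : (0:ℝ) < (n:ℝ) - k := by linarith
  set α : ℝ := ((d:ℝ) - k) / 2 - 1 with hαdef
  set θ : ℝ := ((d:ℝ) - k) / ((n:ℝ) - k) with hθdef
  have hα : (-1:ℝ) < α := by rw [hαdef]; linarith
  have hθpos : 0 < θ := div_pos hdk hnk
  have hC : (0:ℝ) < 1/((d:ℝ) - k) + 1 := by positivity
  have hcast : ((n - k - 1 : ℕ) : ℝ) = (n:ℝ) - (k:ℝ) - 1 := by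
    rw [show n - k - 1 = n - (k+1) from by omega, Nat.cast_sub (by omega)]
    push_cast; ring
  refine ⟨1/((d:ℝ) - k) + 1, hC, ?_⟩
  intro E hE hE0 s hs
  set A := E ∩ Set.Ioi s with hAdef
  have hAmeas : MeasurableSet A := hE.inter measurableSet_Ioi
  set M := ∫⁻ t in A, ENNReal.ofReal (t ^ (n - k - 1)) with hMdef
  have hgmeas : Measurable fun t : ℝ => ENNReal.ofReal (t ^ (n - k - 1)) :=
    (measurable_id.pow_const _).ennreal_ofReal
  rcases eq_or_ne M 0 with hM0 | hM0
  · -- the set has measure zero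
    have hlb : ENNReal.ofReal (s ^ (n - k - 1)) * volume A ≤ M := by
      rw [← setLIntegral_const A _]
      refine setLIntegral_mono hgmeas fun t ht => ?_
      exact ENNReal.ofReal_le_ofReal (pow_le_pow_left₀ hs.le (le_of_lt ht.2) _)
    have hc0 : ENNReal.ofReal (s ^ (n - k - 1)) ≠ 0 := by
      refine (ENNReal.ofReal_pos.mpr ?_).ne'
      positivity
    have hA0 : volume A = 0 := by
      rcases mul_eq_zero.mp (le_antisymm (hM0 ▸ hlb) zero_le) with h | h
      · exact absurd h hc0
      · exact h
    rw [setLIntegral_measure_zero _ _ hA0]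
    exact zero_le
  rcases eq_or_ne M ⊤ with hMtop | hMtop
  · rw [hMtop, ENNReal.top_rpow_of_pos hθpos,
      ENNReal.mul_top (ENNReal.ofReal_pos.mpr hC).ne']
    exact le_top
  -- main case
  have hMpos : 0 < M.toReal := ENNReal.toReal_pos hM0 hMtop
  set X := M.toReal with hXdef
  set m : ℝ := X ^ (2/((n:ℝ) - k)) with hmdef
  have hm : 0 < m := Real.rpow_pos_of_pos hMpos _
  set r : ℝ := Real.sqrt (s ^ 2 + m) with hrdef
  have hr0 : 0 ≤ r := Real.sqrt_nonneg _
  have hsr : s < r := by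
    rw [hrdef]
    have := Real.sqrt_lt_sqrt (sq_nonneg s) (by linarith : s ^ 2 < s ^ 2 + m)
    rwa [Real.sqrt_sq hs.le] at this
  have hsplit : A ⊆ Set.Ioc s r ∪ (A ∩ Set.Ioi r) := by
    intro t ht
    rcases le_or_gt t r with h | h
    · exact Or.inl ⟨ht.2, h⟩
    · exact Or.inr ⟨ht, h⟩
  have T1 : (∫⁻ t in Set.Ioc s r, ENNReal.ofReal ((t ^ 2 - s ^ 2) ^ α * t)) ≤
      ENNReal.ofReal (m ^ (α + 1) / (α + 1) / 2) := abel_aux_key α hα s m hs hm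
  have T2 : (∫⁻ t in A ∩ Set.Ioi r, ENNReal.ofReal ((t ^ 2 - s ^ 2) ^ α * t)) ≤
      ENNReal.ofReal (m ^ (((d:ℝ) - n)/2)) * M := by
    have hpt : ∀ t ∈ A ∩ Set.Ioi r, ENNReal.ofReal ((t ^ 2 - s ^ 2) ^ α * t) ≤
        ENNReal.ofReal (m ^ (((d:ℝ) - n)/2)) * ENNReal.ofReal (t ^ (n - k - 1)) := by
      rintro t ⟨⟨htE, hts⟩, htr⟩
      have hts' : s < t := hts
      have htr' : r < t := htr
      have ht0 : 0 < t := hs.trans hts'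
      have hts2 : m < t ^ 2 - s ^ 2 := by
        have h1 : r ^ 2 = s ^ 2 + m := Real.sq_sqrt (by positivity)
        nlinarith
      have hsub : (0:ℝ) < t ^ 2 - s ^ 2 := lt_trans hm hts2
      rw [← ENNReal.ofReal_mul (Real.rpow_nonneg hm.le _)]
      apply ENNReal.ofReal_le_ofReal
      have hsplit2 : (t ^ 2 - s ^ 2) ^ α =
          (t ^ 2 - s ^ 2) ^ (((d:ℝ) - n)/2) * (t ^ 2 - s ^ 2) ^ (((n:ℝ) - k)/2 - 1) := by
        rw [← Real.rpow_add hsub]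
        congr 1
        rw [hαdef]; ring
      have hb1 : (t ^ 2 - s ^ 2) ^ (((d:ℝ) - n)/2) ≤ m ^ (((d:ℝ) - n)/2) :=
        Real.rpow_le_rpow_of_nonpos hm hts2.le (by linarith)
      have hb2 : (t ^ 2 - s ^ 2) ^ (((n:ℝ) - k)/2 - 1) ≤ t ^ ((n:ℝ) - k - 2) := by
        have hle : t ^ 2 - s ^ 2 ≤ t ^ 2 := by nlinarith [sq_nonneg s]
        have h3 : (t ^ 2 - s ^ 2) ^ (((n:ℝ) - k)/2 - 1) ≤ (t ^ 2) ^ (((n:ℝ) - k)/2 - 1) :=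
          Real.rpow_le_rpow hsub.le hle (by linarith)
        have h4 : ((t:ℝ) ^ 2) ^ (((n:ℝ) - k)/2 - 1) = t ^ ((n:ℝ) - k - 2) := by
          rw [← Real.rpow_natCast t 2, ← Real.rpow_mul ht0.le]
          congr 1
          push_cast; ring
        rw [h4] at h3
        exact h3
      have hpow : (t:ℝ) ^ (n - k - 1) = t ^ ((n:ℝ) - k - 1) := by
        rw [← hcast, Real.rpow_natCast]
      have hfin : t ^ ((n:ℝ) - k - 2) * t = t ^ ((n:ℝ) - k - 1) := by
        rw [show (n:ℝ) - k - 1 = ((n:ℝ) - k - 2) + 1 from by ring,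
          Real.rpow_add_one ht0.ne']
      calc (t ^ 2 - s ^ 2) ^ α * t
          = (t ^ 2 - s ^ 2) ^ (((d:ℝ) - n)/2) * (t ^ 2 - s ^ 2) ^ (((n:ℝ) - k)/2 - 1) * t := by
            rw [← hsplit2]
        _ ≤ m ^ (((d:ℝ) - n)/2) * t ^ ((n:ℝ) - k - 2) * t := by
            have h5 : (0:ℝ) ≤ (t ^ 2 - s ^ 2) ^ (((d:ℝ) - n)/2) := Real.rpow_nonneg hsub.le _
            have h6 : (0:ℝ) ≤ t ^ ((n:ℝ) - k - 2) := Real.rpow_nonneg ht0.le _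
            exact mul_le_mul_of_nonneg_right
              (mul_le_mul hb1 hb2 (Real.rpow_nonneg hsub.le _) (Real.rpow_nonneg hm.le _))
              ht0.le
        _ = m ^ (((d:ℝ) - n)/2) * t ^ (n - k - 1) := by
            rw [mul_assoc, hfin, hpow]
    calc (∫⁻ t in A ∩ Set.Ioi r, ENNReal.ofReal ((t ^ 2 - s ^ 2) ^ α * t))
        ≤ ∫⁻ t in A ∩ Set.Ioi r,
            ENNReal.ofReal (m ^ (((d:ℝ) - n)/2)) * ENNReal.ofReal (t ^ (n - k - 1)) :=
          setLIntegral_mono (hgmeas.const_mul _) hpt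
      _ = ENNReal.ofReal (m ^ (((d:ℝ) - n)/2)) *
            ∫⁻ t in A ∩ Set.Ioi r, ENNReal.ofReal (t ^ (n - k - 1)) :=
          lintegral_const_mul _ hgmeas
      _ ≤ ENNReal.ofReal (m ^ (((d:ℝ) - n)/2)) * M :=
          mul_le_mul_right (lintegral_mono_set Set.inter_subset_left) _
  have hMof : M = ENNReal.ofReal X := (ENNReal.ofReal_toReal hMtop).symm
  calc (∫⁻ t in A, ENNReal.ofReal ((t ^ 2 - s ^ 2) ^ α * t))
      ≤ ∫⁻ t in Set.Ioc s r ∪ (A ∩ Set.Ioi r), ENNReal.ofReal ((t ^ 2 - s ^ 2) ^ α * t) :=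
        lintegral_mono_set hsplit
    _ ≤ (∫⁻ t in Set.Ioc s r, ENNReal.ofReal ((t ^ 2 - s ^ 2) ^ α * t)) +
          ∫⁻ t in A ∩ Set.Ioi r, ENNReal.ofReal ((t ^ 2 - s ^ 2) ^ α * t) :=
        lintegral_union_le _ _ _
    _ ≤ ENNReal.ofReal (m ^ (α + 1) / (α + 1) / 2) +
          ENNReal.ofReal (m ^ (((d:ℝ) - n)/2)) * M := add_le_add T1 T2
    _ ≤ ENNReal.ofReal (1/((d:ℝ) - k) + 1) * M ^ θ := by
        rw [hMof, ← ENNReal.ofReal_mul (Real.rpow_nonneg hm.le _),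
          ← ENNReal.ofReal_add
            (div_nonneg (div_nonneg (Real.rpow_nonneg hm.le _) (by linarith : (0:ℝ) ≤ α + 1))
              (by norm_num : (0:ℝ) ≤ 2))
            (mul_nonneg (Real.rpow_nonneg hm.le _) hMpos.le),
          ENNReal.ofReal_rpow_of_pos hMpos, ← ENNReal.ofReal_mul hC.le]
        apply ENNReal.ofReal_le_ofReal
        have e1 : m ^ (α + 1) = X ^ θ := by
          rw [hmdef, ← Real.rpow_mul hMpos.le]
          congr 1
          rw [hαdef, hθdef]
          field_simp
          ring
        have e2 : m ^ (((d:ℝ) - n)/2) * X = X ^ θ := by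
          rw [hmdef, ← Real.rpow_mul hMpos.le]
          rw [show (2/((n:ℝ) - k) * (((d:ℝ) - n)/2)) = θ - 1 from by
            rw [hθdef]; field_simp; ring]
          rw [← Real.rpow_add_one hMpos.ne' (θ - 1)]
          congr 1
          ring
        rw [e1, e2]
        have hα1 : α + 1 = ((d:ℝ) - k)/2 := by rw [hαdef]; ring
        rw [hα1]
        have hXθ : (0:ℝ) ≤ X ^ θ := Real.rpow_nonneg hMpos.le _
        rw [div_div]
        rw [show ((d:ℝ) - k)/2 * 2 = (d:ℝ) - k from by ring]
        exact le_of_eq (by ring)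
end

section
/- Let n > d > k ≥ 0 be integers. There exists a constant C > 0 such that for every measurable function f : (0,∞) → [0,∞], sup_{s>0} ∫_s^∞ f(t) (t² − s²)^{((d−k)/2) − 1} t dt ≤ C ‖f‖_{L^{(n−k)/(d−k),1}((0,∞), t^{n−k−1} dt)}. -/
open MeasureTheory Set
open scoped ENNReal

/-- The Lorentz `L^{p,1}` norm of `f` with respect to the measure `μ`:
`‖f‖_{L^{p,1}(μ)} = p ∫_0^∞ μ({x : f x > λ})^{1/p} dλ`. -/
noncomputable def lorentzNorm (μ : Measure ℝ) (p : ℝ) (f : ℝ → ℝ≥0∞) : ℝ≥0∞ :=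
  ENNReal.ofReal p *
    ∫⁻ l in Set.Ioi (0 : ℝ), (μ {t | ENNReal.ofReal l < f t}) ^ (1 / p)

lemma layer_aux (c x : ℝ≥0∞) :
    ∫⁻ l in Set.Ioi (0:ℝ), (if ENNReal.ofReal l < c then x else 0) = c * x := by
  have hS : MeasurableSet {l : ℝ | ENNReal.ofReal l < c} :=
    measurableSet_lt (ENNReal.measurable_ofReal) measurable_const
  have h1 : (fun l : ℝ => if ENNReal.ofReal l < c then x else 0)
      = ({l : ℝ | ENNReal.ofReal l < c}).indicator (fun _ => x) := by
    ext l; simp [Set.indicator_apply]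
  rw [h1]
  rw [lintegral_indicator hS, Measure.restrict_restrict hS, setLIntegral_const]
  have hvol : volume ({l : ℝ | ENNReal.ofReal l < c} ∩ Ioi 0) = c := by
    rcases eq_or_ne c ⊤ with rfl | hc
    · have : {l : ℝ | ENNReal.ofReal l < ⊤} ∩ Ioi 0 = Ioi 0 := by
        ext l; simp [ENNReal.ofReal_lt_top]
      rw [this]; simp
    · have : {l : ℝ | ENNReal.ofReal l < c} ∩ Ioi 0 = Ioo 0 c.toReal := by
        ext l
        simp only [mem_inter_iff, mem_setOf_eq, mem_Ioi, mem_Ioo]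
        constructor
        · rintro ⟨h1, h2⟩; exact ⟨h2, (ENNReal.ofReal_lt_iff_lt_toReal h2.le hc).1 h1⟩
        · rintro ⟨h1, h2⟩; exact ⟨(ENNReal.ofReal_lt_iff_lt_toReal h1.le hc).2 h2, h1⟩
      rw [this, Real.volume_Ioo, ENNReal.ofReal_sub _ le_rfl]
      simp [ENNReal.ofReal_toReal hc]
  rw [hvol, mul_comm]

lemma tail_pt (a b M s r : ℝ) (ha : 1 ≤ a) (hab : a + 1 ≤ b) (hM : 0 < M)
    (hs : 0 < s) (hrs : s < r) (hrM : M ^ (1/b) ≤ r)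
    (hrr : r^2 - s^2 = M ^ (2/b)) (t : ℝ) (ht : r < t) :
    (t^2 - s^2) ^ (a/2 - 1) * t ≤ M ^ ((a-b)/b) * t ^ (b-1) := by
  have hb : 0 < b := by linarith
  have ht0 : 0 < t := by linarith
  have hts : s < t := by linarith
  have hts2 : 0 < t^2 - s^2 := by nlinarith
  have hM1b : 0 < M ^ (1/b) := Real.rpow_pos_of_pos hM _
  have hMt : M ^ (1/b) ≤ t := by linarith
  have key : ∀ u v : ℝ, u + v = a - b →
      (t^2 - s^2) ^ (a/2 - 1) * t ≤ M ^ (u/b) * (M^(1/b)) ^ v * t ^ (b-1) → True := fun _ _ _ _ => trivial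
  rcases le_or_gt 2 a with ha2 | ha2
  · -- a ≥ 2
    have h1 : (t^2 - s^2) ^ (a/2 - 1) ≤ (t^2) ^ (a/2 - 1) := by
      apply Real.rpow_le_rpow hts2.le (by nlinarith) (by linarith)
    have h2 : (t^2 : ℝ) ^ (a/2 - 1) = t ^ (a - 2) := by
      rw [← Real.rpow_natCast t 2, ← Real.rpow_mul ht0.le]
      norm_num; ring_nf
    have h3 : t ^ (a - 2) * t = t ^ (a - 1) := by
      rw [← Real.rpow_add_one ht0.ne']; ring_nf
    have h4 : t ^ (a - 1) = t ^ (a - b) * t ^ (b - 1) := by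
      rw [← Real.rpow_add ht0]; ring_nf
    have h5 : t ^ (a - b) ≤ (M ^ (1/b)) ^ (a - b) :=
      Real.rpow_le_rpow_of_nonpos hM1b hMt (by linarith)
    have h6 : (M ^ (1/b)) ^ (a - b) = M ^ ((a-b)/b) := by
      rw [← Real.rpow_mul hM.le]; ring_nf
    calc (t^2 - s^2) ^ (a/2 - 1) * t ≤ (t^2) ^ (a/2 - 1) * t := by
          exact mul_le_mul_of_nonneg_right h1 ht0.le
      _ = t ^ (a - b) * t ^ (b - 1) := by rw [h2, h3, h4]
      _ ≤ M ^ ((a-b)/b) * t ^ (b-1) := by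
          apply mul_le_mul_of_nonneg_right _ (Real.rpow_nonneg ht0.le _)
          rw [← h6]; exact h5
  · -- a < 2
    have hrs2 : 0 < r^2 - s^2 := by nlinarith
    have h1 : (t^2 - s^2) ^ (a/2 - 1) ≤ (r^2 - s^2) ^ (a/2 - 1) :=
      Real.rpow_le_rpow_of_nonpos hrs2 (by nlinarith) (by linarith)
    have h2 : (r^2 - s^2 : ℝ) ^ (a/2 - 1) = M ^ ((a-2)/b) := by
      rw [hrr, ← Real.rpow_mul hM.le]; ring_nf
    have h3 : t = t ^ (2 - b) * t ^ (b - 1) := by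
      rw [← Real.rpow_add ht0]; norm_num
    have h5 : t ^ (2 - b) ≤ (M ^ (1/b)) ^ (2 - b) :=
      Real.rpow_le_rpow_of_nonpos hM1b hMt (by linarith)
    have h6 : (M ^ (1/b)) ^ (2 - b) = M ^ ((2-b)/b) := by
      rw [← Real.rpow_mul hM.le]; ring_nf
    have h7 : M ^ ((a-2)/b) * M ^ ((2-b)/b) = M ^ ((a-b)/b) := by
      rw [← Real.rpow_add hM]; ring_nf
    calc (t^2 - s^2) ^ (a/2 - 1) * t ≤ M ^ ((a-2)/b) * t := by
          apply mul_le_mul_of_nonneg_right _ ht0.le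
          rw [← h2]; exact h1
      _ = M ^ ((a-2)/b) * t ^ (2-b) * t ^ (b-1) := by rw [mul_assoc, ← h3]
      _ ≤ M ^ ((a-2)/b) * M ^ ((2-b)/b) * t ^ (b-1) := by
          apply mul_le_mul_of_nonneg_right _ (Real.rpow_nonneg ht0.le _)
          exact mul_le_mul_of_nonneg_left (h5.trans h6.le) (Real.rpow_nonneg hM.le _)
      _ = M ^ ((a-b)/b) * t ^ (b-1) := by rw [h7]

lemma bound1 (a b M s r : ℝ) (ha : 1 ≤ a) (hab : a + 1 ≤ b) (hM : 0 < M)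
    (hs : 0 < s) (hrs : s < r) (hrr : r ^ 2 - s ^ 2 = M ^ (2/b)) (E : Set ℝ) :
    ∫⁻ t in E ∩ Ioc s r, ENNReal.ofReal ((t ^ 2 - s ^ 2) ^ (a/2 - 1) * t)
      ≤ ENNReal.ofReal (2 * M ^ (a/b)) := by
  have hb : 0 < b := by linarith
  have hr0 : 0 < r := hs.trans hrs
  have hrs2 : 0 < r ^ 2 - s ^ 2 := by nlinarith
  have hMab : (r ^ 2 - s ^ 2) ^ (a/2) = M ^ (a/b) := by
    rw [hrr, ← Real.rpow_mul hM.le]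
    congr 1; field_simp
  have hMab0 : 0 < M ^ (a/b) := Real.rpow_pos_of_pos hM _
  refine le_trans (lintegral_mono_set inter_subset_right) ?_
  rcases le_or_gt 2 a with ha2 | ha2
  · -- a ≥ 2 : kernel ≤ (r²-s²)^(a/2-1) * t on Ioc s r
    set C : ℝ := (r ^ 2 - s ^ 2) ^ (a/2 - 1) with hC
    have hC0 : 0 ≤ C := Real.rpow_nonneg hrs2.le _
    have step1 : ∫⁻ t in Ioc s r, ENNReal.ofReal ((t ^ 2 - s ^ 2) ^ (a/2 - 1) * t)
        ≤ ∫⁻ t in Ioc s r, ENNReal.ofReal (C * t) := by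
      apply setLIntegral_mono (by fun_prop) fun t ht => ?_
      apply ENNReal.ofReal_le_ofReal
      apply mul_le_mul_of_nonneg_right _ (by linarith [ht.1] : (0:ℝ) ≤ t)
      exact Real.rpow_le_rpow (by nlinarith [ht.1, hs]) (by nlinarith [ht.2, ht.1]) (by linarith)
    have step2 : ∫⁻ t in Ioc s r, ENNReal.ofReal (C * t)
        = ENNReal.ofReal (∫ t in Ioc s r, C * t) := by
      rw [ofReal_integral_eq_lintegral_ofReal]
      · exact (continuous_const.mul continuous_id).integrableOn_Ioc
      · filter_upwards [ae_restrict_mem measurableSet_Ioc] with t ht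
        have : 0 < t := lt_trans hs ht.1
        positivity
    have step3 : ∫ t in Ioc s r, C * t = C * ((r ^ 2 - s ^ 2) / 2) := by
      rw [← intervalIntegral.integral_of_le hrs.le, intervalIntegral.integral_const_mul,
        integral_id]
      try ring
    have step4 : C * ((r ^ 2 - s ^ 2) / 2) ≤ 2 * M ^ (a/b) := by
      have : C * (r ^ 2 - s ^ 2) = M ^ (a/b) := by
        rw [← hMab, hC, ← Real.rpow_add_one hrs2.ne']
        try ring_nf
      nlinarith
    calc _ ≤ _ := step1
      _ = _ := step2
      _ ≤ _ := ENNReal.ofReal_le_ofReal (step3.le.trans step4)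
  · -- 1 ≤ a < 2
    set q : ℝ := a/2 - 1 with hq
    have hq1 : (-1:ℝ) < q := by simp only [hq]; linarith
    have hq0 : q + 1 = a / 2 := by ring
    have ha20 : (0:ℝ) < a / 2 := by linarith
    have hqle : q ≤ 0 := by rw [hq]; linarith
    have step1 : ∫⁻ t in Ioc s r, ENNReal.ofReal ((t ^ 2 - s ^ 2) ^ q * t)
        ≤ ∫⁻ t in Ioc s r, ENNReal.ofReal (r ^ (a/2) * (t - s) ^ q) := by
      apply setLIntegral_mono (by fun_prop) fun t ht => ?_
      apply ENNReal.ofReal_le_ofReal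
      have hts : s < t := ht.1
      have ht0 : 0 < t := hs.trans hts
      have h1 : 0 < (t - s) * t := by nlinarith
      have h2 : (t ^ 2 - s ^ 2) ^ q ≤ ((t - s) * t) ^ q :=
        Real.rpow_le_rpow_of_nonpos h1 (by nlinarith) hqle
      have h3 : ((t - s) * t) ^ q = (t - s) ^ q * t ^ q :=
        Real.mul_rpow (by linarith) ht0.le
      have h4 : t ^ q * t = t ^ (a/2) := by
        rw [← Real.rpow_add_one ht0.ne', hq0]
      have h5 : t ^ (a/2) ≤ r ^ (a/2) :=
        Real.rpow_le_rpow ht0.le ht.2 ha20.le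
      calc (t ^ 2 - s ^ 2) ^ q * t ≤ (t - s) ^ q * t ^ q * t := by
            rw [← h3]; exact mul_le_mul_of_nonneg_right h2 ht0.le
        _ = (t - s) ^ q * t ^ (a/2) := by rw [mul_assoc, h4]
        _ ≤ (t - s) ^ q * r ^ (a/2) :=
            mul_le_mul_of_nonneg_left h5 (Real.rpow_nonneg (by linarith) _)
        _ = r ^ (a/2) * (t - s) ^ q := mul_comm _ _
    have hInt : IntegrableOn (fun t => (t - s) ^ q) (Ioc s r) volume := by
      have := (intervalIntegral.intervalIntegrable_rpow' (a := 0) (b := r - s) hq1).comp_sub_right s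
      simp only [zero_add] at this
      have h2 : r - s + s = r := by ring
      rw [h2] at this
      exact this.1
    have step2 : ∫⁻ t in Ioc s r, ENNReal.ofReal (r ^ (a/2) * (t - s) ^ q)
        = ENNReal.ofReal (∫ t in Ioc s r, r ^ (a/2) * (t - s) ^ q) := by
      rw [ofReal_integral_eq_lintegral_ofReal (hInt.const_mul _)]
      filter_upwards [ae_restrict_mem measurableSet_Ioc] with t ht
      have h1 : 0 ≤ (t - s) ^ q := Real.rpow_nonneg (by linarith [ht.1]) _
      positivity
    have step3 : ∫ t in Ioc s r, r ^ (a/2) * (t - s) ^ q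
        = r ^ (a/2) * ((r - s) ^ (a/2) / (a/2)) := by
      rw [← intervalIntegral.integral_of_le hrs.le, intervalIntegral.integral_const_mul]
      congr 1
      have := intervalIntegral.integral_comp_sub_right (a := s) (b := r) (fun x => x ^ q) s
      rw [this, sub_self, integral_rpow (Or.inl hq1), hq0,
        Real.zero_rpow (by linarith : a/2 ≠ 0)]
      ring
    have step4 : r ^ (a/2) * ((r - s) ^ (a/2) / (a/2)) ≤ 2 * M ^ (a/b) := by
      have h1 : r ^ (a/2) * (r - s) ^ (a/2) = (r * (r - s)) ^ (a/2) :=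
        (Real.mul_rpow hr0.le (by linarith)).symm
      have h2 : (r * (r - s)) ^ (a/2) ≤ (r ^ 2 - s ^ 2) ^ (a/2) :=
        Real.rpow_le_rpow (by nlinarith) (by nlinarith) ha20.le
      have h3 : (0:ℝ) ≤ (r * (r-s)) ^ (a/2) := Real.rpow_nonneg (by nlinarith) _
      have h4 : 1 / (a/2) ≤ 2 := by
        rw [div_le_iff₀ ha20]; linarith
      calc r ^ (a/2) * ((r - s) ^ (a/2) / (a/2))
          = (r * (r - s)) ^ (a/2) * (1 / (a/2)) := by rw [← h1]; ring
        _ ≤ (r ^ 2 - s ^ 2) ^ (a/2) * 2 := by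
            apply mul_le_mul h2 h4 (by positivity) (Real.rpow_nonneg hrs2.le _)
        _ = 2 * M ^ (a/b) := by rw [hMab]; ring
    calc _ ≤ _ := step1
      _ = _ := step2
      _ ≤ _ := ENNReal.ofReal_le_ofReal (step3.le.trans step4)

lemma key_est (a b : ℝ) (ha : 1 ≤ a) (hab : a + 1 ≤ b) (c : ℕ) (hc : (c:ℝ) = b - 1)
    (s : ℝ) (hs : 0 < s) (E : Set ℝ) (hE : MeasurableSet E) :
    ∫⁻ t in E ∩ Ioi s, ENNReal.ofReal ((t ^ 2 - s ^ 2) ^ (a/2 - 1) * t)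
      ≤ 3 * (∫⁻ t in E ∩ Ioi 0, ENNReal.ofReal (t ^ c)) ^ (a/b) := by
  have hb : 0 < b := by linarith
  have hab0 : 0 < a / b := by positivity
  set m := ∫⁻ t in E ∩ Ioi 0, ENNReal.ofReal (t ^ c) with hm
  rcases eq_or_ne m ⊤ with hmt | hmt
  · rw [hmt, ENNReal.top_rpow_of_pos hab0, ENNReal.mul_top (by norm_num)]
    exact le_top
  rcases eq_or_ne m 0 with hm0 | hm0
  · -- measure zero case
    have hEI : MeasurableSet (E ∩ Ioi (0:ℝ)) := hE.inter measurableSet_Ioi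
    have hz : ∀ᵐ t ∂(volume.restrict (E ∩ Ioi (0:ℝ))), ENNReal.ofReal (t ^ c) = (0:ℝ≥0∞) := by
      have h := (lintegral_eq_zero_iff (f := fun t : ℝ => ENNReal.ofReal (t ^ c))
        (by fun_prop)).1 hm0
      filter_upwards [h] with t ht using ht
    rw [ae_iff, Measure.restrict_apply' hEI] at hz
    have hnull : volume (E ∩ Ioi (0:ℝ)) = 0 := by
      refine measure_mono_null (fun t ht => ?_) hz
      have ht0 : (0:ℝ) < t := ht.2
      have h1 : ¬ ENNReal.ofReal (t ^ c) = 0 := by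
        simp only [ENNReal.ofReal_eq_zero, not_le]
        positivity
      exact Set.mem_inter h1 ht
    have hnull' : volume (E ∩ Ioi s) = 0 :=
      measure_mono_null (inter_subset_inter Subset.rfl (Ioi_subset_Ioi hs.le)) hnull
    rw [setLIntegral_measure_zero _ _ hnull']
    exact zero_le
  -- main case
  set M := m.toReal with hM'
  have hM : 0 < M := ENNReal.toReal_pos hm0 hmt
  set r := Real.sqrt (s ^ 2 + M ^ (2/b)) with hr
  have hMb : 0 < M ^ (2/b) := Real.rpow_pos_of_pos hM _
  have hr2 : r ^ 2 = s ^ 2 + M ^ (2/b) := Real.sq_sqrt (by positivity)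
  have hrs : s < r := by
    have h := Real.sqrt_lt_sqrt (sq_nonneg s) (by linarith : s ^ 2 < s ^ 2 + M ^ (2/b))
    rwa [Real.sqrt_sq hs.le] at h
  have hr0 : 0 < r := hs.trans hrs
  have hrr : r ^ 2 - s ^ 2 = M ^ (2/b) := by rw [hr2]; ring
  have hrM : M ^ (1/b) ≤ r := by
    have h1 : (M ^ (1/b)) ^ 2 = M ^ (2/b) := by
      rw [← Real.rpow_natCast (M ^ (1/b)) 2, ← Real.rpow_mul hM.le]
      congr 1; push_cast; ring
    rw [hr]
    rw [Real.le_sqrt (Real.rpow_nonneg hM.le _) (by positivity)]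
    rw [h1]; nlinarith [sq_nonneg s]
  have hsub : E ∩ Ioi s ⊆ (E ∩ Ioc s r) ∪ (E ∩ Ioi r) := by
    rintro t ⟨htE, hts⟩
    rcases le_or_gt t r with h | h
    · exact Or.inl ⟨htE, hts, h⟩
    · exact Or.inr ⟨htE, h⟩
  have bound2 : ∫⁻ t in E ∩ Ioi r, ENNReal.ofReal ((t ^ 2 - s ^ 2) ^ (a/2 - 1) * t)
      ≤ ENNReal.ofReal (M ^ (a/b)) := by
    have step1 : ∫⁻ t in E ∩ Ioi r, ENNReal.ofReal ((t ^ 2 - s ^ 2) ^ (a/2 - 1) * t)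
        ≤ ∫⁻ t in E ∩ Ioi r, ENNReal.ofReal (M ^ ((a-b)/b)) * ENNReal.ofReal (t ^ c) := by
      apply setLIntegral_mono (by fun_prop) fun t ht => ?_
      rw [← ENNReal.ofReal_mul (Real.rpow_nonneg hM.le _)]
      apply ENNReal.ofReal_le_ofReal
      have htr : r < t := ht.2
      have h := tail_pt a b M s r ha hab hM hs hrs hrM hrr t htr
      have htc : (t:ℝ) ^ c = t ^ (b - 1) := by
        rw [← hc, Real.rpow_natCast]
      rw [htc]; exact h
    refine step1.trans ?_
    rw [lintegral_const_mul' _ _ ENNReal.ofReal_ne_top]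
    have hsub2 : E ∩ Ioi r ⊆ E ∩ Ioi 0 := fun t ht => ⟨ht.1, hr0.trans ht.2⟩
    calc ENNReal.ofReal (M ^ ((a-b)/b)) * ∫⁻ t in E ∩ Ioi r, ENNReal.ofReal (t ^ c)
        ≤ ENNReal.ofReal (M ^ ((a-b)/b)) * m :=
          mul_le_mul_right (lintegral_mono_set hsub2) _
      _ = ENNReal.ofReal (M ^ ((a-b)/b)) * ENNReal.ofReal M := by
          rw [hM', ENNReal.ofReal_toReal hmt]
      _ = ENNReal.ofReal (M ^ ((a-b)/b) * M) := by
          rw [ENNReal.ofReal_mul (Real.rpow_nonneg hM.le _)]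
      _ = ENNReal.ofReal (M ^ (a/b)) := by
          congr 1
          rw [← Real.rpow_add_one hM.ne' ((a-b)/b)]
          congr 1; field_simp; ring
  have bound1' := bound1 a b M s r ha hab hM hs hrs hrr E
  have hmab : m ^ (a/b) = ENNReal.ofReal (M ^ (a/b)) := by
    have h : m = ENNReal.ofReal M := by rw [hM', ENNReal.ofReal_toReal hmt]
    rw [h, ENNReal.ofReal_rpow_of_pos hM]
  calc ∫⁻ t in E ∩ Ioi s, ENNReal.ofReal ((t ^ 2 - s ^ 2) ^ (a/2 - 1) * t)
      ≤ ∫⁻ t in (E ∩ Ioc s r) ∪ (E ∩ Ioi r), ENNReal.ofReal ((t ^ 2 - s ^ 2) ^ (a/2 - 1) * t) :=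
        lintegral_mono_set hsub
    _ ≤ (∫⁻ t in E ∩ Ioc s r, ENNReal.ofReal ((t ^ 2 - s ^ 2) ^ (a/2 - 1) * t))
        + ∫⁻ t in E ∩ Ioi r, ENNReal.ofReal ((t ^ 2 - s ^ 2) ^ (a/2 - 1) * t) :=
        lintegral_union_le _ _ _
    _ ≤ ENNReal.ofReal (2 * M ^ (a/b)) + ENNReal.ofReal (M ^ (a/b)) :=
        add_le_add bound1' bound2
    _ = 3 * m ^ (a/b) := by
        rw [hmab, ENNReal.ofReal_mul (by norm_num), ENNReal.ofReal_ofNat]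
        ring

/-- Endpoint estimate for the Abel-type transform associated with the `d`-plane
transform of radial functions on the affine Grassmannian `G(n,k)`: for `n > d > k ≥ 0`
there is `C > 0` such that for all measurable `f : (0,∞) → [0,∞]`,
`sup_{s>0} ∫_s^∞ f(t)(t² − s²)^{((d−k)/2)−1} t dt ≤ C ‖f‖_{L^{(n−k)/(d−k),1}((0,∞), t^{n−k−1} dt)}`. -/
theorem abel_grassmannian_endpoint (n d k : ℕ) (hkd : k < d) (hdn : d < n) :
    ∃ C : ℝ, 0 < C ∧ ∀ f : ℝ → ℝ≥0∞, Measurable f →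
      ∀ s : ℝ, 0 < s →
        (∫⁻ t in Set.Ioi s,
            f t * ENNReal.ofReal ((t ^ 2 - s ^ 2) ^ (((d : ℝ) - k) / 2 - 1) * t)) ≤
          ENNReal.ofReal C *
            lorentzNorm
              ((volume.restrict (Set.Ioi (0 : ℝ))).withDensity
                (fun t => ENNReal.ofReal (t ^ (n - k - 1))))
              (((n : ℝ) - k) / ((d : ℝ) - k)) f := by
  set a : ℝ := (d : ℝ) - k with haDef
  set b : ℝ := (n : ℝ) - k with hbDef
  have ha : 1 ≤ a := by
    have : (k:ℝ) + 1 ≤ d := by exact_mod_cast hkd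
    simp only [haDef]; linarith
  have hab : a + 1 ≤ b := by
    have : (d:ℝ) + 1 ≤ n := by exact_mod_cast hdn
    simp only [haDef, hbDef]; linarith
  have ha0 : 0 < a := by linarith
  have hb0 : 0 < b := by linarith
  set c : ℕ := n - k - 1 with hcDef
  have hc : (c : ℝ) = b - 1 := by
    have h1 : k + 1 ≤ n := by omega
    simp only [hcDef, hbDef]
    rw [Nat.sub_sub, Nat.cast_sub h1]
    push_cast; ring
  set μ : Measure ℝ := (volume.restrict (Set.Ioi (0 : ℝ))).withDensity
    (fun t => ENNReal.ofReal (t ^ c)) with hμ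
  refine ⟨3, by norm_num, fun f hf s hs => ?_⟩
  set w : ℝ → ℝ := fun t => (t ^ 2 - s ^ 2) ^ (a / 2 - 1) * t with hw
  have hwMeas : Measurable fun t => ENNReal.ofReal (w t) := by
    simp only [hw]; fun_prop
  -- layer cake + swap
  have step1 : (∫⁻ t in Set.Ioi s, f t * ENNReal.ofReal (w t))
      = ∫⁻ l in Set.Ioi (0:ℝ), ∫⁻ t in Set.Ioi s,
          (if ENNReal.ofReal l < f t then ENNReal.ofReal (w t) else 0) := by
    rw [← lintegral_lintegral_swap]
    · congr 1; ext t
      exact (layer_aux (f t) (ENNReal.ofReal (w t))).symm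
    · apply Measurable.aemeasurable
      have hS : MeasurableSet {p : ℝ × ℝ | ENNReal.ofReal p.2 < f p.1} :=
        measurableSet_lt (ENNReal.measurable_ofReal.comp measurable_snd)
          (hf.comp measurable_fst)
      exact Measurable.ite hS (hwMeas.comp measurable_fst) measurable_const
  have hp1 : (1:ℝ) ≤ b / a := (one_le_div ha0).2 (by linarith)
  have hpinv : 1 / (b / a) = a / b := one_div_div b a
  have step2 : ∀ l : ℝ, (∫⁻ t in Set.Ioi s,
        (if ENNReal.ofReal l < f t then ENNReal.ofReal (w t) else 0))
      ≤ 3 * (μ {t | ENNReal.ofReal l < f t}) ^ (a / b) := by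
    intro l
    set E : Set ℝ := {t | ENNReal.ofReal l < f t} with hE'
    have hE : MeasurableSet E := measurableSet_lt measurable_const hf
    have h1 : (fun t => if ENNReal.ofReal l < f t then ENNReal.ofReal (w t) else 0)
        = E.indicator fun t => ENNReal.ofReal (w t) := by
      ext t; simp [Set.indicator_apply, hE']
    rw [h1, lintegral_indicator hE, Measure.restrict_restrict hE]
    have h2 : μ E = ∫⁻ t in E ∩ Set.Ioi 0, ENNReal.ofReal (t ^ c) := by
      rw [hμ, withDensity_apply _ hE, Measure.restrict_restrict hE]
    rw [h2]
    exact key_est a b ha hab c hc s hs E hE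
  calc (∫⁻ t in Set.Ioi s, f t * ENNReal.ofReal (w t))
      = ∫⁻ l in Set.Ioi (0:ℝ), ∫⁻ t in Set.Ioi s,
          (if ENNReal.ofReal l < f t then ENNReal.ofReal (w t) else 0) := step1
    _ ≤ ∫⁻ l in Set.Ioi (0:ℝ), 3 * (μ {t | ENNReal.ofReal l < f t}) ^ (a / b) :=
        lintegral_mono step2
    _ = 3 * ∫⁻ l in Set.Ioi (0:ℝ), (μ {t | ENNReal.ofReal l < f t}) ^ (a / b) :=
        lintegral_const_mul' _ _ (by norm_num)
    _ ≤ ENNReal.ofReal 3 * lorentzNorm μ (((n : ℝ) - k) / ((d : ℝ) - k)) f := by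
        rw [lorentzNorm]
        have hbd : ((n : ℝ) - k) / ((d : ℝ) - k) = b / a := by rw [haDef, hbDef]
        rw [hbd, hpinv, ENNReal.ofReal_ofNat]
        rw [← mul_assoc]
        apply mul_le_mul_left
        calc (3:ℝ≥0∞) = 3 * 1 := by ring
          _ ≤ 3 * ENNReal.ofReal (b / a) := by
              apply mul_le_mul_right
              exact ENNReal.one_le_ofReal.2 hp1
end

section
/- Let δ ≠ 0 be a real number and let p ∈ [1,∞). There exists a constant C > 0 (depending only on δ and p) such that for every measurable set E ⊆ ℝ, ∫_ℝ χ_E(t) e^{δt} dt ≤ C (∫_ℝ χ_E(t) e^{pδt} dt)^{1/p}. -/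
open MeasureTheory Set Real
open scoped ENNReal

lemma aux_exp_lintegral_Ioi (s : ℝ) {b : ℝ} (hb : 0 < b) :
    (∫⁻ x in Set.Ioi s, ENNReal.ofReal (Real.exp (-(b * x)))) =
      ENNReal.ofReal (Real.exp (-(b * s)) / b) := by
  have hint : IntegrableOn (fun x => Real.exp (-(b * x))) (Set.Ioi s) := by
    simpa [neg_mul] using exp_neg_integrableOn_Ioi s hb
  rw [← MeasureTheory.ofReal_integral_eq_lintegral_ofReal hint
      (ae_of_all _ fun x => (Real.exp_pos _).le)]
  congr 1
  have h := integral_comp_mul_left_Ioi (fun x => Real.exp (-x)) s hb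
  simp only [smul_eq_mul] at h
  rw [h, integral_exp_neg_Ioi]
  ring

lemma aux_halfline (δ : ℝ) (hδ : δ ≠ 0) (s : ℝ) :
    (∫⁻ x in {t : ℝ | δ * t ≤ δ * s}, ENNReal.ofReal (Real.exp (δ * x))) =
      ENNReal.ofReal (Real.exp (δ * s) / |δ|) := by
  rcases hδ.lt_or_gt with hneg | hpos
  · have hset : {t : ℝ | δ * t ≤ δ * s} = Set.Ici s := by
      ext t
      simp only [Set.mem_setOf_eq, Set.mem_Ici]
      constructor
      · intro h; nlinarith
      · intro h; nlinarith
    rw [hset, ← Measure.restrict_congr_set Ioi_ae_eq_Ici]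
    have h := aux_exp_lintegral_Ioi s (b := -δ) (by linarith)
    simpa [neg_mul, neg_neg, abs_of_neg hneg] using h
  · have hset : {t : ℝ | δ * t ≤ δ * s} = Set.Iic s := by
      ext t
      simp only [Set.mem_setOf_eq, Set.mem_Iic]
      exact ⟨fun h => le_of_mul_le_mul_left h hpos, fun h => by nlinarith⟩
    have hemb : MeasurableEmbedding (fun x : ℝ => -x) :=
      (Homeomorph.neg ℝ).isClosedEmbedding.measurableEmbedding
    have hmp : MeasurePreserving (fun x : ℝ => -x) volume volume :=
      Measure.measurePreserving_neg volume
    have h := hmp.setLIntegral_comp_preimage_emb hemb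
      (fun x => ENNReal.ofReal (Real.exp (δ * x))) (Set.Iic s)
    have hpre : (fun x : ℝ => -x) ⁻¹' Set.Iic s = Set.Ici (-s) := by
      ext x; simp [neg_le]
    rw [hset, ← h, hpre, ← Measure.restrict_congr_set Ioi_ae_eq_Ici]
    have h2 := aux_exp_lintegral_Ioi (-s) (b := δ) hpos
    simpa [mul_neg, neg_mul, neg_neg, abs_of_pos hpos] using h2

/-- For `δ ≠ 0` and `p ∈ [1,∞)` there is `C > 0` (depending only on `δ` and `p`)
such that for every measurable set `E ⊆ ℝ`,
`∫_ℝ χ_E(t) e^{δt} dt ≤ C (∫_ℝ χ_E(t) e^{pδt} dt)^{1/p}`. -/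
theorem indicator_exp_integral_le (δ : ℝ) (hδ : δ ≠ 0) (p : ℝ) (hp : 1 ≤ p) :
    ∃ C : ℝ, 0 < C ∧ ∀ E : Set ℝ, MeasurableSet E →
      (∫⁻ t in E, ENNReal.ofReal (Real.exp (δ * t))) ≤
        ENNReal.ofReal C *
          (∫⁻ t in E, ENNReal.ofReal (Real.exp (p * δ * t))) ^ (1 / p) := by
  have hp0 : (0:ℝ) < p := lt_of_lt_of_le one_pos hp
  have habs : (0:ℝ) < |δ| := abs_pos.2 hδ
  refine ⟨1 + 1 / |δ|, by positivity, fun E hE => ?_⟩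
  set V : ℝ≥0∞ := ∫⁻ t in E, ENNReal.ofReal (Real.exp (p * δ * t)) with hVdef
  have hgmeas : Measurable fun t : ℝ => ENNReal.ofReal (Real.exp (p * δ * t)) :=
    (Real.measurable_exp.comp (measurable_id.const_mul _)).ennreal_ofReal
  by_cases hVtop : V = ⊤
  · rw [hVtop, ENNReal.top_rpow_of_pos (by positivity), ENNReal.mul_top]
    · exact le_top
    · simp only [ne_eq, ENNReal.ofReal_eq_zero, not_le]
      positivity
  by_cases hV0 : V = 0
  · have h1 := (lintegral_eq_zero_iff hgmeas).1 hV0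
    rw [Filter.EventuallyEq, ae_iff] at h1
    have huniv : {a : ℝ | ¬ ENNReal.ofReal (Real.exp (p * δ * a)) = (0 : ℝ≥0∞) → False}ᶜ = Set.univ := by
      ext t
      simp [ENNReal.ofReal_eq_zero, not_le, Real.exp_pos]
    have hE0 : volume E = 0 := by
      have : {a : ℝ | ¬ (fun t => ENNReal.ofReal (Real.exp (p * δ * t))) a = (0 : ℝ → ℝ≥0∞) a}
          = Set.univ := by
        ext t
        simp [ENNReal.ofReal_eq_zero, not_le, Real.exp_pos]
      rw [this, Measure.restrict_apply MeasurableSet.univ, Set.univ_inter] at h1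
      exact h1
    rw [setLIntegral_measure_zero E _ hE0]
    exact zero_le
  -- main case
  have hVr : 0 < V.toReal := ENNReal.toReal_pos hV0 hVtop
  set Vr : ℝ := V.toReal with hVrdef
  set s : ℝ := Real.log Vr / (p * δ) with hsdef
  have hpδ : p * δ ≠ 0 := mul_ne_zero (ne_of_gt hp0) hδ
  have key1 : δ * s = Real.log Vr / p := by
    rw [hsdef]; field_simp
  have key2 : Real.exp (δ * s) = Vr ^ (1/p) := by
    rw [key1, Real.rpow_def_of_pos hVr]
    congr 1
    field_simp
  have key3 : Real.exp ((1 - p) * (δ * s)) * Vr = Vr ^ (1/p) := by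
    nth_rewrite 1 [show Vr = Real.exp (Real.log Vr) from (Real.exp_log hVr).symm]
    rw [← Real.exp_add, Real.rpow_def_of_pos hVr, key1]
    congr 1
    field_simp
    ring
  set S : Set ℝ := {t : ℝ | δ * t ≤ δ * s} with hSdef
  have hS : MeasurableSet S := measurableSet_le (measurable_id.const_mul δ) measurable_const
  have hsplit : (∫⁻ t in E, ENNReal.ofReal (Real.exp (δ * t)))
      = (∫⁻ t in E ∩ S, ENNReal.ofReal (Real.exp (δ * t)))
        + ∫⁻ t in E ∩ Sᶜ, ENNReal.ofReal (Real.exp (δ * t)) := by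
    rw [← lintegral_union (hE.inter hS.compl)
      (Set.disjoint_of_subset Set.inter_subset_right Set.inter_subset_right
        disjoint_compl_right), Set.inter_union_compl]
  have hA : (∫⁻ t in E ∩ S, ENNReal.ofReal (Real.exp (δ * t)))
      ≤ ENNReal.ofReal (Real.exp (δ * s) / |δ|) := by
    rw [← aux_halfline δ hδ s]
    exact lintegral_mono_set Set.inter_subset_right
  have hB : (∫⁻ t in E ∩ Sᶜ, ENNReal.ofReal (Real.exp (δ * t)))
      ≤ ENNReal.ofReal (Real.exp ((1 - p) * (δ * s))) * V := by
    calc (∫⁻ t in E ∩ Sᶜ, ENNReal.ofReal (Real.exp (δ * t)))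
        ≤ ∫⁻ t in E ∩ Sᶜ,
            ENNReal.ofReal (Real.exp ((1 - p) * (δ * s))) * ENNReal.ofReal (Real.exp (p * δ * t)) := by
          refine setLIntegral_mono (hgmeas.const_mul _) fun t ht => ?_
          have hts : δ * s ≤ δ * t := le_of_not_ge ht.2
          rw [← ENNReal.ofReal_mul (Real.exp_pos _).le, ← Real.exp_add]
          apply ENNReal.ofReal_le_ofReal
          apply Real.exp_le_exp.2
          nlinarith [mul_nonneg (sub_nonneg.2 hp) (sub_nonneg.2 hts)]
      _ = ENNReal.ofReal (Real.exp ((1 - p) * (δ * s)))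
            * ∫⁻ t in E ∩ Sᶜ, ENNReal.ofReal (Real.exp (p * δ * t)) :=
          lintegral_const_mul _ hgmeas
      _ ≤ ENNReal.ofReal (Real.exp ((1 - p) * (δ * s))) * V :=
          mul_le_mul_right (lintegral_mono_set Set.inter_subset_left) _
  have hVof : V = ENNReal.ofReal Vr := (ENNReal.ofReal_toReal hVtop).symm
  calc (∫⁻ t in E, ENNReal.ofReal (Real.exp (δ * t)))
      ≤ ENNReal.ofReal (Real.exp (δ * s) / |δ|)
        + ENNReal.ofReal (Real.exp ((1 - p) * (δ * s))) * V := by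
        rw [hsplit]; exact add_le_add hA hB
    _ = ENNReal.ofReal (1 + 1 / |δ|) * V ^ (1/p) := by
        rw [hVof, ← ENNReal.ofReal_mul (Real.exp_pos _).le, key3, key2,
          ENNReal.ofReal_rpow_of_pos hVr, ← ENNReal.ofReal_add (by positivity) (by positivity),
          ← ENNReal.ofReal_mul (by positivity)]
        congr 1
        field_simp
        ring
end

section
/- Let δ ≠ 0 be a real number and let p ∈ [1,∞). There exists a constant C > 0 (depending only on δ and p) such that for every measurable set E ⊆ (0,∞), ∫_0^∞ χ_E(s) s^{δ−1} ds ≤ C (∫_0^∞ χ_E(s) s^{pδ−1} ds)^{1/p}. -/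
open MeasureTheory Set Real
open scoped ENNReal

lemma lintegral_Ioc_rpow_aux {r a : ℝ} (hr : -1 < r) (ha : 0 < a) :
    ∫⁻ s in Ioc 0 a, ENNReal.ofReal (s ^ r) = ENNReal.ofReal (a ^ (r + 1) / (r + 1)) := by
  have hint : IntegrableOn (fun s : ℝ => s ^ r) (Ioc 0 a) :=
    (intervalIntegral.intervalIntegrable_rpow' (a := 0) (b := a) hr).1
  rw [← ofReal_integral_eq_lintegral_ofReal hint
      ((ae_restrict_iff' measurableSet_Ioc).mpr
        (ae_of_all _ fun x hx => rpow_nonneg hx.1.le r))]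
  congr 1
  rw [← intervalIntegral.integral_of_le ha.le, integral_rpow (Or.inl hr)]
  rw [Real.zero_rpow (by linarith : r + 1 ≠ 0)]
  ring

lemma lintegral_Ioi_rpow_aux {r a : ℝ} (hr : r < -1) (ha : 0 < a) :
    ∫⁻ s in Ioi a, ENNReal.ofReal (s ^ r) = ENNReal.ofReal (a ^ (r + 1) / (-(r + 1))) := by
  rw [← ofReal_integral_eq_lintegral_ofReal (integrableOn_Ioi_rpow_of_lt hr ha)
      ((ae_restrict_iff' measurableSet_Ioi).mpr
        (ae_of_all _ fun x hx => rpow_nonneg (ha.trans hx).le r)),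
    integral_Ioi_rpow_of_lt hr ha]
  rw [div_neg, neg_div]

/-- For `δ ≠ 0` and `p ∈ [1,∞)` there is `C > 0` (depending only on `δ` and `p`)
such that for every measurable set `E ⊆ (0,∞)`,
`∫_0^∞ χ_E(s) s^{δ−1} ds ≤ C (∫_0^∞ χ_E(s) s^{pδ−1} ds)^{1/p}`. -/
theorem indicator_rpow_integral_le (δ : ℝ) (hδ : δ ≠ 0) (p : ℝ) (hp : 1 ≤ p) :
    ∃ C : ℝ, 0 < C ∧ ∀ E : Set ℝ, MeasurableSet E → E ⊆ Set.Ioi 0 →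
      (∫⁻ s in E, ENNReal.ofReal (s ^ (δ - 1))) ≤
        ENNReal.ofReal C *
          (∫⁻ s in E, ENNReal.ofReal (s ^ (p * δ - 1))) ^ (1 / p) := by
  have hp0 : 0 < p := lt_of_lt_of_le one_pos hp
  set D : ℝ := |δ| with hD
  have hD0 : 0 < D := abs_pos.mpr hδ
  have hpD : 0 < p * D := mul_pos hp0 hD0
  refine ⟨(p * D) ^ (1 / p) * (1 / D + 1 / (p * D)), by positivity, ?_⟩
  intro E hE hEpos
  set I : ℝ≥0∞ := ∫⁻ s in E, ENNReal.ofReal (s ^ (p * δ - 1)) with hIdef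
  rcases eq_or_ne I ∞ with hItop | hItop
  · rw [hItop, ENNReal.top_rpow_of_pos (by positivity : (0:ℝ) < 1 / p),
      ENNReal.mul_top
        (by positivity : ENNReal.ofReal ((p * D) ^ (1 / p) * (1 / D + 1 / (p * D))) ≠ 0)]
    exact le_top
  rcases eq_or_ne I 0 with hI0 | hI0
  · -- E is null
    have hmeas : Measurable fun s : ℝ => ENNReal.ofReal (s ^ (p * δ - 1)) :=
      (measurable_id.pow measurable_const).ennreal_ofReal
    have h0 : (fun s : ℝ => ENNReal.ofReal (s ^ (p * δ - 1))) =ᵐ[volume.restrict E] 0 :=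
      (lintegral_eq_zero_iff hmeas).mp hI0
    have hnm : ∀ᵐ x, x ∉ E := by
      filter_upwards [(ae_restrict_iff' hE).mp h0] with x hx hxE
      exact absurd (hx hxE)
        (ne_of_gt (ENNReal.ofReal_pos.mpr (rpow_pos_of_pos (hEpos hxE) _)))
    have hEnull : (volume : Measure ℝ).restrict E = 0 :=
      Measure.restrict_eq_zero.mpr (measure_eq_zero_iff_ae_notMem.mpr hnm)
    rw [hEnull, lintegral_zero_measure]
    exact zero_le
  · -- main case
    set i : ℝ := I.toReal with hidef
    have hi : 0 < i := ENNReal.toReal_pos hI0 hItop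
    have hIi : I = ENNReal.ofReal i := (ENNReal.ofReal_toReal hItop).symm
    set a : ℝ := (p * D * i) ^ (1 / (p * δ)) with hadef
    have hbase : 0 < p * D * i := by positivity
    have ha : 0 < a := rpow_pos_of_pos hbase _
    have hpδ : p * δ ≠ 0 := mul_ne_zero hp0.ne' hδ
    have hapd : a ^ (p * δ) = p * D * i := by
      rw [hadef, ← Real.rpow_mul hbase.le, one_div, inv_mul_cancel₀ hpδ, Real.rpow_one]
    have haδ : a ^ δ = (p * D) ^ (1 / p) * i ^ (1 / p) := by
      rw [hadef, ← Real.rpow_mul hbase.le,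
        show 1 / (p * δ) * δ = 1 / p by field_simp,
        Real.mul_rpow hpD.le hi.le]
    have hae : a ^ ((1 - p) * δ) * i = a ^ δ / (p * D) := by
      rw [show (1 - p) * δ = δ + -(p * δ) by ring, Real.rpow_add ha,
        Real.rpow_neg ha.le, hapd]
      field_simp
    -- obtain the two-piece bound depending on the sign of δ
    obtain ⟨S₁, S₂, hS₁m, hS₂m, hdisj, hcover, h1, h2⟩ :
        ∃ S₁ S₂ : Set ℝ, MeasurableSet S₁ ∧ MeasurableSet S₂ ∧
          Disjoint S₁ S₂ ∧ E ⊆ S₁ ∪ S₂ ∧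
          (∫⁻ s in E ∩ S₁, ENNReal.ofReal (s ^ (δ - 1))) ≤ ENNReal.ofReal (a ^ δ / D) ∧
          (∫⁻ s in E ∩ S₂, ENNReal.ofReal (s ^ (δ - 1))) ≤
            ENNReal.ofReal (a ^ ((1 - p) * δ)) * I := by
      rcases hδ.lt_or_gt with hneg | hpos
      · -- δ < 0 : boundary piece is Ioi a, pointwise piece is Ioc 0 a
        refine ⟨Ioi a, Ioc 0 a, measurableSet_Ioi, measurableSet_Ioc,
          (Set.Ioc_disjoint_Ioi le_rfl).symm, fun x hx => ?_, ?_, ?_⟩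
        · rcases le_or_gt x a with h | h
          · exact Or.inr ⟨hEpos hx, h⟩
          · exact Or.inl h
        · calc (∫⁻ s in E ∩ Ioi a, ENNReal.ofReal (s ^ (δ - 1)))
              ≤ ∫⁻ s in Ioi a, ENNReal.ofReal (s ^ (δ - 1)) :=
                lintegral_mono_set inter_subset_right
            _ = ENNReal.ofReal (a ^ (δ - 1 + 1) / (-(δ - 1 + 1))) :=
                lintegral_Ioi_rpow_aux (by linarith) ha
            _ = ENNReal.ofReal (a ^ δ / D) := by
                rw [show δ - 1 + 1 = δ by ring, hD, abs_of_neg hneg]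
        · calc (∫⁻ s in E ∩ Ioc 0 a, ENNReal.ofReal (s ^ (δ - 1)))
              ≤ ∫⁻ s in E ∩ Ioc 0 a,
                  ENNReal.ofReal (a ^ ((1 - p) * δ)) * ENNReal.ofReal (s ^ (p * δ - 1)) := by
                refine setLIntegral_mono ((measurable_const.mul
                  ((measurable_id.pow measurable_const).ennreal_ofReal))) fun x hx => ?_
                have hx0 : 0 < x := hx.2.1
                rw [← ENNReal.ofReal_mul (rpow_nonneg ha.le _)]
                refine ENNReal.ofReal_le_ofReal ?_
                calc x ^ (δ - 1) = x ^ ((1 - p) * δ) * x ^ (p * δ - 1) := by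
                      rw [← Real.rpow_add hx0]; ring_nf
                  _ ≤ a ^ ((1 - p) * δ) * x ^ (p * δ - 1) := by
                      apply mul_le_mul_of_nonneg_right _ (rpow_nonneg hx0.le _)
                      exact Real.rpow_le_rpow hx0.le hx.2.2
                        (by nlinarith : (0:ℝ) ≤ (1 - p) * δ)
            _ = ENNReal.ofReal (a ^ ((1 - p) * δ)) *
                  ∫⁻ s in E ∩ Ioc 0 a, ENNReal.ofReal (s ^ (p * δ - 1)) := by
                rw [lintegral_const_mul' _ _ ENNReal.ofReal_ne_top]
            _ ≤ ENNReal.ofReal (a ^ ((1 - p) * δ)) * I := by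
                gcongr
                exact lintegral_mono_set inter_subset_left
      · -- δ > 0 : boundary piece is Ioc 0 a, pointwise piece is Ioi a
        refine ⟨Ioc 0 a, Ioi a, measurableSet_Ioc, measurableSet_Ioi,
          Set.Ioc_disjoint_Ioi le_rfl, fun x hx => ?_, ?_, ?_⟩
        · rcases le_or_gt x a with h | h
          · exact Or.inl ⟨hEpos hx, h⟩
          · exact Or.inr h
        · calc (∫⁻ s in E ∩ Ioc 0 a, ENNReal.ofReal (s ^ (δ - 1)))
              ≤ ∫⁻ s in Ioc 0 a, ENNReal.ofReal (s ^ (δ - 1)) :=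
                lintegral_mono_set inter_subset_right
            _ = ENNReal.ofReal (a ^ (δ - 1 + 1) / (δ - 1 + 1)) :=
                lintegral_Ioc_rpow_aux (by linarith) ha
            _ = ENNReal.ofReal (a ^ δ / D) := by
                rw [show δ - 1 + 1 = δ by ring, hD, abs_of_pos hpos]
        · calc (∫⁻ s in E ∩ Ioi a, ENNReal.ofReal (s ^ (δ - 1)))
              ≤ ∫⁻ s in E ∩ Ioi a,
                  ENNReal.ofReal (a ^ ((1 - p) * δ)) * ENNReal.ofReal (s ^ (p * δ - 1)) := by
                refine setLIntegral_mono ((measurable_const.mul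
                  ((measurable_id.pow measurable_const).ennreal_ofReal))) fun x hx => ?_
                have hx0 : 0 < x := ha.trans hx.2
                rw [← ENNReal.ofReal_mul (rpow_nonneg ha.le _)]
                refine ENNReal.ofReal_le_ofReal ?_
                calc x ^ (δ - 1) = x ^ ((1 - p) * δ) * x ^ (p * δ - 1) := by
                      rw [← Real.rpow_add hx0]; ring_nf
                  _ ≤ a ^ ((1 - p) * δ) * x ^ (p * δ - 1) := by
                      apply mul_le_mul_of_nonneg_right _ (rpow_nonneg hx0.le _)
                      exact Real.rpow_le_rpow_of_nonpos ha hx.2.le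
                        (by nlinarith : (1 - p) * δ ≤ 0)
            _ = ENNReal.ofReal (a ^ ((1 - p) * δ)) *
                  ∫⁻ s in E ∩ Ioi a, ENNReal.ofReal (s ^ (p * δ - 1)) := by
                rw [lintegral_const_mul' _ _ ENNReal.ofReal_ne_top]
            _ ≤ ENNReal.ofReal (a ^ ((1 - p) * δ)) * I := by
                gcongr
                exact lintegral_mono_set inter_subset_left
    -- split the integral
    have hsplit : (∫⁻ s in E, ENNReal.ofReal (s ^ (δ - 1))) =
        (∫⁻ s in E ∩ S₁, ENNReal.ofReal (s ^ (δ - 1))) +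
          ∫⁻ s in E ∩ S₂, ENNReal.ofReal (s ^ (δ - 1)) := by
      rw [← lintegral_union (hE.inter hS₂m) (hdisj.mono inter_subset_right inter_subset_right),
        ← inter_union_distrib_left, inter_eq_left.mpr hcover]
    calc (∫⁻ s in E, ENNReal.ofReal (s ^ (δ - 1)))
        ≤ ENNReal.ofReal (a ^ δ / D) + ENNReal.ofReal (a ^ ((1 - p) * δ)) * I := by
          rw [hsplit]; exact add_le_add h1 h2
      _ = ENNReal.ofReal (a ^ δ / D + a ^ ((1 - p) * δ) * i) := by
          rw [hIi, ← ENNReal.ofReal_mul (rpow_nonneg ha.le _),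
            ← ENNReal.ofReal_add (by positivity) (by positivity)]
      _ = ENNReal.ofReal ((p * D) ^ (1 / p) * (1 / D + 1 / (p * D)) * i ^ (1 / p)) := by
          rw [hae, haδ]; congr 1; field_simp
      _ = ENNReal.ofReal ((p * D) ^ (1 / p) * (1 / D + 1 / (p * D))) *
            ENNReal.ofReal (i ^ (1 / p)) := by
          rw [ENNReal.ofReal_mul (by positivity)]
      _ = ENNReal.ofReal ((p * D) ^ (1 / p) * (1 / D + 1 / (p * D))) * I ^ (1 / p) := by
          rw [hIi, ← ENNReal.ofReal_rpow_of_pos hi]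
end

section
/- Let n ≥ 3 and 2 ≤ d ≤ n−1 be integers. There exists a constant C > 0 such that for every measurable set E ⊆ (0,∞) and every s > 0, ∫_s^∞ χ_E(r) (1 − tanh²s/tanh²r)^{(d−2)/2} sinh^{d−1} r dr ≤ C (∫_0^∞ χ_E(r) sinh^{n−1} r dr)^{(d−1)/(n−1)}. -/
open MeasureTheory Set Real
open scoped ENNReal

/-- `∫_0^b sinh^{d-1} ≤ sinh^{d-1} b` for `d ≥ 2`, `b ≥ 0`. -/
lemma abel_aux_integral (d : ℕ) (hd : 2 ≤ d) {b : ℝ} (hb : 0 ≤ b) :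
    ∫ r in (0:ℝ)..b, Real.sinh r ^ (d - 1) ≤ Real.sinh b ^ (d - 1) := by
  set m := d - 1 with hm
  have hm1 : 1 ≤ m := by omega
  have hcont : Continuous fun r : ℝ => Real.sinh r ^ m := Real.continuous_sinh.pow m
  have hcont' : Continuous fun r : ℝ => (m : ℝ) * Real.sinh r ^ (m - 1) * Real.cosh r :=
    ((continuous_const.mul (Real.continuous_sinh.pow (m - 1))).mul Real.continuous_cosh)
  have hderiv : ∀ x ∈ Set.uIcc (0:ℝ) b,
      HasDerivAt (fun r : ℝ => Real.sinh r ^ m)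
        ((m : ℝ) * Real.sinh x ^ (m - 1) * Real.cosh x) x := fun x _ =>
    (Real.hasDerivAt_sinh x).pow m
  have hftc : ∫ r in (0:ℝ)..b, (m : ℝ) * Real.sinh r ^ (m - 1) * Real.cosh r
      = Real.sinh b ^ m - Real.sinh 0 ^ m :=
    intervalIntegral.integral_eq_sub_of_hasDerivAt hderiv (hcont'.intervalIntegrable 0 b)
  have hmono : ∫ r in (0:ℝ)..b, Real.sinh r ^ m
      ≤ ∫ r in (0:ℝ)..b, (m : ℝ) * Real.sinh r ^ (m - 1) * Real.cosh r := by
    apply intervalIntegral.integral_mono_on hb (hcont.intervalIntegrable 0 b)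
      (hcont'.intervalIntegrable 0 b)
    intro x hx
    have hx0 : 0 ≤ x := hx.1
    have hs0 : 0 ≤ Real.sinh x := by
      rw [← Real.sinh_zero]; exact Real.sinh_le_sinh.2 hx0
    have hsc : Real.sinh x ≤ Real.cosh x := by
      rw [Real.sinh_eq, Real.cosh_eq]
      nlinarith [Real.exp_pos (-x)]
    have h1 : Real.sinh x ^ m = Real.sinh x ^ (m - 1) * Real.sinh x := by
      rw [← pow_succ]; congr 1; omega
    rw [h1]
    have h2 : Real.sinh x ^ (m - 1) * Real.sinh x ≤ Real.sinh x ^ (m - 1) * Real.cosh x :=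
      mul_le_mul_of_nonneg_left hsc (pow_nonneg hs0 _)
    have h3 : Real.sinh x ^ (m - 1) * Real.cosh x
        ≤ (m : ℝ) * (Real.sinh x ^ (m - 1) * Real.cosh x) := by
      apply le_mul_of_one_le_left
      · exact mul_nonneg (pow_nonneg hs0 _) (Real.cosh_pos x).le
      · exact_mod_cast hm1
    calc Real.sinh x ^ (m - 1) * Real.sinh x ≤ Real.sinh x ^ (m - 1) * Real.cosh x := h2
      _ ≤ (m : ℝ) * Real.sinh x ^ (m - 1) * Real.cosh x := by linarith [h3]
  have h0 : Real.sinh (0:ℝ) ^ m = 0 := by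
    rw [Real.sinh_zero]; exact zero_pow (by omega)
  calc ∫ r in (0:ℝ)..b, Real.sinh r ^ m
      ≤ Real.sinh b ^ m - Real.sinh 0 ^ m := hftc ▸ hmono
    _ = Real.sinh b ^ m := by rw [h0]; ring

/-- Endpoint estimate on indicators for the Abel transform associated with the
`d`-dimensional totally geodesic Radon transform of radial functions on `ℍⁿ`:
for `n ≥ 3`, `2 ≤ d ≤ n−1` there is `C > 0` such that for every measurable
`E ⊆ (0,∞)` and every `s > 0`,
`∫_s^∞ χ_E(r) (1 − tanh²s/tanh²r)^{(d−2)/2} sinh^{d−1} r dr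
  ≤ C (∫_0^∞ χ_E(r) sinh^{n−1} r dr)^{(d−1)/(n−1)}`. -/
theorem abel_hyperbolic_indicator_endpoint (n d : ℕ) (hn : 3 ≤ n) (hd : 2 ≤ d)
    (hdn : d ≤ n - 1) :
    ∃ C : ℝ, 0 < C ∧ ∀ E : Set ℝ, MeasurableSet E → E ⊆ Set.Ioi 0 →
      ∀ s : ℝ, 0 < s →
        (∫⁻ r in E ∩ Set.Ioi s,
            ENNReal.ofReal
              ((1 - Real.tanh s ^ 2 / Real.tanh r ^ 2) ^ (((d : ℝ) - 2) / 2) *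
                Real.sinh r ^ (d - 1))) ≤
          ENNReal.ofReal C *
            (∫⁻ r in E, ENNReal.ofReal (Real.sinh r ^ (n - 1)))
              ^ (((d : ℝ) - 1) / ((n : ℝ) - 1)) := by
  refine ⟨2, by norm_num, ?_⟩
  intro E hE hE0 s hs
  set lam : ℝ := ((d : ℝ) - 1) / ((n : ℝ) - 1) with hlam
  have hn1 : (0:ℝ) < (n:ℝ) - 1 := by
    have : (3:ℝ) ≤ (n:ℝ) := by exact_mod_cast hn
    linarith
  have hd1 : (1:ℝ) ≤ (d:ℝ) - 1 := by
    have : (2:ℝ) ≤ (d:ℝ) := by exact_mod_cast hd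
    linarith
  have hlampos : 0 < lam := div_pos (by linarith) hn1
  set V : ℝ≥0∞ := ∫⁻ r in E, ENNReal.ofReal (Real.sinh r ^ (n - 1)) with hV
  have hgm : Measurable fun r : ℝ => ENNReal.ofReal (Real.sinh r ^ (d - 1)) :=
    (Real.continuous_sinh.pow (d-1)).measurable.ennreal_ofReal
  have hgnm : Measurable fun r : ℝ => ENNReal.ofReal (Real.sinh r ^ (n - 1)) :=
    (Real.continuous_sinh.pow (n-1)).measurable.ennreal_ofReal
  -- Step 1: drop the tanh factor
  have step1 : (∫⁻ r in E ∩ Set.Ioi s,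
      ENNReal.ofReal
        ((1 - Real.tanh s ^ 2 / Real.tanh r ^ 2) ^ (((d : ℝ) - 2) / 2) *
          Real.sinh r ^ (d - 1)))
      ≤ ∫⁻ r in E ∩ Set.Ioi s, ENNReal.ofReal (Real.sinh r ^ (d - 1)) := by
    apply setLIntegral_mono hgm
    intro r hr
    have hrs : s < r := hr.2
    have hr0 : 0 < r := hs.trans hrs
    apply ENNReal.ofReal_le_ofReal
    have hsinh : 0 ≤ Real.sinh r ^ (d - 1) :=
      pow_nonneg (Real.sinh_nonneg_iff.2 hr0.le) _
    apply mul_le_of_le_one_left hsinh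
    -- the tanh factor is ≤ 1
    have htr : 0 < Real.tanh r := by
      rw [Real.tanh_eq_sinh_div_cosh]
      exact div_pos (Real.sinh_pos_iff.2 hr0) (Real.cosh_pos r)
    have hts : 0 ≤ Real.tanh s := by
      rw [Real.tanh_eq_sinh_div_cosh]
      exact div_nonneg (Real.sinh_nonneg_iff.2 hs.le) (Real.cosh_pos s).le
    have hmono : Real.tanh s ≤ Real.tanh r := by
      rw [Real.tanh_eq_sinh_div_cosh, Real.tanh_eq_sinh_div_cosh]
      rw [div_le_div_iff₀ (Real.cosh_pos s) (Real.cosh_pos r)]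
      have := Real.sinh_lt_sinh.2 (show s - r < 0 by linarith)
      rw [Real.sinh_sub] at this
      simp only [Real.sinh_zero] at this
      nlinarith
    have hq : Real.tanh s ^ 2 / Real.tanh r ^ 2 ≤ 1 := by
      rw [div_le_one (by positivity)]
      exact pow_le_pow_left₀ hts hmono 2
    have hq0 : 0 ≤ Real.tanh s ^ 2 / Real.tanh r ^ 2 := by positivity
    have hexp : (0:ℝ) ≤ ((d:ℝ) - 2) / 2 := by
      have : (2:ℝ) ≤ (d:ℝ) := by exact_mod_cast hd
      linarith
    exact Real.rpow_le_one (by linarith) (by linarith) hexp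
  by_cases hV0 : V = 0
  · -- E is null
    have hEnull : volume E = 0 := by
      have h : (fun r => ENNReal.ofReal (Real.sinh r ^ (n - 1)))
          =ᵐ[volume.restrict E] 0 := (lintegral_eq_zero_iff hgnm).1 hV0
      have h' := (ae_restrict_iff' hE).1 h
      rw [measure_eq_zero_iff_ae_notMem]
      filter_upwards [h'] with r hr hrE
      have hr0 : 0 < r := hE0 hrE
      have : ENNReal.ofReal (Real.sinh r ^ (n - 1)) ≠ 0 := by
        simp only [ne_eq, ENNReal.ofReal_eq_zero, not_le]
        exact pow_pos (Real.sinh_pos_iff.2 hr0) _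
      exact this (hr hrE)
    have : (∫⁻ r in E ∩ Set.Ioi s,
        ENNReal.ofReal
          ((1 - Real.tanh s ^ 2 / Real.tanh r ^ 2) ^ (((d : ℝ) - 2) / 2) *
            Real.sinh r ^ (d - 1))) = 0 :=
      setLIntegral_measure_zero _ _ (measure_mono_null inter_subset_left hEnull)
    simp [this]
  by_cases hVT : V = ⊤
  · rw [hVT, ENNReal.top_rpow_of_pos hlampos, ENNReal.mul_top (by simp)]
    exact le_top
  -- main case
  set v : ℝ := V.toReal with hv
  have hvpos : 0 < v := ENNReal.toReal_pos hV0 hVT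
  set b : ℝ := Real.arsinh (v ^ ((n:ℝ) - 1)⁻¹) with hbdef
  have hsinhb : Real.sinh b = v ^ ((n:ℝ) - 1)⁻¹ := Real.sinh_arsinh _
  have hsb0 : 0 < Real.sinh b := hsinhb ▸ Real.rpow_pos_of_pos hvpos _
  have hb0 : 0 < b := Real.sinh_pos_iff.1 hsb0
  have hpow : ∀ m : ℕ, Real.sinh b ^ m = v ^ ((m:ℝ) / ((n:ℝ) - 1)) := by
    intro m
    rw [hsinhb, ← Real.rpow_natCast (v ^ ((n:ℝ) - 1)⁻¹) m, ← Real.rpow_mul hvpos.le,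
      inv_mul_eq_div]
  have hcastd : ((d - 1 : ℕ) : ℝ) = (d:ℝ) - 1 := by
    have : 1 ≤ d := by omega
    push_cast [this]; ring
  have hsbd : Real.sinh b ^ (d - 1) = v ^ lam := by
    rw [hpow (d-1), hcastd]
  -- Piece 1
  have piece1 : (∫⁻ r in Set.Ioc 0 b, ENNReal.ofReal (Real.sinh r ^ (d - 1)))
      ≤ ENNReal.ofReal (v ^ lam) := by
    have hint : IntegrableOn (fun r : ℝ => Real.sinh r ^ (d - 1)) (Set.Ioc 0 b) volume :=
      (Real.continuous_sinh.pow (d-1)).integrableOn_Ioc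
    have hnn : 0 ≤ᵐ[volume.restrict (Set.Ioc 0 b)]
        fun r : ℝ => Real.sinh r ^ (d - 1) := by
      rw [Filter.EventuallyLE, ae_restrict_iff' measurableSet_Ioc]
      filter_upwards with r hr
      exact pow_nonneg (Real.sinh_nonneg_iff.2 hr.1.le) _
    rw [← ofReal_integral_eq_lintegral_ofReal hint hnn]
    apply ENNReal.ofReal_le_ofReal
    rw [← intervalIntegral.integral_of_le hb0.le]
    calc ∫ r in (0:ℝ)..b, Real.sinh r ^ (d - 1)
        ≤ Real.sinh b ^ (d - 1) := abel_aux_integral d hd hb0.le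
      _ = v ^ lam := hsbd
  -- Piece 2
  have piece2 : (∫⁻ r in E ∩ Set.Ioi b, ENNReal.ofReal (Real.sinh r ^ (d - 1)))
      ≤ ENNReal.ofReal (v ^ lam) := by
    set k : ℝ := (Real.sinh b ^ (n - d))⁻¹ with hk
    have hkpos : 0 < k := inv_pos.2 (pow_pos hsb0 _)
    have hptwise : ∀ r ∈ E ∩ Set.Ioi b,
        ENNReal.ofReal (Real.sinh r ^ (d - 1))
          ≤ ENNReal.ofReal k * ENNReal.ofReal (Real.sinh r ^ (n - 1)) := by
      intro r hr
      have hbr : b ≤ r := le_of_lt hr.2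
      have hsr0 : 0 ≤ Real.sinh r := Real.sinh_nonneg_iff.2 (hb0.trans_le hbr).le
      have hsbr : Real.sinh b ≤ Real.sinh r := Real.sinh_le_sinh.2 hbr
      rw [← ENNReal.ofReal_mul hkpos.le]
      apply ENNReal.ofReal_le_ofReal
      rw [hk, inv_mul_eq_div, le_div_iff₀ (pow_pos hsb0 _)]
      calc Real.sinh r ^ (d - 1) * Real.sinh b ^ (n - d)
          ≤ Real.sinh r ^ (d - 1) * Real.sinh r ^ (n - d) :=
            mul_le_mul_of_nonneg_left (pow_le_pow_left₀ hsb0.le hsbr _)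
              (pow_nonneg hsr0 _)
        _ = Real.sinh r ^ (n - 1) := by rw [← pow_add]; congr 1; omega
    have hkv : k * v = v ^ lam := by
      have hcastnd : ((n - d : ℕ) : ℝ) = (n:ℝ) - (d:ℝ) := by
        have : d ≤ n := by omega
        push_cast [this]; ring
      rw [hk, hpow (n - d), hcastnd, ← Real.rpow_neg hvpos.le]
      nth_rewrite 2 [show v = v ^ (1:ℝ) by rw [Real.rpow_one]]
      rw [← Real.rpow_add hvpos]
      congr 1
      rw [hlam]
      field_simp
      ring
    calc (∫⁻ r in E ∩ Set.Ioi b, ENNReal.ofReal (Real.sinh r ^ (d - 1)))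
        ≤ ∫⁻ r in E ∩ Set.Ioi b,
            ENNReal.ofReal k * ENNReal.ofReal (Real.sinh r ^ (n - 1)) :=
          setLIntegral_mono (measurable_const.mul hgnm) hptwise
      _ = ENNReal.ofReal k * ∫⁻ r in E ∩ Set.Ioi b,
            ENNReal.ofReal (Real.sinh r ^ (n - 1)) := lintegral_const_mul _ hgnm
      _ ≤ ENNReal.ofReal k * V :=
          mul_le_mul_right (lintegral_mono_set inter_subset_left) _
      _ = ENNReal.ofReal (v ^ lam) := by
          rw [← ENNReal.ofReal_toReal hVT, ← hv, ← ENNReal.ofReal_mul hkpos.le, hkv]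
  -- combine
  have hsplit : E ∩ Set.Ioi s ⊆ Set.Ioc 0 b ∪ (E ∩ Set.Ioi b) := by
    intro r hr
    have hr0 : 0 < r := hE0 hr.1
    rcases le_or_gt r b with h | h
    · exact Or.inl ⟨hr0, h⟩
    · exact Or.inr ⟨hr.1, h⟩
  have hVrpow : V ^ lam = ENNReal.ofReal (v ^ lam) := by
    rw [← ENNReal.ofReal_toReal hVT, ← hv, ENNReal.ofReal_rpow_of_pos hvpos]
  calc (∫⁻ r in E ∩ Set.Ioi s,
      ENNReal.ofReal
        ((1 - Real.tanh s ^ 2 / Real.tanh r ^ 2) ^ (((d : ℝ) - 2) / 2) *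
          Real.sinh r ^ (d - 1)))
      ≤ ∫⁻ r in E ∩ Set.Ioi s, ENNReal.ofReal (Real.sinh r ^ (d - 1)) := step1
    _ ≤ ∫⁻ r in Set.Ioc 0 b ∪ (E ∩ Set.Ioi b),
          ENNReal.ofReal (Real.sinh r ^ (d - 1)) := lintegral_mono_set hsplit
    _ ≤ (∫⁻ r in Set.Ioc 0 b, ENNReal.ofReal (Real.sinh r ^ (d - 1)))
          + ∫⁻ r in E ∩ Set.Ioi b, ENNReal.ofReal (Real.sinh r ^ (d - 1)) :=
        lintegral_union_le _ _ _
    _ ≤ ENNReal.ofReal (v ^ lam) + ENNReal.ofReal (v ^ lam) := add_le_add piece1 piece2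
    _ = ENNReal.ofReal 2 * V ^ lam := by
        rw [hVrpow, ← ENNReal.ofReal_add (by positivity) (by positivity),
          ← ENNReal.ofReal_mul (by norm_num)]
        norm_num
        ring_nf
        rw [ENNReal.ofReal_mul (Real.rpow_pos_of_pos hvpos _).le, ENNReal.ofReal_ofNat]
end

section
/- Let n ≥ 3 and 2 ≤ d ≤ n−1 be integers. There exists a constant C > 0 such that for every measurable function f : (0,∞) → [0,∞], sup_{s>0} ∫_s^∞ f(r) (1 − tanh²s/tanh²r)^{(d−2)/2} sinh^{d−1} r dr ≤ C ‖f‖_{L^{(n−1)/(d−1),1}((0,∞), sinh^{n−1} r dr)}; equivalently, sup_{s>0} cosh s · A_d⁻ f(s) ≤ C ‖f‖_{L^{(n−1)/(d−1),1}((0,∞), sinh^{n−1} r dr)}. -/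
open MeasureTheory Set Real
open scoped ENNReal

private lemma sliceAux (c : ℝ≥0∞) :
    ∫⁻ l in Set.Ioi (0:ℝ), {y : ℝ | ENNReal.ofReal y < c}.indicator (1 : ℝ → ℝ≥0∞) l = c := by
  have hS : MeasurableSet {y : ℝ | ENNReal.ofReal y < c} :=
    measurableSet_lt ENNReal.measurable_ofReal measurable_const
  rw [lintegral_indicator_one hS, Measure.restrict_apply hS]
  rcases eq_or_ne c ⊤ with rfl | hc
  · have h : {y : ℝ | ENNReal.ofReal y < ⊤} = Set.univ := by
      ext y; simp [ENNReal.ofReal_lt_top]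
    rw [h, Set.univ_inter, Real.volume_Ioi]
  · have h : {y : ℝ | ENNReal.ofReal y < c} ∩ Set.Ioi 0 = Set.Ioo 0 c.toReal := by
      ext y
      simp only [Set.mem_inter_iff, Set.mem_setOf_eq, Set.mem_Ioi, Set.mem_Ioo]
      constructor
      · rintro ⟨h1, h2⟩; exact ⟨h2, (ENNReal.ofReal_lt_iff_lt_toReal h2.le hc).1 h1⟩
      · rintro ⟨h1, h2⟩; exact ⟨(ENNReal.ofReal_lt_iff_lt_toReal h1.le hc).2 h2, h1⟩
    rw [h, Real.volume_Ioo, sub_zero, ENNReal.ofReal_toReal hc]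

private lemma layercakeAux (ν : Measure ℝ) [SFinite ν] {f : ℝ → ℝ≥0∞} (hf : Measurable f) :
    ∫⁻ x, f x ∂ν = ∫⁻ l in Set.Ioi (0:ℝ), ν {t | ENNReal.ofReal l < f t} := by
  have hA : MeasurableSet {p : ℝ × ℝ | ENNReal.ofReal p.2 < f p.1} :=
    measurableSet_lt (ENNReal.measurable_ofReal.comp measurable_snd) (hf.comp measurable_fst)
  have hm : Measurable (Function.uncurry fun x l =>
      ({p : ℝ × ℝ | ENNReal.ofReal p.2 < f p.1}).indicator (1 : ℝ × ℝ → ℝ≥0∞) (x, l)) :=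
    measurable_one.indicator hA
  have h1 : ∀ x, f x = ∫⁻ l in Set.Ioi (0:ℝ),
      ({p : ℝ × ℝ | ENNReal.ofReal p.2 < f p.1}).indicator (1 : ℝ × ℝ → ℝ≥0∞) (x, l) := by
    intro x
    conv_lhs => rw [← sliceAux (f x)]
    refine lintegral_congr fun l => ?_
    simp [Set.indicator_apply]
  calc ∫⁻ x, f x ∂ν
      = ∫⁻ x, (∫⁻ l in Set.Ioi (0:ℝ),
          ({p : ℝ × ℝ | ENNReal.ofReal p.2 < f p.1}).indicator (1 : ℝ × ℝ → ℝ≥0∞) (x, l)) ∂ν :=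
        lintegral_congr h1
    _ = ∫⁻ l in Set.Ioi (0:ℝ), (∫⁻ x,
          ({p : ℝ × ℝ | ENNReal.ofReal p.2 < f p.1}).indicator (1 : ℝ × ℝ → ℝ≥0∞) (x, l) ∂ν) :=
        lintegral_lintegral_swap hm.aemeasurable
    _ = ∫⁻ l in Set.Ioi (0:ℝ), ν {t | ENNReal.ofReal l < f t} := by
        refine lintegral_congr fun l => ?_
        rw [← lintegral_indicator_one (measurableSet_lt measurable_const hf)]
        refine lintegral_congr fun x => ?_
        simp [Set.indicator_apply]

private lemma ftcAux {m : ℕ} (hm : 1 ≤ m) {t : ℝ} (ht : 0 < t) :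
    ∫⁻ r in Set.Ioc (0:ℝ) t, ENNReal.ofReal (Real.sinh r ^ m) ≤
      ENNReal.ofReal (Real.sinh t ^ m / m) := by
  have hmR : (0:ℝ) < m := by exact_mod_cast hm
  have hcont : Continuous fun r : ℝ => Real.sinh r ^ (m - 1) * Real.cosh r :=
    (Real.continuous_sinh.pow _).mul Real.continuous_cosh
  have hderiv : ∀ x ∈ Set.uIcc (0:ℝ) t,
      HasDerivAt (fun r : ℝ => Real.sinh r ^ m / m)
        (Real.sinh x ^ (m - 1) * Real.cosh x) x := by
    intro x _
    have h1 : HasDerivAt (fun r : ℝ => Real.sinh r ^ m)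
        ((m : ℝ) * Real.sinh x ^ (m - 1) * Real.cosh x) x :=
      (Real.hasDerivAt_sinh x).pow m
    have h2 := h1.div_const (m : ℝ)
    convert h2 using 1
    case e'_4 => rfl
    case e'_5 => rfl
    rw [eq_div_iff hmR.ne']
    ring
  have hftc : ∫ r in (0:ℝ)..t, Real.sinh r ^ (m - 1) * Real.cosh r
      = Real.sinh t ^ m / m := by
    rw [intervalIntegral.integral_eq_sub_of_hasDerivAt hderiv
      (hcont.intervalIntegrable 0 t)]
    simp [Real.sinh_zero, zero_pow (by omega : m ≠ 0)]
  have hint : IntegrableOn (fun r : ℝ => Real.sinh r ^ (m - 1) * Real.cosh r)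
      (Set.Ioc 0 t) := hcont.integrableOn_Ioc
  calc ∫⁻ r in Set.Ioc (0:ℝ) t, ENNReal.ofReal (Real.sinh r ^ m)
      ≤ ∫⁻ r in Set.Ioc (0:ℝ) t, ENNReal.ofReal (Real.sinh r ^ (m-1) * Real.cosh r) := by
        refine setLIntegral_mono (hcont.measurable.ennreal_ofReal) fun r hr => ?_
        refine ENNReal.ofReal_le_ofReal ?_
        have h0 : 0 ≤ Real.sinh r := Real.sinh_nonneg_iff.2 hr.1.le
        calc Real.sinh r ^ m = Real.sinh r ^ (m-1) * Real.sinh r := by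
              rw [← pow_succ]; congr 1; omega
          _ ≤ Real.sinh r ^ (m-1) * Real.cosh r := by
              exact mul_le_mul_of_nonneg_left (Real.sinh_lt_cosh r).le (pow_nonneg h0 _)
    _ = ENNReal.ofReal (∫ r in Set.Ioc (0:ℝ) t, Real.sinh r ^ (m-1) * Real.cosh r) := by
        rw [← MeasureTheory.ofReal_integral_eq_lintegral_ofReal hint]
        filter_upwards [ae_restrict_mem measurableSet_Ioc] with r hr
        have h0 : 0 ≤ Real.sinh r := Real.sinh_nonneg_iff.2 hr.1.le
        positivity
    _ = ENNReal.ofReal (Real.sinh t ^ m / m) := by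
        rw [← intervalIntegral.integral_of_le ht.le, hftc]

private lemma measureEstAux (n d : ℕ) (hn : 3 ≤ n) (hd : 2 ≤ d) (hdn : d ≤ n - 1) (E : Set ℝ)
    (hE : MeasurableSet E) :
    ∫⁻ r in E ∩ Set.Ioi 0, ENNReal.ofReal (Real.sinh r ^ (d-1)) ≤
      2 * (∫⁻ r in E ∩ Set.Ioi 0, ENNReal.ofReal (Real.sinh r ^ (n-1)))
        ^ (((d:ℝ)-1)/((n:ℝ)-1)) := by
  have h2R : (2:ℝ) ≤ d := by exact_mod_cast hd
  have h3R : (3:ℝ) ≤ n := by exact_mod_cast hn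
  have hnR : ((n:ℝ) - 1) ≠ 0 := by linarith
  have hθpos : 0 < ((d:ℝ)-1)/((n:ℝ)-1) := div_pos (by linarith) (by linarith)
  have hmeasn : Measurable fun r : ℝ => ENNReal.ofReal (Real.sinh r ^ (n-1)) :=
    ((Real.continuous_sinh.pow _).measurable).ennreal_ofReal
  set M := ∫⁻ r in E ∩ Set.Ioi 0, ENNReal.ofReal (Real.sinh r ^ (n-1)) with hMdef
  rcases eq_or_ne M ⊤ with hMt | hMt
  · rw [hMt, ENNReal.top_rpow_of_pos hθpos, ENNReal.mul_top (by norm_num)]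
    exact le_top
  rcases eq_or_ne M 0 with hM0 | hM0
  · have h0 := (lintegral_eq_zero_iff hmeasn).1 hM0
    have hz : (fun r => ENNReal.ofReal (Real.sinh r ^ (d-1)))
        =ᵐ[(volume : Measure ℝ).restrict (E ∩ Set.Ioi 0)] 0 := by
      filter_upwards [h0, ae_restrict_mem (hE.inter measurableSet_Ioi)] with r h1 h2
      exfalso
      have hs : 0 < Real.sinh r := Real.sinh_pos_iff.2 h2.2
      have hp : 0 < Real.sinh r ^ (n-1) := pow_pos hs _
      simp only [Pi.zero_apply, ENNReal.ofReal_eq_zero] at h1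
      linarith
    rw [lintegral_congr_ae hz]
    simp
  -- main case
  have hMreal : 0 < M.toReal := ENNReal.toReal_pos hM0 hMt
  set x : ℝ := M.toReal ^ ((1:ℝ)/((n:ℝ)-1)) with hxdef
  have hx : 0 < x := Real.rpow_pos_of_pos hMreal _
  have hcast : (((n-1:ℕ)):ℝ) = (n:ℝ)-1 := by
    push_cast [Nat.cast_sub (by omega : 1 ≤ n)]; ring
  have hcastd : (((d-1:ℕ)):ℝ) = (d:ℝ)-1 := by
    push_cast [Nat.cast_sub (by omega : 1 ≤ d)]; ring
  have hxn : x ^ (n-1) = M.toReal := by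
    rw [hxdef, ← Real.rpow_natCast (M.toReal ^ ((1:ℝ)/((n:ℝ)-1))) (n-1),
      ← Real.rpow_mul hMreal.le, hcast, one_div, inv_mul_cancel₀ hnR, Real.rpow_one]
  set t := Real.arsinh x with htdef
  have ht : 0 < t := Real.arsinh_pos_iff.2 hx
  have hst : Real.sinh t = x := Real.sinh_arsinh x
  have hsub : E ∩ Set.Ioi (0:ℝ) ⊆ Set.Ioc 0 t ∪ (E ∩ Set.Ioi t) := by
    rintro r ⟨hrE, hr0⟩
    by_cases h : r ≤ t
    · exact Or.inl ⟨hr0, h⟩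
    · exact Or.inr ⟨hrE, lt_of_not_ge h⟩
  have key1 : ∫⁻ r in Set.Ioc (0:ℝ) t, ENNReal.ofReal (Real.sinh r ^ (d-1))
      ≤ ENNReal.ofReal (x ^ (d-1)) := by
    refine le_trans (ftcAux (by omega) ht) ?_
    rw [hst]
    refine ENNReal.ofReal_le_ofReal ?_
    refine div_le_self (by positivity) ?_
    rw [hcastd]; linarith
  have key2 : ∫⁻ r in E ∩ Set.Ioi t, ENNReal.ofReal (Real.sinh r ^ (d-1))
      ≤ ENNReal.ofReal (x ^ (d-1)) := by
    have hpt : ∀ r ∈ E ∩ Set.Ioi t, ENNReal.ofReal (Real.sinh r ^ (d-1)) ≤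
        ENNReal.ofReal (1 / x ^ (n-d)) * ENNReal.ofReal (Real.sinh r ^ (n-1)) := by
      intro r hr
      rw [← ENNReal.ofReal_mul (by positivity)]
      refine ENNReal.ofReal_le_ofReal ?_
      have h1 : x ≤ Real.sinh r := by
        rw [← hst]; exact Real.sinh_le_sinh.2 (le_of_lt hr.2)
      have h2 : x ^ (n-d) ≤ Real.sinh r ^ (n-d) := pow_le_pow_left₀ hx.le h1 _
      rw [div_mul_eq_mul_div, one_mul, le_div_iff₀ (by positivity)]
      calc Real.sinh r ^ (d-1) * x ^ (n-d)
          ≤ Real.sinh r ^ (d-1) * Real.sinh r ^ (n-d) :=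
            mul_le_mul_of_nonneg_left h2 (pow_nonneg (hx.le.trans h1) _)
        _ = Real.sinh r ^ (n-1) := by rw [← pow_add]; congr 1; omega
    calc ∫⁻ r in E ∩ Set.Ioi t, ENNReal.ofReal (Real.sinh r ^ (d-1))
        ≤ ∫⁻ r in E ∩ Set.Ioi t,
            ENNReal.ofReal (1 / x ^ (n-d)) * ENNReal.ofReal (Real.sinh r ^ (n-1)) :=
          setLIntegral_mono (measurable_const.mul hmeasn) hpt
      _ = ENNReal.ofReal (1 / x ^ (n-d)) *
            ∫⁻ r in E ∩ Set.Ioi t, ENNReal.ofReal (Real.sinh r ^ (n-1)) :=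
          lintegral_const_mul _ hmeasn
      _ ≤ ENNReal.ofReal (1 / x ^ (n-d)) * M := by
          refine mul_le_mul_right (lintegral_mono_set ?_) _
          exact Set.inter_subset_inter_right _ (Set.Ioi_subset_Ioi ht.le)
      _ = ENNReal.ofReal (x ^ (d-1)) := by
          rw [← ENNReal.ofReal_toReal hMt, ← hxn, ← ENNReal.ofReal_mul (by positivity)]
          congr 1
          rw [div_mul_eq_mul_div, one_mul, div_eq_iff (by positivity), ← pow_add]
          congr 1; omega
  have hR : M ^ (((d:ℝ)-1)/((n:ℝ)-1)) = ENNReal.ofReal (x ^ (d-1)) := by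
    rw [← ENNReal.ofReal_toReal hMt, ← hxn, ENNReal.ofReal_rpow_of_pos (by positivity)]
    congr 1
    rw [← Real.rpow_natCast x (n-1), ← Real.rpow_mul hx.le, hcast,
      mul_div_assoc', mul_comm, mul_div_assoc, div_self hnR, mul_one,
      ← hcastd, Real.rpow_natCast]
  calc ∫⁻ r in E ∩ Set.Ioi 0, ENNReal.ofReal (Real.sinh r ^ (d-1))
      ≤ ∫⁻ r in Set.Ioc 0 t ∪ (E ∩ Set.Ioi t), ENNReal.ofReal (Real.sinh r ^ (d-1)) :=
        lintegral_mono_set hsub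
    _ ≤ (∫⁻ r in Set.Ioc (0:ℝ) t, ENNReal.ofReal (Real.sinh r ^ (d-1))) +
          ∫⁻ r in E ∩ Set.Ioi t, ENNReal.ofReal (Real.sinh r ^ (d-1)) :=
        lintegral_union_le _ _ _
    _ ≤ ENNReal.ofReal (x ^ (d-1)) + ENNReal.ofReal (x ^ (d-1)) := add_le_add key1 key2
    _ = 2 * ENNReal.ofReal (x ^ (d-1)) := (two_mul _).symm
    _ = 2 * M ^ (((d:ℝ)-1)/((n:ℝ)-1)) := by rw [hR]

/-- Endpoint estimate for the Abel transform associated with the `d`-dimensional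
totally geodesic Radon transform of radial functions on `ℍⁿ`. -/
theorem abel_hyperbolic_endpoint (n d : ℕ) (hn : 3 ≤ n) (hd : 2 ≤ d) (hdn : d ≤ n - 1) :
    ∃ C : ℝ, 0 < C ∧ ∀ f : ℝ → ℝ≥0∞, Measurable f →
      ∀ s : ℝ, 0 < s →
        (∫⁻ r in Set.Ioi s,
            f r * ENNReal.ofReal
              ((1 - Real.tanh s ^ 2 / Real.tanh r ^ 2) ^ (((d : ℝ) - 2) / 2) *
                Real.sinh r ^ (d - 1))) ≤
          ENNReal.ofReal C *
            lorentzNorm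
              ((volume.restrict (Set.Ioi (0 : ℝ))).withDensity
                (fun r => ENNReal.ofReal (Real.sinh r ^ (n - 1))))
              (((n : ℝ) - 1) / ((d : ℝ) - 1)) f := by
  refine ⟨2, by norm_num, ?_⟩
  intro f hf s hs
  set μ := (volume.restrict (Set.Ioi (0:ℝ))).withDensity
      (fun r => ENNReal.ofReal (Real.sinh r ^ (n - 1))) with hμdef
  set ν := (volume.restrict (Set.Ioi (0:ℝ))).withDensity
      (fun r => ENNReal.ofReal (Real.sinh r ^ (d - 1))) with hνdef
  have h2R : (2:ℝ) ≤ d := by exact_mod_cast hd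
  have h3R : (3:ℝ) ≤ n := by exact_mod_cast hn
  have hdnR : (d:ℝ) ≤ (n:ℝ) - 1 := by
    have h : d + 1 ≤ n := by omega
    have : (d:ℝ) + 1 ≤ (n:ℝ) := by exact_mod_cast h
    linarith
  have hmeasd : Measurable fun r : ℝ => ENNReal.ofReal (Real.sinh r ^ (d-1)) :=
    ((Real.continuous_sinh.pow _).measurable).ennreal_ofReal
  have step1 : (∫⁻ r in Set.Ioi s,
        f r * ENNReal.ofReal
          ((1 - Real.tanh s ^ 2 / Real.tanh r ^ 2) ^ (((d : ℝ) - 2) / 2) *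
            Real.sinh r ^ (d - 1)))
      ≤ ∫⁻ r in Set.Ioi (0:ℝ), f r * ENNReal.ofReal (Real.sinh r ^ (d-1)) := by
    refine le_trans (setLIntegral_mono (hf.mul hmeasd) ?_)
      (lintegral_mono_set (Set.Ioi_subset_Ioi hs.le))
    intro r hr
    refine mul_le_mul_right (ENNReal.ofReal_le_ofReal ?_) _
    have hrs : s < r := hr
    have hr0 : 0 < r := hs.trans hrs
    have hts : 0 < Real.tanh s := by
      rw [Real.tanh_eq_sinh_div_cosh]
      exact div_pos (Real.sinh_pos_iff.2 hs) (Real.cosh_pos s)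
    have htr : Real.tanh s ≤ Real.tanh r := by
      rw [Real.tanh_eq_sinh_div_cosh, Real.tanh_eq_sinh_div_cosh,
        div_le_div_iff₀ (Real.cosh_pos s) (Real.cosh_pos r)]
      have hsge : 0 ≤ Real.sinh (r - s) := Real.sinh_nonneg_iff.2 (sub_nonneg.2 hrs.le)
      rw [Real.sinh_sub] at hsge
      linarith
    have htrpos : 0 < Real.tanh r := lt_of_lt_of_le hts htr
    have hb0 : 0 ≤ 1 - Real.tanh s ^ 2 / Real.tanh r ^ 2 := by
      rw [sub_nonneg, div_le_one (by positivity)]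
      exact pow_le_pow_left₀ hts.le htr 2
    have hb1 : 1 - Real.tanh s ^ 2 / Real.tanh r ^ 2 ≤ 1 := by
      have hge : 0 ≤ Real.tanh s ^ 2 / Real.tanh r ^ 2 := by positivity
      linarith
    have hbr : (1 - Real.tanh s ^ 2 / Real.tanh r ^ 2) ^ (((d : ℝ) - 2) / 2) ≤ 1 :=
      Real.rpow_le_one hb0 hb1 (by linarith)
    calc (1 - Real.tanh s ^ 2 / Real.tanh r ^ 2) ^ (((d : ℝ) - 2) / 2) * Real.sinh r ^ (d-1)
        ≤ 1 * Real.sinh r ^ (d-1) :=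
          mul_le_mul_of_nonneg_right hbr (pow_nonneg (Real.sinh_nonneg_iff.2 hr0.le) _)
      _ = Real.sinh r ^ (d-1) := one_mul _
  have step2 : (∫⁻ r in Set.Ioi (0:ℝ), f r * ENNReal.ofReal (Real.sinh r ^ (d-1)))
      = ∫⁻ r, f r ∂ν := by
    rw [hνdef, lintegral_withDensity_eq_lintegral_mul _ hmeasd hf]
    refine lintegral_congr fun r => ?_
    simp [mul_comm]
  haveI : SFinite ν := by
    rw [hνdef]
    infer_instance
  have step3 : ∫⁻ r, f r ∂ν = ∫⁻ l in Set.Ioi (0:ℝ), ν {t | ENNReal.ofReal l < f t} :=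
    layercakeAux ν hf
  have step4 : ∀ l : ℝ, ν {t | ENNReal.ofReal l < f t} ≤
      2 * (μ {t | ENNReal.ofReal l < f t}) ^ ((1:ℝ) / (((n:ℝ) - 1) / ((d:ℝ) - 1))) := by
    intro l
    have hEm : MeasurableSet {t : ℝ | ENNReal.ofReal l < f t} :=
      measurableSet_lt measurable_const hf
    have hv : ν {t : ℝ | ENNReal.ofReal l < f t} =
        ∫⁻ r in {t : ℝ | ENNReal.ofReal l < f t} ∩ Set.Ioi 0,
          ENNReal.ofReal (Real.sinh r ^ (d-1)) := by
      rw [hνdef, withDensity_apply _ hEm, Measure.restrict_restrict hEm]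
    have hu : μ {t : ℝ | ENNReal.ofReal l < f t} =
        ∫⁻ r in {t : ℝ | ENNReal.ofReal l < f t} ∩ Set.Ioi 0,
          ENNReal.ofReal (Real.sinh r ^ (n-1)) := by
      rw [hμdef, withDensity_apply _ hEm, Measure.restrict_restrict hEm]
    rw [hv, hu, one_div_div]
    exact measureEstAux n d hn hd hdn _ hEm
  have step5 : (∫⁻ l in Set.Ioi (0:ℝ), ν {t | ENNReal.ofReal l < f t})
      ≤ 2 * ∫⁻ l in Set.Ioi (0:ℝ),
          (μ {t | ENNReal.ofReal l < f t}) ^ ((1:ℝ) / (((n:ℝ) - 1) / ((d:ℝ) - 1))) := by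
    rw [← lintegral_const_mul' _ _ (by norm_num : (2:ℝ≥0∞) ≠ ⊤)]
    exact lintegral_mono fun l => step4 l
  have hp1 : (1:ℝ≥0∞) ≤ ENNReal.ofReal (((n:ℝ) - 1) / ((d:ℝ) - 1)) := by
    rw [ENNReal.one_le_ofReal]
    rw [le_div_iff₀ (by linarith)]
    linarith
  calc (∫⁻ r in Set.Ioi s,
        f r * ENNReal.ofReal
          ((1 - Real.tanh s ^ 2 / Real.tanh r ^ 2) ^ (((d : ℝ) - 2) / 2) *
            Real.sinh r ^ (d - 1)))
      ≤ ∫⁻ r, f r ∂ν := step2 ▸ step1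
    _ = ∫⁻ l in Set.Ioi (0:ℝ), ν {t | ENNReal.ofReal l < f t} := step3
    _ ≤ 2 * ∫⁻ l in Set.Ioi (0:ℝ),
          (μ {t | ENNReal.ofReal l < f t}) ^ ((1:ℝ) / (((n:ℝ) - 1) / ((d:ℝ) - 1))) := step5
    _ ≤ 2 * (ENNReal.ofReal (((n:ℝ) - 1) / ((d:ℝ) - 1)) *
          ∫⁻ l in Set.Ioi (0:ℝ),
            (μ {t | ENNReal.ofReal l < f t}) ^ ((1:ℝ) / (((n:ℝ) - 1) / ((d:ℝ) - 1)))) :=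
        mul_le_mul_right (le_mul_of_one_le_left (by simp) hp1) 2
    _ = ENNReal.ofReal 2 * lorentzNorm μ (((n : ℝ) - 1) / ((d : ℝ) - 1)) f := by
        rw [lorentzNorm]
        norm_num
end

section
/- Let n ≥ 2 be an integer and let 1 ≤ p < ∞. There exists a constant C > 0 such that for every measurable function F : (1,∞) → [0,∞], (∫_0^∞ (∫_{cosh s}^∞ F(t) (t² − cosh²s)^{−1/2} dt)^p sinh^{n−2} s cosh s ds)^{1/p} ≤ C (∫_1^∞ F(t)^p (t² − 1)^{(n−2)/2} dt)^{1/p}. -/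
open MeasureTheory Set Real
open scoped ENNReal

-- 1D change of variables for lintegral
lemma cvar1d {s : Set ℝ} {f f' : ℝ → ℝ} (hs : MeasurableSet s)
    (hf' : ∀ x ∈ s, HasDerivWithinAt f (f' x) s x) (hf : Set.InjOn f s) (g : ℝ → ℝ≥0∞) :
    ∫⁻ x in f '' s, g x = ∫⁻ x in s, ENNReal.ofReal |f' x| * g (f x) := by
  simpa only [ContinuousLinearMap.det_toSpanSingleton] using
    MeasureTheory.lintegral_image_eq_lintegral_abs_det_fderiv_mul volume hs
      (fun x hx => (hf' x hx).hasFDerivWithinAt) hf g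


lemma master_identity {p q : ℝ} (hp : 0 < p) (hq : 0 ≤ q) (hpq : q + 1 = p)
    (x a k : ℝ≥0∞) (ha0 : a ≠ 0) (hat : a ≠ ⊤) (hk0 : k ≠ 0) (hkt : k ≠ ⊤) :
    x * k = (a * k) ^ (q / p) * (x ^ p * a ^ (-q) * k) ^ (1 / p) := by
  rcases eq_or_ne x 0 with rfl | hx0
  · rw [zero_mul, ENNReal.zero_rpow_of_pos hp, zero_mul, zero_mul,
      ENNReal.zero_rpow_of_pos (show (0:ℝ) < 1/p by positivity), mul_zero]
  · have haq0 : a ^ (-q) ≠ 0 := by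
      rw [Ne, ENNReal.rpow_eq_zero_iff]
      rintro (⟨h, _⟩ | ⟨h, _⟩); exacts [ha0 h, hat h]
    have haqt : a ^ (-q) ≠ ⊤ := by
      rw [Ne, ENNReal.rpow_eq_top_iff]
      rintro (⟨h, _⟩ | ⟨h, _⟩); exacts [ha0 h, hat h]
    have hxp0 : x ^ p ≠ 0 := by
      rw [Ne, ENNReal.rpow_eq_zero_iff]
      rintro (⟨h, _⟩ | ⟨_, h⟩); exacts [hx0 h, absurd hp (by linarith)]
    rw [ENNReal.mul_rpow_of_ne_top hat hkt, mul_assoc (x ^ p) (a ^ (-q)) k,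
      ENNReal.mul_rpow_of_ne_zero hxp0 (mul_ne_zero haq0 hk0),
      ENNReal.mul_rpow_of_ne_top haqt hkt, ← ENNReal.rpow_mul x,
      ← ENNReal.rpow_mul a (-q), mul_one_div_cancel hp.ne', ENNReal.rpow_one]
    calc x * k
        = x * ((a ^ (q / p) * a ^ (-q * (1 / p))) * (k ^ (q / p) * k ^ (1 / p))) := by
          rw [← ENNReal.rpow_add _ _ ha0 hat, ← ENNReal.rpow_add _ _ hk0 hkt]
          have h1 : q / p + -q * (1 / p) = 0 := by field_simp; ring
          have h2 : q / p + 1 / p = 1 := by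
            rw [← add_div, hpq, div_self hp.ne']
          rw [h1, h2, ENNReal.rpow_zero, ENNReal.rpow_one, one_mul]
      _ = a ^ (q / p) * k ^ (q / p) * (x * (a ^ (-q * (1 / p)) * k ^ (1 / p))) := by ring

lemma hoelder_step (μ : Measure ℝ) {p q : ℝ} (hp : 1 ≤ p) (hq : q = p - 1)
    (φ ψ : ℝ → ℝ≥0∞) (hφ : AEMeasurable φ μ) (hψ : AEMeasurable ψ μ) :
    ∫⁻ x, φ x ^ (q / p) * ψ x ^ (1 / p) ∂μ ≤
      (∫⁻ x, φ x ∂μ) ^ (q / p) * (∫⁻ x, ψ x ∂μ) ^ (1 / p) := by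
  rcases eq_or_lt_of_le hp with rfl | hp1
  · simp [hq]
  · have hq0 : 0 < q := by rw [hq]; linarith
    have hp0 : 0 < p := by linarith
    have hpq : (p / q).HolderConjugate p := by
      rw [Real.holderConjugate_iff]
      constructor
      · rw [lt_div_iff₀ hq0, one_mul, hq]; linarith
      · rw [inv_div, inv_eq_one_div, ← add_div, hq, sub_add_cancel,
          div_self hp0.ne']
    have h := ENNReal.lintegral_mul_le_Lp_mul_Lq μ hpq
      (hφ.pow_const (q / p)) (hψ.pow_const (1 / p))
    simp only [Pi.mul_apply] at h
    have e1 : ∀ x : ℝ≥0∞, (x ^ (q / p)) ^ (p / q) = x := fun x => by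
      rw [← ENNReal.rpow_mul, div_mul_div_comm, mul_comm, div_self (by positivity),
        ENNReal.rpow_one]
    have e2 : ∀ x : ℝ≥0∞, (x ^ (1 / p)) ^ p = x := fun x => by
      rw [← ENNReal.rpow_mul, one_div_mul_cancel hp0.ne', ENNReal.rpow_one]
    have e3 : 1 / (p / q) = q / p := one_div_div p q
    simp only [e1, e2, e3] at h
    exact h

lemma A0_fin {b : ℝ} (hb : 0 < b) :
    ∫⁻ z in Ioi (1:ℝ), ENNReal.ofReal (z ^ (-b) * (z ^ 2 - 1) ^ (-(1:ℝ)/2)) < ⊤ := by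
  set f : ℝ → ℝ := fun z => z ^ (-b) * (z ^ 2 - 1) ^ (-(1:ℝ)/2) with hf
  have hmeas : Measurable f := by
    apply Measurable.mul
    · exact measurable_id.pow_const _
    · exact ((measurable_id.pow_const 2).sub measurable_const).pow_const _
  have hint : IntegrableOn f (Ioi 1) := by
    have hsub : Ioi (1:ℝ) ⊆ Ioc 1 2 ∪ Ioi 2 := by
      intro x hx
      rcases le_or_gt x 2 with h | h
      · exact Or.inl ⟨hx, h⟩
      · exact Or.inr h
    apply IntegrableOn.mono_set _ hsub
    apply IntegrableOn.union
    · -- on Ioc 1 2, dominate by (z-1)^(-1/2)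
      have base : IntervalIntegrable (fun x : ℝ => x ^ (-(1:ℝ)/2)) volume 0 1 :=
        intervalIntegral.intervalIntegrable_rpow' (by norm_num)
      have base2 := base.comp_sub_right 1
      rw [zero_add, show (1:ℝ)+1 = 2 by norm_num] at base2
      have hg : IntegrableOn (fun x : ℝ => (x - 1) ^ (-(1:ℝ)/2)) (Ioc 1 2) :=
        (intervalIntegrable_iff_integrableOn_Ioc_of_le (by norm_num)).mp base2
      apply hg.integrable.mono hmeas.aestronglyMeasurable
      filter_upwards [ae_restrict_mem measurableSet_Ioc] with z hz
      have hz1 : 1 < z := hz.1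
      have h1 : (0:ℝ) < z - 1 := by linarith
      have h2 : (0:ℝ) < z ^ 2 - 1 := by nlinarith
      rw [Real.norm_eq_abs, Real.norm_eq_abs, hf]
      rw [abs_of_nonneg (by positivity), abs_of_nonneg (by positivity)]
      calc z ^ (-b) * (z ^ 2 - 1) ^ (-(1:ℝ)/2)
          ≤ 1 * (z - 1) ^ (-(1:ℝ)/2) := by
            apply mul_le_mul
            · exact Real.rpow_le_one_of_one_le_of_nonpos hz1.le (by linarith)
            · exact Real.rpow_le_rpow_of_nonpos h1 (by nlinarith) (by norm_num)
            · positivity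
            · norm_num
        _ = (z - 1) ^ (-(1:ℝ)/2) := one_mul _
    · -- on Ioi 2, dominate by sqrt 2 * z ^ (-1-b)
      have hg : IntegrableOn (fun z : ℝ => Real.sqrt 2 * z ^ (-1 - b)) (Ioi 2) :=
        (integrableOn_Ioi_rpow_of_lt (by linarith) (by norm_num)).const_mul _
      apply hg.integrable.mono hmeas.aestronglyMeasurable
      filter_upwards [ae_restrict_mem measurableSet_Ioi] with z hz
      have hz2 : (2:ℝ) < z := hz
      have hz0 : (0:ℝ) < z := by linarith
      have h2 : (0:ℝ) < z ^ 2 - 1 := by nlinarith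
      rw [Real.norm_eq_abs, Real.norm_eq_abs, hf]
      rw [abs_of_nonneg (by positivity), abs_of_nonneg (by positivity)]
      have key : (z ^ 2 - 1) ^ (-(1:ℝ)/2) ≤ Real.sqrt 2 * z ^ (-(1:ℝ)) := by
        have h3 : z ^ 2 / 2 ≤ z ^ 2 - 1 := by nlinarith
        have h4 : (0:ℝ) < z ^ 2 / 2 := by positivity
        calc (z ^ 2 - 1) ^ (-(1:ℝ)/2) ≤ (z ^ 2 / 2) ^ (-(1:ℝ)/2) :=
              Real.rpow_le_rpow_of_nonpos h4 h3 (by norm_num)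
          _ = Real.sqrt 2 * z ^ (-(1:ℝ)) := by
              rw [Real.div_rpow (by positivity) (by norm_num : (0:ℝ) ≤ 2),
                ← Real.rpow_natCast z 2, ← Real.rpow_mul hz0.le, Real.sqrt_eq_rpow]
              norm_num
              rw [Real.rpow_neg (by norm_num : (0:ℝ) ≤ 2), div_inv_eq_mul, mul_comm]
      calc z ^ (-b) * (z ^ 2 - 1) ^ (-(1:ℝ)/2)
          ≤ z ^ (-b) * (Real.sqrt 2 * z ^ (-(1:ℝ))) := by
            apply mul_le_mul_of_nonneg_left key (by positivity)
        _ = Real.sqrt 2 * z ^ (-1 - b) := by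
            rw [mul_comm (z ^ (-b)), mul_assoc, ← Real.rpow_add hz0,
              show (-1:ℝ) + -b = -1 - b by ring]
  have := hint.integrable.lintegral_lt_top
  simpa [hf] using this

lemma B1_fin {c : ℝ} (hc : -1 < c) :
    ∫⁻ x in Ioo (0:ℝ) 1, ENNReal.ofReal (x ^ c * (1 - x) ^ (-(1:ℝ)/2)) < ⊤ := by
  set f : ℝ → ℝ := fun x => x ^ c * (1 - x) ^ (-(1:ℝ)/2) with hf
  have hmeas : Measurable f :=
    (measurable_id.pow_const _).mul ((measurable_const.sub measurable_id).pow_const _)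
  have hint : IntegrableOn f (Ioo 0 1) := by
    have hsub : Ioo (0:ℝ) 1 ⊆ Ioc 0 (1/2) ∪ Ioo (1/2) 1 := by
      intro x hx
      rcases le_or_gt x (1/2) with h | h
      · exact Or.inl ⟨hx.1, h⟩
      · exact Or.inr ⟨h, hx.2⟩
    apply IntegrableOn.mono_set _ hsub
    apply IntegrableOn.union
    · have hg : IntegrableOn (fun x : ℝ => Real.sqrt 2 * x ^ c) (Ioc 0 (1/2)) := by
        apply Integrable.const_mul
        exact (intervalIntegrable_iff_integrableOn_Ioc_of_le (by norm_num)).mp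
          (intervalIntegral.intervalIntegrable_rpow' hc)
      apply hg.integrable.mono hmeas.aestronglyMeasurable
      filter_upwards [ae_restrict_mem measurableSet_Ioc] with x hx
      have hx0 : (0:ℝ) < x := hx.1
      have hx2 : (0:ℝ) < 1 - x := by
        have := hx.2; norm_num at this ⊢; linarith
      rw [Real.norm_eq_abs, Real.norm_eq_abs, hf]
      rw [abs_of_nonneg (by positivity), abs_of_nonneg (by positivity)]
      have key : (1 - x) ^ (-(1:ℝ)/2) ≤ Real.sqrt 2 := by
        have h12 : (1:ℝ)/2 ≤ 1 - x := by
          have := hx.2; linarith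
        calc (1 - x) ^ (-(1:ℝ)/2) ≤ ((1:ℝ)/2) ^ (-(1:ℝ)/2) :=
              Real.rpow_le_rpow_of_nonpos (by norm_num) h12 (by norm_num)
          _ = Real.sqrt 2 := by
              rw [Real.sqrt_eq_rpow, one_div, Real.inv_rpow (by norm_num),
                ← Real.rpow_neg (by norm_num)]
              norm_num
      calc x ^ c * (1 - x) ^ (-(1:ℝ)/2) ≤ x ^ c * Real.sqrt 2 :=
            mul_le_mul_of_nonneg_left key (by positivity)
        _ = Real.sqrt 2 * x ^ c := mul_comm _ _
    · have base : IntervalIntegrable (fun x : ℝ => x ^ (-(1:ℝ)/2)) volume 0 (1/2) :=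
        intervalIntegral.intervalIntegrable_rpow' (by norm_num)
      have base2 := base.comp_sub_left 1
      rw [show (1:ℝ) - 1/2 = 1/2 by norm_num, sub_zero] at base2
      have hg0 : IntegrableOn (fun x : ℝ => (1 - x) ^ (-(1:ℝ)/2)) (Ioo (1/2) 1) := by
        rw [← intervalIntegrable_iff_integrableOn_Ioo_of_le (by norm_num)]
        exact base2.symm
      have hg : IntegrableOn (fun x : ℝ => ((1/2:ℝ) ^ c + 1) * (1 - x) ^ (-(1:ℝ)/2))
          (Ioo (1/2) 1) := hg0.integrable.const_mul _
      apply hg.integrable.mono hmeas.aestronglyMeasurable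
      filter_upwards [ae_restrict_mem measurableSet_Ioo] with x hx
      have hx0 : (0:ℝ) < x := by have := hx.1; norm_num at this ⊢; linarith
      have hx2 : (0:ℝ) < 1 - x := by linarith [hx.2]
      have hK : (0:ℝ) < (1/2:ℝ) ^ c + 1 := by positivity
      rw [Real.norm_eq_abs, Real.norm_eq_abs, hf]
      rw [abs_of_nonneg (by positivity), abs_of_nonneg (by positivity)]
      have key : x ^ c ≤ (1/2:ℝ) ^ c + 1 := by
        rcases le_or_gt 0 c with h | h
        · have : x ^ c ≤ 1 := Real.rpow_le_one hx0.le (by linarith [hx.2]) h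
          have h2 : (0:ℝ) ≤ (1/2:ℝ) ^ c := by positivity
          linarith
        · have : x ^ c ≤ (1/2:ℝ) ^ c :=
            Real.rpow_le_rpow_of_nonpos (by norm_num) hx.1.le h.le
          linarith
      exact mul_le_mul_of_nonneg_right key (by positivity)
  have := hint.integrable.lintegral_lt_top
  simpa [hf] using this

lemma image_mul_Ioi {u : ℝ} (hu : 0 < u) : (fun z => u * z) '' Ioi 1 = Ioi u := by
  ext w
  constructor
  · rintro ⟨z, hz, rfl⟩
    have : (1:ℝ) < z := hz
    calc u = u * 1 := (mul_one u).symm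
      _ < u * z := by exact mul_lt_mul_of_pos_left this hu
  · intro hw
    exact ⟨w / u, by
      simp only [mem_Ioi] at hw ⊢
      rw [lt_div_iff₀ hu, one_mul]; linarith [hw], by field_simp⟩

lemma image_sq_Ioo {t : ℝ} (ht : 1 < t) : (fun x : ℝ => x ^ 2) '' Ioo 1 t = Ioo 1 (t ^ 2) := by
  ext w
  constructor
  · rintro ⟨x, hx, rfl⟩
    have h1 : (1:ℝ) < x := hx.1
    have h2 : x < t := hx.2
    dsimp only
    constructor <;> nlinarith
  · rintro ⟨hw1, hw2⟩
    have hw0 : (0:ℝ) ≤ w := by linarith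
    refine ⟨Real.sqrt w, ⟨?_, ?_⟩, Real.sq_sqrt hw0⟩
    · rw [show (1:ℝ) = Real.sqrt 1 by simp]
      exact Real.sqrt_lt_sqrt (by norm_num) hw1
    · rw [show t = Real.sqrt (t ^ 2) by rw [Real.sqrt_sq (by linarith)]]
      exact Real.sqrt_lt_sqrt hw0 hw2

lemma image_affine_Ioo {t : ℝ} (ht : 1 < t) :
    (fun x : ℝ => 1 + (t ^ 2 - 1) * x) '' Ioo 0 1 = Ioo 1 (t ^ 2) := by
  have hd : (0:ℝ) < t ^ 2 - 1 := by nlinarith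
  ext w
  constructor
  · rintro ⟨x, hx, rfl⟩
    have h1 : (0:ℝ) < x := hx.1
    have h2 : x < 1 := hx.2
    dsimp only
    constructor <;> nlinarith
  · rintro ⟨hw1, hw2⟩
    refine ⟨(w - 1) / (t ^ 2 - 1), ⟨div_pos (by linarith) hd, ?_⟩, by field_simp; ring⟩
    rw [div_lt_one hd]; linarith

lemma image_cosh_Ioi : Real.cosh '' Ioi 0 = Ioi 1 := by
  ext u
  constructor
  · rintro ⟨s, hs, rfl⟩
    have : (0:ℝ) < s := hs
    simp only [mem_Ioi]
    rw [← Real.cosh_zero]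
    exact Real.cosh_lt_cosh.mpr (by rw [abs_of_nonneg le_rfl, abs_of_pos this]; exact this)
  · intro hu
    have hu1 : (1:ℝ) < u := hu
    have hy : (0:ℝ) < Real.sqrt (u ^ 2 - 1) := Real.sqrt_pos.mpr (by nlinarith)
    refine ⟨Real.arsinh (Real.sqrt (u ^ 2 - 1)), ?_, ?_⟩
    · simp only [mem_Ioi]
      have := Real.sinh_arsinh (Real.sqrt (u ^ 2 - 1))
      by_contra h
      push_neg at h
      have : Real.sinh (Real.arsinh (Real.sqrt (u ^ 2 - 1))) ≤ Real.sinh 0 :=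
        Real.sinh_le_sinh.mpr h
      rw [Real.sinh_arsinh, Real.sinh_zero] at this
      linarith
    · have h1 : Real.cosh (Real.arsinh (Real.sqrt (u ^ 2 - 1))) ^ 2 = u ^ 2 := by
        rw [Real.cosh_sq, Real.sinh_arsinh, Real.sq_sqrt (by nlinarith)]
        ring
      have h2 : 0 < Real.cosh (Real.arsinh (Real.sqrt (u ^ 2 - 1))) := Real.cosh_pos _
      nlinarith

lemma S1 {u : ℝ} (b : ℝ) (hu : 0 < u) :
    ∫⁻ t in Ioi u, ENNReal.ofReal (t ^ (-b) * (t ^ 2 - u ^ 2) ^ (-(1:ℝ)/2)) =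
      ENNReal.ofReal (u ^ (-b - 1) * u) *
        ∫⁻ z in Ioi (1:ℝ), ENNReal.ofReal (z ^ (-b) * (z ^ 2 - 1) ^ (-(1:ℝ)/2)) := by
  have hderiv : ∀ z ∈ Ioi (1:ℝ), HasDerivWithinAt (fun z => u * z) u (Ioi 1) z :=
    fun z _ => ((hasDerivAt_id z).const_mul u).hasDerivWithinAt.congr_deriv (by ring)
  have hinj : Set.InjOn (fun z => u * z) (Ioi 1) := fun a _ b _ h =>
    mul_left_cancel₀ hu.ne' h
  rw [← image_mul_Ioi hu, cvar1d measurableSet_Ioi hderiv hinj]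
  rw [← lintegral_const_mul' _ _ ENNReal.ofReal_ne_top]
  apply setLIntegral_congr_fun measurableSet_Ioi
  intro z hz
  beta_reduce
  have hz1 : (1:ℝ) < z := hz
  have hz0 : (0:ℝ) < z := by linarith
  have hd : (0:ℝ) < z ^ 2 - 1 := by nlinarith
  rw [abs_of_pos hu, ← ENNReal.ofReal_mul hu.le, ← ENNReal.ofReal_mul (by positivity)]
  congr 1
  have e1 : (u * z) ^ (-b) = u ^ (-b) * z ^ (-b) := Real.mul_rpow hu.le hz0.le
  have e2 : (u * z) ^ 2 - u ^ 2 = u ^ 2 * (z ^ 2 - 1) := by ring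
  have e3 : (u ^ 2 * (z ^ 2 - 1)) ^ (-(1:ℝ)/2) =
      (u ^ 2) ^ (-(1:ℝ)/2) * (z ^ 2 - 1) ^ (-(1:ℝ)/2) :=
    Real.mul_rpow (by positivity) hd.le
  have e4 : (u ^ 2 : ℝ) ^ (-(1:ℝ)/2) = u ^ (-1:ℝ) := by
    rw [← Real.rpow_natCast u 2, ← Real.rpow_mul hu.le]
    norm_num
  have e5 : u ^ (-b - 1) * u = u ^ (-b) * u ^ (-1:ℝ) * u := by
    rw [← Real.rpow_add hu, show -b + -1 = -b - 1 by ring]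
  rw [e1, e2, e3, e4, e5]
  ring

lemma S2 {t : ℝ} (c : ℝ) (ht : 1 < t) :
    ∫⁻ u in Ioo 1 t, ENNReal.ofReal ((t ^ 2 - u ^ 2) ^ (-(1:ℝ)/2) * (u ^ 2 - 1) ^ c * (2 * u)) =
      ENNReal.ofReal ((t ^ 2 - 1) ^ (c + 1/2)) *
        ∫⁻ x in Ioo (0:ℝ) 1, ENNReal.ofReal (x ^ c * (1 - x) ^ (-(1:ℝ)/2)) := by
  have ht0 : (0:ℝ) < t := by linarith
  have hd : (0:ℝ) < t ^ 2 - 1 := by nlinarith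
  -- step 1 : w = u^2
  have hderiv1 : ∀ x ∈ Ioo (1:ℝ) t, HasDerivWithinAt (fun x : ℝ => x ^ 2) (2 * x) (Ioo 1 t) x :=
    fun x _ => by
      simpa using (hasDerivAt_pow 2 x).hasDerivWithinAt
  have hinj1 : Set.InjOn (fun x : ℝ => x ^ 2) (Ioo 1 t) := fun a ha b hb h => by
    dsimp at h
    have ha1 : (1:ℝ) < a := ha.1
    have hb1 : (1:ℝ) < b := hb.1
    nlinarith [sq_nonneg (a - b), sq_nonneg (a + b)]
  have step1 := cvar1d measurableSet_Ioo hderiv1 hinj1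
    (fun w => ENNReal.ofReal ((t ^ 2 - w) ^ (-(1:ℝ)/2) * (w - 1) ^ c))
  rw [image_sq_Ioo ht] at step1
  -- step 2 : w = 1 + (t^2-1) x
  have hderiv2 : ∀ x ∈ Ioo (0:ℝ) 1,
      HasDerivWithinAt (fun x : ℝ => 1 + (t ^ 2 - 1) * x) (t ^ 2 - 1) (Ioo 0 1) x :=
    fun x _ => by
      simpa using (((hasDerivAt_id x).const_mul (t ^ 2 - 1)).const_add 1).hasDerivWithinAt
  have hinj2 : Set.InjOn (fun x : ℝ => 1 + (t ^ 2 - 1) * x) (Ioo 0 1) := fun a _ b _ h => by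
    dsimp at h
    have := hd
    nlinarith [h]
  have step2 := cvar1d measurableSet_Ioo hderiv2 hinj2
    (fun w => ENNReal.ofReal ((t ^ 2 - w) ^ (-(1:ℝ)/2) * (w - 1) ^ c))
  rw [image_affine_Ioo ht] at step2
  -- combine
  calc ∫⁻ u in Ioo 1 t,
        ENNReal.ofReal ((t ^ 2 - u ^ 2) ^ (-(1:ℝ)/2) * (u ^ 2 - 1) ^ c * (2 * u))
      = ∫⁻ x in Ioo 1 t, ENNReal.ofReal |2 * x| *
          ENNReal.ofReal ((t ^ 2 - x ^ 2) ^ (-(1:ℝ)/2) * (x ^ 2 - 1) ^ c) := by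
        apply setLIntegral_congr_fun measurableSet_Ioo
        intro x hx
        beta_reduce
        have hx0 : (0:ℝ) < x := by linarith [hx.1]
        rw [abs_of_pos (by positivity), ← ENNReal.ofReal_mul (by positivity)]
        congr 1
        ring
    _ = ∫⁻ w in Ioo 1 (t ^ 2), ENNReal.ofReal ((t ^ 2 - w) ^ (-(1:ℝ)/2) * (w - 1) ^ c) :=
        step1.symm
    _ = ∫⁻ x in Ioo (0:ℝ) 1, ENNReal.ofReal |t ^ 2 - 1| *
          ENNReal.ofReal ((t ^ 2 - (1 + (t ^ 2 - 1) * x)) ^ (-(1:ℝ)/2) *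
            ((1 + (t ^ 2 - 1) * x) - 1) ^ c) := step2
    _ = ∫⁻ x in Ioo (0:ℝ) 1, ENNReal.ofReal ((t ^ 2 - 1) ^ (c + 1/2)) *
          ENNReal.ofReal (x ^ c * (1 - x) ^ (-(1:ℝ)/2)) := by
        apply setLIntegral_congr_fun measurableSet_Ioo
        intro x hx
        beta_reduce
        have hx0 : (0:ℝ) < x := hx.1
        have hx1 : (0:ℝ) < 1 - x := by linarith [hx.2]
        rw [abs_of_pos hd, ← ENNReal.ofReal_mul hd.le, ← ENNReal.ofReal_mul (by positivity)]
        congr 1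
        have e1 : t ^ 2 - (1 + (t ^ 2 - 1) * x) = (t ^ 2 - 1) * (1 - x) := by ring
        have e2 : (1 + (t ^ 2 - 1) * x) - 1 = (t ^ 2 - 1) * x := by ring
        have e3 : (t ^ 2 - 1) * (t ^ 2 - 1) ^ (-(1:ℝ)/2) = (t ^ 2 - 1) ^ ((1:ℝ)/2) := by
          nth_rewrite 1 [← Real.rpow_one (t ^ 2 - 1)]
          rw [← Real.rpow_add hd]
          norm_num
        rw [e1, e2, Real.mul_rpow hd.le hx1.le, Real.mul_rpow hd.le hx0.le,
          Real.rpow_add hd, ← e3]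
        ring
    _ = ENNReal.ofReal ((t ^ 2 - 1) ^ (c + 1/2)) *
          ∫⁻ x in Ioo (0:ℝ) 1, ENNReal.ofReal (x ^ c * (1 - x) ^ (-(1:ℝ)/2)) :=
        lintegral_const_mul' _ _ ENNReal.ofReal_ne_top


set_option maxHeartbeats 2000000 in
/-- `L^p` estimate for the Abel transform associated with the X-ray transform of
radial functions on `ℍⁿ`: for `n ≥ 2` and `1 ≤ p < ∞` there is `C > 0` such that
for all measurable `F : (1,∞) → [0,∞]`,
`(∫_0^∞ (∫_{cosh s}^∞ F(t)(t² − cosh²s)^{−1/2} dt)^p sinh^{n−2} s cosh s ds)^{1/p}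
  ≤ C (∫_1^∞ F(t)^p (t² − 1)^{(n−2)/2} dt)^{1/p}`. -/
theorem abel_hyperbolic_xray_Lp (n : ℕ) (hn : 2 ≤ n) (p : ℝ) (hp : 1 ≤ p) :
    ∃ C : ℝ, 0 < C ∧ ∀ F : ℝ → ℝ≥0∞, Measurable F →
      (∫⁻ s in Set.Ioi (0 : ℝ),
          (∫⁻ t in Set.Ioi (Real.cosh s),
              F t * ENNReal.ofReal ((t ^ 2 - Real.cosh s ^ 2) ^ (-(1 : ℝ) / 2))) ^ p *
            ENNReal.ofReal (Real.sinh s ^ (n - 2) * Real.cosh s)) ^ (1 / p) ≤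
        ENNReal.ofReal C *
          (∫⁻ t in Set.Ioi (1 : ℝ),
              F t ^ p * ENNReal.ofReal ((t ^ 2 - 1) ^ (((n : ℝ) - 2) / 2))) ^ (1 / p) := by
  have hp0 : (0:ℝ) < p := by linarith
  set q : ℝ := p - 1 with hq
  have hq0 : (0:ℝ) ≤ q := by simp [hq]; linarith
  have hn1 : (1:ℝ) ≤ (n:ℝ) - 1 := by
    have : (2:ℝ) ≤ (n:ℝ) := by exact_mod_cast hn
    linarith
  set b : ℝ := ((n:ℝ) - 1) / (2 * p) with hbdef
  have hb : 0 < b := by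
    apply div_pos (by linarith) (by linarith)
  set α : ℝ := ((n:ℝ) - 3) / 2 with hα
  set β : ℝ := ((n:ℝ) - 2) / 2 with hβ
  set c : ℝ := α - b * q / 2 with hcdef
  have hc : -1 < c := by
    have key : c + 1 = ((n:ℝ) - 1) * (p + 1) / (4 * p) := by
      rw [hcdef, hα, hbdef, hq]
      field_simp
      ring
    have hpos : 0 < ((n:ℝ) - 1) * (p + 1) / (4 * p) :=
      div_pos (mul_pos (by linarith) (by linarith)) (by linarith)
    linarith [key ▸ hpos]
  have hexp : b * q / 2 + (c + 1/2) = β := by rw [hcdef, hα, hβ]; ring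
  set A₀ : ℝ≥0∞ := ∫⁻ z in Ioi (1:ℝ), ENNReal.ofReal (z ^ (-b) * (z ^ 2 - 1) ^ (-(1:ℝ)/2))
    with hA₀def
  set B₁ : ℝ≥0∞ := ∫⁻ x in Ioo (0:ℝ) 1, ENNReal.ofReal (x ^ c * (1 - x) ^ (-(1:ℝ)/2))
    with hB₁def
  have hA₀ : A₀ ≠ ⊤ := (A0_fin hb).ne
  have hB₁ : B₁ ≠ ⊤ := (B1_fin hc).ne
  set C₀ : ℝ≥0∞ := A₀ ^ q * (2⁻¹ * B₁) with hC₀def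
  have hC₀ : C₀ ≠ ⊤ := by
    apply ENNReal.mul_ne_top
    · exact (ENNReal.rpow_lt_top_of_nonneg hq0 hA₀).ne
    · exact ENNReal.mul_ne_top (by simp) hB₁
  refine ⟨(C₀ ^ (1/p)).toReal + 1, by positivity, fun F hF => ?_⟩

  -- weights
  set W : ℝ → ℝ≥0∞ := fun u => ENNReal.ofReal ((u ^ 2 - 1) ^ α * u) with hW
  set G : ℝ → ℝ → ℝ≥0∞ := fun u t =>
    F t ^ p * ENNReal.ofReal (t ^ (b*q)) *
      ENNReal.ofReal ((t ^ 2 - u ^ 2) ^ (-(1:ℝ)/2)) *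
      (ENNReal.ofReal (u ^ (-(b*q))) * W u) with hG
  set R : ℝ≥0∞ := ∫⁻ t in Ioi (1:ℝ), F t ^ p * ENNReal.ofReal ((t ^ 2 - 1) ^ β) with hR
  -- Step A : substitution u = cosh s
  have hsinh : ∀ s ∈ Ioi (0:ℝ), HasDerivWithinAt Real.cosh (Real.sinh s) (Ioi 0) s :=
    fun s _ => (Real.hasDerivAt_cosh s).hasDerivWithinAt
  have hinjcosh : Set.InjOn Real.cosh (Ioi 0) :=
    Real.cosh_strictMonoOn.injOn.mono Ioi_subset_Ici_self
  have stepA :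
      (∫⁻ s in Ioi (0:ℝ),
          (∫⁻ t in Ioi (Real.cosh s),
              F t * ENNReal.ofReal ((t ^ 2 - Real.cosh s ^ 2) ^ (-(1:ℝ)/2))) ^ p *
            ENNReal.ofReal (Real.sinh s ^ (n - 2) * Real.cosh s)) =
      ∫⁻ u in Ioi (1:ℝ),
          (∫⁻ t in Ioi u, F t * ENNReal.ofReal ((t ^ 2 - u ^ 2) ^ (-(1:ℝ)/2))) ^ p * W u := by
    rw [← image_cosh_Ioi, cvar1d measurableSet_Ioi hsinh hinjcosh
      (fun u => (∫⁻ t in Ioi u, F t * ENNReal.ofReal ((t ^ 2 - u ^ 2) ^ (-(1:ℝ)/2))) ^ p * W u)]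
    apply setLIntegral_congr_fun measurableSet_Ioi
    intro s hs
    beta_reduce
    have hs0 : (0:ℝ) < s := hs
    have hsh : 0 < Real.sinh s := by rwa [Real.sinh_pos_iff]
    have hch : 0 < Real.cosh s := Real.cosh_pos s
    have h1 : Real.cosh s ^ 2 - 1 = Real.sinh s ^ 2 := by
      have := Real.cosh_sq s; linarith
    have h3 : Real.sinh s ^ (n - 2) = Real.sinh s * (Real.sinh s ^ 2) ^ α := by
      rw [← Real.rpow_natCast (Real.sinh s) 2, ← Real.rpow_mul hsh.le,
        ← Real.rpow_natCast (Real.sinh s) (n - 2)]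
      nth_rewrite 2 [← Real.rpow_one (Real.sinh s)]
      rw [← Real.rpow_add hsh]
      congr 1
      have hcast : ((n - 2 : ℕ) : ℝ) = (n:ℝ) - 2 := by
        push_cast [Nat.cast_sub hn]
        ring
      rw [hcast, hα]
      ring
    have hreal : Real.sinh s ^ (n - 2) * Real.cosh s
        = Real.sinh s * ((Real.cosh s ^ 2 - 1) ^ α * Real.cosh s) := by
      rw [h1, h3]; ring
    rw [hW, abs_of_pos hsh, hreal, ENNReal.ofReal_mul hsh.le]
    ring
  -- Step B : pointwise Hoelder bound
  have hkmeas : ∀ u : ℝ, Measurable fun t : ℝ =>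
      ENNReal.ofReal ((t ^ 2 - u ^ 2) ^ (-(1:ℝ)/2)) :=
    fun u => (((measurable_id.pow_const 2).sub measurable_const).pow_const _).ennreal_ofReal
  have stepB : ∀ u ∈ Ioi (1:ℝ),
      (∫⁻ t in Ioi u, F t * ENNReal.ofReal ((t ^ 2 - u ^ 2) ^ (-(1:ℝ)/2))) ^ p ≤
        ENNReal.ofReal (u ^ (-(b*q))) * A₀ ^ q *
          ∫⁻ t in Ioi u, F t ^ p * ENNReal.ofReal (t ^ (b*q)) *
            ENNReal.ofReal ((t ^ 2 - u ^ 2) ^ (-(1:ℝ)/2)) := by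
    intro u hu
    have hu1 : (1:ℝ) < u := hu
    have hu0 : (0:ℝ) < u := by linarith
    have hφm : Measurable fun t : ℝ =>
        ENNReal.ofReal (t ^ (-b) * (t ^ 2 - u ^ 2) ^ (-(1:ℝ)/2)) :=
      ((measurable_id.pow_const _).mul
        (((measurable_id.pow_const 2).sub measurable_const).pow_const _)).ennreal_ofReal
    have hψm : Measurable fun t : ℝ => F t ^ p * ENNReal.ofReal (t ^ (b*q)) *
        ENNReal.ofReal ((t ^ 2 - u ^ 2) ^ (-(1:ℝ)/2)) :=
      ((hF.pow_const _).mul ((measurable_id.pow_const _).ennreal_ofReal)).mul (hkmeas u)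
    have h1 : (∫⁻ t in Ioi u, F t * ENNReal.ofReal ((t ^ 2 - u ^ 2) ^ (-(1:ℝ)/2))) =
        ∫⁻ t in Ioi u,
          (ENNReal.ofReal (t ^ (-b) * (t ^ 2 - u ^ 2) ^ (-(1:ℝ)/2))) ^ (q/p) *
          (F t ^ p * ENNReal.ofReal (t ^ (b*q)) *
            ENNReal.ofReal ((t ^ 2 - u ^ 2) ^ (-(1:ℝ)/2))) ^ (1/p) := by
      apply setLIntegral_congr_fun measurableSet_Ioi
      intro t ht
      beta_reduce
      have ht1 : u < t := ht
      have ht0 : (0:ℝ) < t := by linarith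
      have htu : (0:ℝ) < t ^ 2 - u ^ 2 := by nlinarith
      have hkpos : (0:ℝ) < (t ^ 2 - u ^ 2) ^ (-(1:ℝ)/2) := by positivity
      have hapos : (0:ℝ) < t ^ (-b) := by positivity
      have hk0 : ENNReal.ofReal ((t ^ 2 - u ^ 2) ^ (-(1:ℝ)/2)) ≠ 0 :=
        (ENNReal.ofReal_pos.mpr hkpos).ne'
      have ha0 : ENNReal.ofReal (t ^ (-b)) ≠ 0 := (ENNReal.ofReal_pos.mpr hapos).ne'
      have key := master_identity hp0 hq0 (by rw [hq]; ring) (F t)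
        (ENNReal.ofReal (t ^ (-b))) (ENNReal.ofReal ((t ^ 2 - u ^ 2) ^ (-(1:ℝ)/2)))
        ha0 ENNReal.ofReal_ne_top hk0 ENNReal.ofReal_ne_top
      have e1 : ENNReal.ofReal (t ^ (-b) * (t ^ 2 - u ^ 2) ^ (-(1:ℝ)/2)) =
          ENNReal.ofReal (t ^ (-b)) * ENNReal.ofReal ((t ^ 2 - u ^ 2) ^ (-(1:ℝ)/2)) :=
        ENNReal.ofReal_mul hapos.le
      have e2 : ENNReal.ofReal (t ^ (-b)) ^ (-q) = ENNReal.ofReal (t ^ (b*q)) := by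
        rw [ENNReal.ofReal_rpow_of_pos hapos, ← Real.rpow_mul ht0.le, neg_mul_neg]
      rw [e1, ← e2]
      exact key
    rw [h1]
    have h2 := hoelder_step (volume.restrict (Ioi u)) hp hq _ _
      hφm.aemeasurable hψm.aemeasurable
    have h3 : (∫⁻ t in Ioi u, ENNReal.ofReal (t ^ (-b) * (t ^ 2 - u ^ 2) ^ (-(1:ℝ)/2))) =
        ENNReal.ofReal (u ^ (-b)) * A₀ := by
      rw [hA₀def, S1 b hu0]
      have : u ^ (-b - 1) * u = u ^ (-b) := by
        rw [← Real.rpow_add_one hu0.ne' (-b - 1)]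
        norm_num
      rw [this]
    calc (∫⁻ t in Ioi u,
            (ENNReal.ofReal (t ^ (-b) * (t ^ 2 - u ^ 2) ^ (-(1:ℝ)/2))) ^ (q/p) *
            (F t ^ p * ENNReal.ofReal (t ^ (b*q)) *
              ENNReal.ofReal ((t ^ 2 - u ^ 2) ^ (-(1:ℝ)/2))) ^ (1/p)) ^ p
        ≤ ((ENNReal.ofReal (u ^ (-b)) * A₀) ^ (q/p) *
            (∫⁻ t in Ioi u, F t ^ p * ENNReal.ofReal (t ^ (b*q)) *
              ENNReal.ofReal ((t ^ 2 - u ^ 2) ^ (-(1:ℝ)/2))) ^ (1/p)) ^ p := by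
          apply ENNReal.rpow_le_rpow _ hp0.le
          rw [← h3]
          exact h2
      _ = (ENNReal.ofReal (u ^ (-b)) * A₀) ^ q *
            ∫⁻ t in Ioi u, F t ^ p * ENNReal.ofReal (t ^ (b*q)) *
              ENNReal.ofReal ((t ^ 2 - u ^ 2) ^ (-(1:ℝ)/2)) := by
          rw [ENNReal.mul_rpow_of_nonneg _ _ hp0.le, ← ENNReal.rpow_mul, ← ENNReal.rpow_mul,
            div_mul_cancel₀ _ hp0.ne', one_div_mul_cancel hp0.ne', ENNReal.rpow_one]
      _ = ENNReal.ofReal (u ^ (-(b*q))) * A₀ ^ q *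
            ∫⁻ t in Ioi u, F t ^ p * ENNReal.ofReal (t ^ (b*q)) *
              ENNReal.ofReal ((t ^ 2 - u ^ 2) ^ (-(1:ℝ)/2)) := by
          rw [ENNReal.mul_rpow_of_nonneg _ _ hq0,
            ENNReal.ofReal_rpow_of_pos (by positivity : (0:ℝ) < u ^ (-b)),
            ← Real.rpow_mul hu0.le, neg_mul]
  -- Step C
  have hA₀q : A₀ ^ q ≠ ⊤ := (ENNReal.rpow_lt_top_of_nonneg hq0 hA₀).ne
  have stepC :
      (∫⁻ u in Ioi (1:ℝ),
          (∫⁻ t in Ioi u, F t * ENNReal.ofReal ((t ^ 2 - u ^ 2) ^ (-(1:ℝ)/2))) ^ p * W u) ≤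
        A₀ ^ q * ∫⁻ u in Ioi (1:ℝ), ∫⁻ t in Ioi u, G u t := by
    rw [← lintegral_const_mul' _ _ hA₀q]
    apply lintegral_mono_ae
    rw [ae_restrict_iff' measurableSet_Ioi]
    filter_upwards with u hu
    have hWne : ENNReal.ofReal (u ^ (-(b*q))) * W u ≠ ⊤ :=
      ENNReal.mul_ne_top ENNReal.ofReal_ne_top ENNReal.ofReal_ne_top
    have e1 : (∫⁻ t in Ioi u, G u t) =
        (∫⁻ t in Ioi u, F t ^ p * ENNReal.ofReal (t ^ (b*q)) *
          ENNReal.ofReal ((t ^ 2 - u ^ 2) ^ (-(1:ℝ)/2))) *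
          (ENNReal.ofReal (u ^ (-(b*q))) * W u) := by
      rw [← lintegral_mul_const' _ _ hWne]
    calc (∫⁻ t in Ioi u, F t * ENNReal.ofReal ((t ^ 2 - u ^ 2) ^ (-(1:ℝ)/2))) ^ p * W u
        ≤ (ENNReal.ofReal (u ^ (-(b*q))) * A₀ ^ q *
            ∫⁻ t in Ioi u, F t ^ p * ENNReal.ofReal (t ^ (b*q)) *
              ENNReal.ofReal ((t ^ 2 - u ^ 2) ^ (-(1:ℝ)/2))) * W u :=
          mul_le_mul_left (stepB u hu) _
      _ = A₀ ^ q * ∫⁻ t in Ioi u, G u t := by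
          rw [e1]; ring
  -- Step D : Tonelli
  have hGmeas : Measurable (fun z : ℝ × ℝ => G z.1 z.2) := by
    apply Measurable.mul
    apply Measurable.mul
    apply Measurable.mul
    · exact (hF.comp measurable_snd).pow_const _
    · exact (measurable_snd.pow_const _).ennreal_ofReal
    · exact (((measurable_snd.pow_const 2).sub
        (measurable_fst.pow_const 2)).pow_const _).ennreal_ofReal
    · exact ((measurable_fst.pow_const _).ennreal_ofReal).mul
        (((((measurable_fst.pow_const 2).sub measurable_const).pow_const _).mul
          measurable_fst).ennreal_ofReal)
  have stepD : (∫⁻ u in Ioi (1:ℝ), ∫⁻ t in Ioi u, G u t) =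
      ∫⁻ t, ∫⁻ u in Ioo (1:ℝ) t, G u t := by
    have e1 : ∀ u : ℝ, (∫⁻ t in Ioi u, G u t) = ∫⁻ t, (Ioi u).indicator (G u) t := by
      intro u
      rw [lintegral_indicator measurableSet_Ioi]
    simp_rw [e1]
    rw [lintegral_lintegral_swap]
    · apply lintegral_congr
      intro t
      have e2 : ∀ u : ℝ, (Ioi u).indicator (G u) t = (Iio t).indicator (fun v => G v t) u := by
        intro u
        by_cases h : u < t
        · simp [Set.indicator_apply, h]
        · simp [Set.indicator_apply, h]
      simp_rw [e2]
      rw [lintegral_indicator measurableSet_Iio, Measure.restrict_restrict measurableSet_Iio,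
        Set.inter_comm, Ioi_inter_Iio]
    · have huncurry : (Function.uncurry fun u t => (Ioi u).indicator (G u) t) =
          fun z : ℝ × ℝ => if z.1 < z.2 then G z.1 z.2 else 0 := by
        funext z
        simp [Function.uncurry, Set.indicator_apply]
      rw [huncurry]
      exact (Measurable.ite (measurableSet_lt measurable_fst measurable_snd) hGmeas
        measurable_const).aemeasurable
  -- Step E : kernel estimate
  have stepE : ∀ t : ℝ, (∫⁻ u in Ioo (1:ℝ) t, G u t) ≤
      2⁻¹ * B₁ * (Ioi (1:ℝ)).indicator
        (fun t' => F t' ^ p * ENNReal.ofReal ((t' ^ 2 - 1) ^ β)) t := by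
    intro t
    rcases le_or_gt t 1 with h | h
    · rw [Ioo_eq_empty (by simpa using h)]
      simp
    · have ht1 : (1:ℝ) < t := h
      have ht0 : (0:ℝ) < t := by linarith
      have hd : (0:ℝ) < t ^ 2 - 1 := by nlinarith
      rw [Set.indicator_of_mem (mem_Ioi.mpr ht1)]
      have humeas : Measurable fun u : ℝ =>
          ENNReal.ofReal ((t ^ 2 - u ^ 2) ^ (-(1:ℝ)/2) *
            (u ^ (-(b*q)) * ((u ^ 2 - 1) ^ α * u))) := by
        apply Measurable.ennreal_ofReal
        exact (((measurable_const.sub (measurable_id.pow_const 2)).pow_const _).mul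
          ((measurable_id.pow_const _).mul
            ((((measurable_id.pow_const 2).sub measurable_const).pow_const _).mul
              measurable_id)))
      have e1 : (∫⁻ u in Ioo (1:ℝ) t, G u t) =
          (F t ^ p * ENNReal.ofReal (t ^ (b*q))) *
            ∫⁻ u in Ioo (1:ℝ) t,
              ENNReal.ofReal ((t ^ 2 - u ^ 2) ^ (-(1:ℝ)/2) *
                (u ^ (-(b*q)) * ((u ^ 2 - 1) ^ α * u))) := by
        rw [← lintegral_const_mul'' _ humeas.aemeasurable]
        apply setLIntegral_congr_fun measurableSet_Ioo
        intro u hu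
        beta_reduce
        have hu1 : (1:ℝ) < u := hu.1
        have hu0 : (0:ℝ) < u := by linarith
        have hut : u < t := hu.2
        have h2 : (0:ℝ) < t ^ 2 - u ^ 2 := by nlinarith
        have h3 : (0:ℝ) < u ^ 2 - 1 := by nlinarith
        rw [hG]
        dsimp only
        rw [ENNReal.ofReal_mul (by positivity), ENNReal.ofReal_mul (by positivity)]
        rw [hW]
        ring
      have e2 : (∫⁻ u in Ioo (1:ℝ) t,
            ENNReal.ofReal ((t ^ 2 - u ^ 2) ^ (-(1:ℝ)/2) *
              (u ^ (-(b*q)) * ((u ^ 2 - 1) ^ α * u)))) ≤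
          (2⁻¹ * ENNReal.ofReal ((t ^ 2 - 1) ^ (b*q/2) * t ^ (-(b*q)))) *
            ∫⁻ u in Ioo (1:ℝ) t,
              ENNReal.ofReal ((t ^ 2 - u ^ 2) ^ (-(1:ℝ)/2) * (u ^ 2 - 1) ^ c * (2 * u)) := by
        rw [← lintegral_const_mul' _ _
          (ENNReal.mul_ne_top (by simp) ENNReal.ofReal_ne_top)]
        apply lintegral_mono_ae
        rw [ae_restrict_iff' measurableSet_Ioo]
        filter_upwards with u hu
        have hu1 : (1:ℝ) < u := hu.1
        have hu0 : (0:ℝ) < u := by linarith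
        have hut : u < t := hu.2
        have h2 : (0:ℝ) < t ^ 2 - u ^ 2 := by nlinarith
        have h3 : (0:ℝ) < u ^ 2 - 1 := by nlinarith
        have htwo : (2⁻¹ : ℝ≥0∞) = ENNReal.ofReal (1/2) := by
          rw [show (1:ℝ)/2 = (2:ℝ)⁻¹ by norm_num,
            ENNReal.ofReal_inv_of_pos (by norm_num)]
          norm_num
        rw [htwo, ← ENNReal.ofReal_mul (by norm_num), ← ENNReal.ofReal_mul (by positivity)]
        apply ENNReal.ofReal_le_ofReal
        -- real inequality
        have hbq : (0:ℝ) ≤ b * q := by positivity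
        have hXpos : (0:ℝ) < (u ^ 2 - 1) * (t ^ 2 / (t ^ 2 - 1)) := by positivity
        have hXle : (u ^ 2 - 1) * (t ^ 2 / (t ^ 2 - 1)) ≤ u ^ 2 := by
          rw [mul_div_assoc', div_le_iff₀ hd]
          nlinarith
        have key1 : u ^ (-(b*q)) ≤
            (u ^ 2 - 1) ^ (-(b*q)/2) * (t ^ (-(b*q)) * (t ^ 2 - 1) ^ (b*q/2)) := by
          have hble : -(b*q)/2 ≤ 0 := by
            rw [neg_div]
            exact neg_nonpos.mpr (div_nonneg hbq (by norm_num))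
          have m1 : u ^ (-(b*q)) = (u ^ 2 : ℝ) ^ (-(b*q)/2) := by
            rw [← Real.rpow_natCast u 2, ← Real.rpow_mul hu0.le]
            congr 1
            push_cast
            ring
          have m2 : (u ^ 2 : ℝ) ^ (-(b*q)/2) ≤
              ((u ^ 2 - 1) * (t ^ 2 / (t ^ 2 - 1))) ^ (-(b*q)/2) :=
            Real.rpow_le_rpow_of_nonpos hXpos hXle hble
          have et2 : ((t:ℝ) ^ 2) ^ (-(b*q)/2) = t ^ (-(b*q)) := by
            rw [← Real.rpow_natCast t 2, ← Real.rpow_mul ht0.le]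
            congr 1
            push_cast
            ring
          have m3 : ((u ^ 2 - 1) * (t ^ 2 / (t ^ 2 - 1))) ^ (-(b*q)/2) =
              (u ^ 2 - 1) ^ (-(b*q)/2) * (t ^ (-(b*q)) * (t ^ 2 - 1) ^ (b*q/2)) := by
            rw [Real.mul_rpow h3.le (by positivity),
              Real.div_rpow (by positivity) hd.le, et2,
              show -(b*q)/2 = -(b*q/2) by ring,
              Real.rpow_neg hd.le (b*q/2), div_inv_eq_mul]
          rw [m1]
          exact m2.trans_eq m3
        have key2 : (u ^ 2 - 1) ^ (-(b*q)/2) * (u ^ 2 - 1) ^ α = (u ^ 2 - 1) ^ c := by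
          rw [← Real.rpow_add h3, hcdef]
          ring_nf
        calc (t ^ 2 - u ^ 2) ^ (-(1:ℝ)/2) * (u ^ (-(b*q)) * ((u ^ 2 - 1) ^ α * u))
            ≤ (t ^ 2 - u ^ 2) ^ (-(1:ℝ)/2) *
                (((u ^ 2 - 1) ^ (-(b*q)/2) * (t ^ (-(b*q)) * (t ^ 2 - 1) ^ (b*q/2))) *
                  ((u ^ 2 - 1) ^ α * u)) := by
              apply mul_le_mul_of_nonneg_left _ (by positivity)
              exact mul_le_mul_of_nonneg_right key1 (by positivity)
          _ = 1/2 * ((t ^ 2 - 1) ^ (b*q/2) * t ^ (-(b*q))) *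
                ((t ^ 2 - u ^ 2) ^ (-(1:ℝ)/2) * (u ^ 2 - 1) ^ c * (2 * u)) := by
              rw [← key2]; ring
      calc (∫⁻ u in Ioo (1:ℝ) t, G u t)
          ≤ (F t ^ p * ENNReal.ofReal (t ^ (b*q))) *
              ((2⁻¹ * ENNReal.ofReal ((t ^ 2 - 1) ^ (b*q/2) * t ^ (-(b*q)))) *
                ∫⁻ u in Ioo (1:ℝ) t,
                  ENNReal.ofReal ((t ^ 2 - u ^ 2) ^ (-(1:ℝ)/2) * (u ^ 2 - 1) ^ c * (2 * u))) := by
            rw [e1]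
            exact mul_le_mul_right e2 _
        _ = (F t ^ p * ENNReal.ofReal (t ^ (b*q))) *
              ((2⁻¹ * ENNReal.ofReal ((t ^ 2 - 1) ^ (b*q/2) * t ^ (-(b*q)))) *
                (ENNReal.ofReal ((t ^ 2 - 1) ^ (c + 1/2)) * B₁)) := by
            rw [S2 c ht1, hB₁def]
        _ = 2⁻¹ * B₁ * (F t ^ p * ENNReal.ofReal ((t ^ 2 - 1) ^ β)) := by
            have emerge : ENNReal.ofReal (t ^ (b*q)) *
                ENNReal.ofReal ((t ^ 2 - 1) ^ (b*q/2) * t ^ (-(b*q))) *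
                ENNReal.ofReal ((t ^ 2 - 1) ^ (c + 1/2)) =
                ENNReal.ofReal ((t ^ 2 - 1) ^ β) := by
              rw [← ENNReal.ofReal_mul (by positivity), ← ENNReal.ofReal_mul (by positivity)]
              congr 1
              have et : t ^ (b*q) * t ^ (-(b*q)) = 1 := by
                rw [← Real.rpow_add ht0]
                simp
              calc t ^ (b*q) * ((t ^ 2 - 1) ^ (b*q/2) * t ^ (-(b*q))) * (t ^ 2 - 1) ^ (c + 1/2)
                  = (t ^ (b*q) * t ^ (-(b*q))) * ((t ^ 2 - 1) ^ (b*q/2) * (t ^ 2 - 1) ^ (c + 1/2)) := by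
                    ring
                _ = (t ^ 2 - 1) ^ β := by
                    rw [et, one_mul, ← Real.rpow_add hd, hexp]
            calc (F t ^ p * ENNReal.ofReal (t ^ (b*q))) *
                  ((2⁻¹ * ENNReal.ofReal ((t ^ 2 - 1) ^ (b*q/2) * t ^ (-(b*q)))) *
                    (ENNReal.ofReal ((t ^ 2 - 1) ^ (c + 1/2)) * B₁)) =
                2⁻¹ * B₁ * (F t ^ p * (ENNReal.ofReal (t ^ (b*q)) *
                  ENNReal.ofReal ((t ^ 2 - 1) ^ (b*q/2) * t ^ (-(b*q))) *
                  ENNReal.ofReal ((t ^ 2 - 1) ^ (c + 1/2)))) := by ring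
              _ = 2⁻¹ * B₁ * (F t ^ p * ENNReal.ofReal ((t ^ 2 - 1) ^ β)) := by
                  rw [emerge]
  -- assemble
  have final :
      (∫⁻ s in Ioi (0:ℝ),
          (∫⁻ t in Ioi (Real.cosh s),
              F t * ENNReal.ofReal ((t ^ 2 - Real.cosh s ^ 2) ^ (-(1:ℝ)/2))) ^ p *
            ENNReal.ofReal (Real.sinh s ^ (n - 2) * Real.cosh s)) ≤ C₀ * R := by
    rw [stepA]
    calc (∫⁻ u in Ioi (1:ℝ),
            (∫⁻ t in Ioi u, F t * ENNReal.ofReal ((t ^ 2 - u ^ 2) ^ (-(1:ℝ)/2))) ^ p * W u)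
        ≤ A₀ ^ q * ∫⁻ u in Ioi (1:ℝ), ∫⁻ t in Ioi u, G u t := stepC
      _ = A₀ ^ q * ∫⁻ t, ∫⁻ u in Ioo (1:ℝ) t, G u t := by rw [stepD]
      _ ≤ A₀ ^ q * (2⁻¹ * B₁ * R) := by
          apply mul_le_mul_right
          calc (∫⁻ t, ∫⁻ u in Ioo (1:ℝ) t, G u t)
              ≤ ∫⁻ t, 2⁻¹ * B₁ * (Ioi (1:ℝ)).indicator
                  (fun t' => F t' ^ p * ENNReal.ofReal ((t' ^ 2 - 1) ^ β)) t :=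
                lintegral_mono fun t => stepE t
            _ = 2⁻¹ * B₁ * ∫⁻ t, (Ioi (1:ℝ)).indicator
                  (fun t' => F t' ^ p * ENNReal.ofReal ((t' ^ 2 - 1) ^ β)) t :=
                lintegral_const_mul' _ _ (ENNReal.mul_ne_top (by simp) hB₁)
            _ = 2⁻¹ * B₁ * R := by
                rw [lintegral_indicator measurableSet_Ioi, hR]
      _ = C₀ * R := by rw [hC₀def]; ring
  -- conclude
  have hfin : C₀ ^ (1/p) ≠ ⊤ := ENNReal.rpow_ne_top_of_nonneg (by positivity) hC₀
  calc (∫⁻ s in Ioi (0:ℝ),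
          (∫⁻ t in Ioi (Real.cosh s),
              F t * ENNReal.ofReal ((t ^ 2 - Real.cosh s ^ 2) ^ (-(1:ℝ)/2))) ^ p *
            ENNReal.ofReal (Real.sinh s ^ (n - 2) * Real.cosh s)) ^ (1/p)
      ≤ (C₀ * R) ^ (1/p) := ENNReal.rpow_le_rpow final (by positivity)
    _ = C₀ ^ (1/p) * R ^ (1/p) := ENNReal.mul_rpow_of_nonneg _ _ (by positivity)
    _ ≤ ENNReal.ofReal ((C₀ ^ (1/p)).toReal + 1) * R ^ (1/p) := by
        apply mul_le_mul_left
        conv_lhs => rw [← ENNReal.ofReal_toReal hfin]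
        exact ENNReal.ofReal_le_ofReal (by linarith [ENNReal.toReal_nonneg (a := C₀ ^ (1/p))])
end

section
/- Let n ≥ 3 and 2 ≤ d ≤ n−1 be integers. There exists a constant C > 0 such that for every measurable function f : (0,∞) → [0,∞], the Abel transform A_d⁻ f(s) = (cosh s)^{−1} ∫_s^∞ f(r) (1 − tanh²s/tanh²r)^{(d−2)/2} sinh^{d−1} r dr satisfies the weak-type bound sup_{λ>0} λ · ν({u > 0 : A_d⁻ f(u) > λ})^{1/(n−1)} ≤ C ‖f‖_{L^{(n−1)/(d−1),1}((0,∞), sinh^{n−1} r dr)}, where ν is the measure sinh^{n−d−1} u cosh^d u du on (0,∞). -/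
open MeasureTheory Set Real
open scoped ENNReal

lemma layercake_enn (μ : Measure ℝ) [SFinite μ] {F : ℝ → ℝ≥0∞} (hF : Measurable F) :
    ∫⁻ l in Set.Ioi (0:ℝ), μ {t | ENNReal.ofReal l < F t} = ∫⁻ t, F t ∂μ := by
  have hs : MeasurableSet {p : ℝ × ℝ | ENNReal.ofReal p.1 < F p.2} :=
    measurableSet_lt (ENNReal.measurable_ofReal.comp measurable_fst) (hF.comp measurable_snd)
  have key : ∫⁻ l in Set.Ioi (0:ℝ), μ {t | ENNReal.ofReal l < F t}
      = ∫⁻ l in Set.Ioi (0:ℝ), ∫⁻ t, {p : ℝ × ℝ | ENNReal.ofReal p.1 < F p.2}.indicator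
          (fun _ => 1) (l, t) ∂μ := by
    refine lintegral_congr fun l => ?_
    have hA : MeasurableSet {t | ENNReal.ofReal l < F t} := hF measurableSet_Ioi
    rw [← setLIntegral_one, ← lintegral_indicator hA]
    refine lintegral_congr fun t => ?_
    by_cases h : ENNReal.ofReal l < F t <;>
      simp [Set.indicator, h]
  rw [key, lintegral_lintegral_swap]
  · refine lintegral_congr fun t => ?_
    have : ∀ l : ℝ, ({p : ℝ × ℝ | ENNReal.ofReal p.1 < F p.2}).indicator (fun _ => (1:ℝ≥0∞)) (l, t)
        = ({l : ℝ | ENNReal.ofReal l < F t}).indicator (fun _ => 1) l := by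
      intro l
      by_cases h : ENNReal.ofReal l < F t <;> simp [Set.indicator, h]
    simp_rw [this]
    have hA : MeasurableSet {l : ℝ | ENNReal.ofReal l < F t} :=
      measurableSet_lt ENNReal.measurable_ofReal measurable_const
    rw [lintegral_indicator hA, setLIntegral_one, Measure.restrict_apply hA]
    rcases eq_or_ne (F t) ∞ with h | h
    · have : {l : ℝ | ENNReal.ofReal l < F t} ∩ Set.Ioi 0 = Set.Ioi 0 := by
        ext l; simp [h, ENNReal.ofReal_lt_top]
      rw [this, h]
      simp
    · have : {l : ℝ | ENNReal.ofReal l < F t} ∩ Set.Ioi 0 = Set.Ioo 0 ((F t).toReal) := by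
        ext l
        simp only [Set.mem_inter_iff, Set.mem_setOf_eq, Set.mem_Ioi, Set.mem_Ioo]
        constructor
        · rintro ⟨h1, h2⟩
          exact ⟨h2, (ENNReal.ofReal_lt_iff_lt_toReal h2.le h).mp h1⟩
        · rintro ⟨h1, h2⟩
          exact ⟨(ENNReal.ofReal_lt_iff_lt_toReal h1.le h).mpr h2, h1⟩
      rw [this, Real.volume_Ioo, sub_zero, ENNReal.ofReal_toReal h]
  · exact (measurable_one.indicator hs).aemeasurable

lemma lint_Ioc_ftc {g G : ℝ → ℝ} {v : ℝ} (hd : ∀ t, HasDerivAt G (g t) t) (hc : Continuous g)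
    (hnn : ∀ t ∈ Set.Ioc (0:ℝ) v, 0 ≤ g t) (hv : 0 ≤ v) :
    ∫⁻ t in Set.Ioc 0 v, ENNReal.ofReal (g t) = ENNReal.ofReal (G v - G 0) := by
  have hint : IntervalIntegrable g volume 0 v := hc.intervalIntegrable 0 v
  have h1 : ∫ t in (0:ℝ)..v, g t = G v - G 0 :=
    intervalIntegral.integral_eq_sub_of_hasDerivAt (fun t _ => hd t) hint
  rw [intervalIntegral.integral_of_le hv] at h1
  rw [← h1, ofReal_integral_eq_lintegral_ofReal]
  · exact (hc.integrableOn_Ioc)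
  · exact (ae_restrict_iff' measurableSet_Ioc).mpr (ae_of_all _ fun t ht => hnn t ht)

lemma cosh_le_exp' {t : ℝ} (ht : 0 ≤ t) : Real.cosh t ≤ Real.exp t := by
  rw [Real.cosh_eq]
  nlinarith [Real.exp_le_exp.mpr (neg_le_self ht), Real.exp_pos t]

lemma lint_sinh_pow_lt {k : ℕ} (hk : 1 ≤ k) {T : ℝ} (hT : 0 < T) :
    ∫⁻ r in {r : ℝ | 0 < r ∧ Real.sinh r < T}, ENNReal.ofReal (Real.sinh r ^ (k+1))
      ≤ ENNReal.ofReal (T ^ (k+1) / (k+1)) := by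
  set v := Real.arsinh T with hv
  have hv0 : 0 < v := Real.arsinh_pos_iff.mpr hT
  have hset : {r : ℝ | 0 < r ∧ Real.sinh r < T} = Set.Ioo 0 v := by
    ext r
    simp only [Set.mem_setOf_eq, Set.mem_Ioo]
    rw [hv, ← Real.sinh_arsinh T, Real.sinh_lt_sinh, Real.sinh_arsinh]
  rw [hset]
  have h1 : ∫⁻ r in Set.Ioo 0 v, ENNReal.ofReal (Real.sinh r ^ (k+1))
      ≤ ∫⁻ r in Set.Ioc 0 v, ENNReal.ofReal (Real.sinh r ^ k * Real.cosh r) := by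
    refine le_trans (lintegral_mono_set Set.Ioo_subset_Ioc_self) (setLIntegral_mono ?_ ?_)
    · exact (((Real.measurable_sinh.pow_const k).mul Real.measurable_cosh).ennreal_ofReal)
    · intro r hr
      refine ENNReal.ofReal_le_ofReal ?_
      have hs : 0 ≤ Real.sinh r := (Real.sinh_pos_iff.mpr hr.1).le
      calc Real.sinh r ^ (k+1) = Real.sinh r ^ k * Real.sinh r := by ring
        _ ≤ Real.sinh r ^ k * Real.cosh r := by
            exact mul_le_mul_of_nonneg_left (Real.sinh_lt_cosh r).le (pow_nonneg hs k)
  refine h1.trans ?_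
  have hder : ∀ t : ℝ, HasDerivAt (fun t => Real.sinh t ^ (k+1) / (k+1))
      (Real.sinh t ^ k * Real.cosh t) t := by
    intro t
    have := ((Real.hasDerivAt_sinh t).pow (k+1)).div_const ((k:ℝ)+1)
    refine this.congr_deriv ?_
    have : ((k:ℝ)+1) ≠ 0 := by positivity
    rw [Nat.add_sub_cancel]; push_cast
    rw [mul_assoc, mul_div_cancel_left₀ _ this]
  rw [lint_Ioc_ftc hder (by continuity) (fun t ht => by
    have hs : 0 ≤ Real.sinh t := (Real.sinh_pos_iff.mpr ht.1).le
    positivity) hv0.le]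
  refine ENNReal.ofReal_le_ofReal ?_
  rw [Real.sinh_arsinh, Real.sinh_zero]
  simp [zero_pow]

lemma nu_Ioc_le (n d : ℕ) (hn : 3 ≤ n) (hd2 : 2 ≤ d) (hdn : d ≤ n - 1) {u : ℝ} (hu : 0 < u) :
    ∫⁻ t in Set.Ioc 0 u, ENNReal.ofReal (Real.sinh t ^ (n - d - 1) * Real.cosh t ^ d)
      ≤ ENNReal.ofReal (Real.exp (((n:ℝ)-1) * u)) := by
  set c : ℝ := (n:ℝ) - 1 with hc
  have hc0 : (0:ℝ) < c := by
    have : (3:ℝ) ≤ (n:ℝ) := by exact_mod_cast hn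
    simp only [hc]; linarith
  have hpt : ∀ t ∈ Set.Ioc (0:ℝ) u,
      Real.sinh t ^ (n - d - 1) * Real.cosh t ^ d ≤ Real.exp (c * t) := by
    intro t ht
    have hs : 0 ≤ Real.sinh t := (Real.sinh_pos_iff.mpr ht.1).le
    have h1 : Real.sinh t ^ (n - d - 1) * Real.cosh t ^ d
        ≤ Real.cosh t ^ (n - d - 1) * Real.cosh t ^ d :=
      mul_le_mul_of_nonneg_right (pow_le_pow_left₀ hs (Real.sinh_lt_cosh t).le _)
        (by positivity)
    have h2 : Real.cosh t ^ (n - d - 1) * Real.cosh t ^ d = Real.cosh t ^ (n-1) := by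
      rw [← pow_add]
      congr 1
      omega
    have h3 : Real.cosh t ^ (n-1) ≤ Real.exp t ^ (n-1) :=
      pow_le_pow_left₀ (Real.cosh_pos t).le (cosh_le_exp' ht.1.le) _
    have h4 : Real.exp t ^ (n-1) = Real.exp (c * t) := by
      rw [← Real.exp_nat_mul, hc]
      congr 1
      have : ((n-1 : ℕ) : ℝ) = (n:ℝ) - 1 := by
        have : 1 ≤ n := by omega
        push_cast [Nat.cast_sub this]
        ring
      rw [this]
    linarith [h1, h2 ▸ h1, h3]
  have hmono : ∫⁻ t in Set.Ioc 0 u, ENNReal.ofReal (Real.sinh t ^ (n - d - 1) * Real.cosh t ^ d)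
      ≤ ∫⁻ t in Set.Ioc 0 u, ENNReal.ofReal (Real.exp (c * t)) := by
    refine setLIntegral_mono (Real.measurable_exp.comp (measurable_const_mul c)).ennreal_ofReal ?_
    exact fun t ht => ENNReal.ofReal_le_ofReal (hpt t ht)
  refine hmono.trans ?_
  have hder : ∀ t : ℝ, HasDerivAt (fun t => Real.exp (c * t) / c) (Real.exp (c * t)) t := by
    intro t
    have := (((hasDerivAt_id t).const_mul c).exp).div_const c
    refine this.congr_deriv ?_
    simp [hc0.ne']
  rw [lint_Ioc_ftc hder (by continuity) (fun t _ => (Real.exp_pos _).le) hu.le]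
  refine ENNReal.ofReal_le_ofReal ?_
  rw [mul_zero, Real.exp_zero]
  have h3n : (3:ℝ) ≤ (n:ℝ) := by exact_mod_cast hn
  have h1 : (1:ℝ) ≤ c := by rw [hc]; linarith
  have he := Real.exp_pos (c * u)
  have h2 : (0:ℝ) < 1/c := by positivity
  calc Real.exp (c*u)/c - 1/c ≤ Real.exp (c*u)/c := by linarith
    _ ≤ Real.exp (c*u) := by
        rw [div_le_iff₀ hc0]
        nlinarith

lemma union_bound (κ : Measure ℝ) {A : Set ℝ} {M : ℝ≥0∞} (hA : A ⊆ Set.Ioi 0)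
    (h : ∀ u ∈ A, κ (Set.Ioc 0 u) ≤ M) : κ A ≤ M := by
  rcases A.eq_empty_or_nonempty with rfl | hne
  · simp
  have hdir : ∀ c : ℕ → ℝ, Directed (· ⊆ ·) (fun k => Set.Ioc (0:ℝ) (c k)) := by
    intro c i j
    rcases le_total (c i) (c j) with hle | hle
    · exact ⟨j, Set.Ioc_subset_Ioc_right hle, subset_rfl⟩
    · exact ⟨i, subset_rfl, Set.Ioc_subset_Ioc_right hle⟩
  by_cases hb : BddAbove A
  · by_cases hs : sSup A ∈ A
    · exact le_trans (measure_mono fun a ha => Set.mem_Ioc.mpr ⟨hA ha, le_csSup hb ha⟩) (h _ hs)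
    · have hlt : ∀ a ∈ A, a < sSup A := fun a ha =>
        lt_of_le_of_ne (le_csSup hb ha) (by rintro rfl; exact hs ha)
      have hcex : ∀ k : ℕ, ∃ a ∈ A, sSup A - 1/(k+1) < a := by
        intro k
        refine exists_lt_of_lt_csSup hne ?_
        have : (0:ℝ) < 1/(k+1) := by positivity
        linarith
      choose c hcA hcgt using hcex
      have hsub : A ⊆ ⋃ k, Set.Ioc 0 (c k) := by
        intro a ha
        obtain ⟨k, hk⟩ := exists_nat_one_div_lt (sub_pos.mpr (hlt a ha))
        refine Set.mem_iUnion.mpr ⟨k, Set.mem_Ioc.mpr ⟨hA ha, ?_⟩⟩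
        have := hcgt k
        push_cast at hk this ⊢
        linarith
      calc κ A ≤ κ (⋃ k, Set.Ioc 0 (c k)) := measure_mono hsub
        _ = ⨆ k, κ (Set.Ioc 0 (c k)) := Directed.measure_iUnion (hdir c)
        _ ≤ M := iSup_le fun k => h _ (hcA k)
  · have hcex : ∀ k : ℕ, ∃ a ∈ A, (k:ℝ) < a := by
      intro k
      obtain ⟨a, ha, hk⟩ := not_bddAbove_iff.mp hb (k:ℝ)
      exact ⟨a, ha, hk⟩
    choose c hcA hcgt using hcex
    have hsub : A ⊆ ⋃ k, Set.Ioc 0 (c k) := by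
      intro a ha
      obtain ⟨k, hk⟩ := exists_nat_ge a
      exact Set.mem_iUnion.mpr ⟨k, Set.mem_Ioc.mpr ⟨hA ha, le_of_lt (lt_of_le_of_lt hk (hcgt k))⟩⟩
    calc κ A ≤ κ (⋃ k, Set.Ioc 0 (c k)) := measure_mono hsub
      _ = ⨆ k, κ (Set.Ioc 0 (c k)) := Directed.measure_iUnion (hdir c)
      _ ≤ M := iSup_le fun k => h _ (hcA k)

lemma set_bound (n d : ℕ) (hn : 3 ≤ n) (hd2 : 2 ≤ d) (hdn : d ≤ n - 1)
    {E : Set ℝ} (hE : MeasurableSet E) (hE' : E ⊆ Set.Ioi 0) :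
    ∫⁻ r in E, ENNReal.ofReal (Real.sinh r ^ (d-1))
      ≤ ENNReal.ofReal (((n:ℝ)-1)/((d:ℝ)-1)) *
        (∫⁻ r in E, ENNReal.ofReal (Real.sinh r ^ (n-1))) ^ (1 / (((n:ℝ)-1)/((d:ℝ)-1))) := by
  have hnR : (3:ℝ) ≤ (n:ℝ) := by exact_mod_cast hn
  have hdR : (2:ℝ) ≤ (d:ℝ) := by exact_mod_cast hd2
  have hdnR : (d:ℝ) ≤ (n:ℝ) - 1 := by
    have h1 : d + 1 ≤ n := by omega
    have h2 : ((d:ℝ)) + 1 ≤ (n:ℝ) := by exact_mod_cast h1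
    linarith
  set p : ℝ := ((n:ℝ)-1)/((d:ℝ)-1) with hpdef
  set q : ℝ := ((n:ℝ)-1)/((n:ℝ)-(d:ℝ)) with hqdef
  have hd1 : (0:ℝ) < (d:ℝ) - 1 := by linarith
  have hnd : (0:ℝ) < (n:ℝ) - (d:ℝ) := by linarith
  have hn1 : (0:ℝ) < (n:ℝ) - 1 := by linarith
  have hp1 : 1 < p := (one_lt_div hd1).mpr (by linarith)
  have hq1 : 1 < q := (one_lt_div hnd).mpr (by linarith)
  have hp0 : 0 < p := by linarith
  have hinvp : 1 + -(1/q) = 1/p := by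
    rw [hpdef, hqdef]
    field_simp
    ring
  have hρm : Measurable fun r : ℝ => ENNReal.ofReal (Real.sinh r ^ (n-1)) :=
    (Real.measurable_sinh.pow_const _).ennreal_ofReal
  set m := ∫⁻ r in E, ENNReal.ofReal (Real.sinh r ^ (n-1)) with hm
  rcases eq_or_ne m 0 with hm0 | hm0
  · have hEvol : volume E = 0 := by
      have h1 := (lintegral_eq_zero_iff hρm).mp hm0
      rw [Filter.EventuallyEq, ae_restrict_iff' hE] at h1
      rw [measure_eq_zero_iff_ae_notMem]
      filter_upwards [h1] with r hr hrE
      have hs : 0 < Real.sinh r := Real.sinh_pos_iff.mpr (hE' hrE)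
      have h2 := hr hrE
      simp only [Pi.zero_apply, ENNReal.ofReal_eq_zero] at h2
      nlinarith [pow_pos hs (n-1)]
    rw [Measure.restrict_eq_zero.mpr hEvol, lintegral_zero_measure]
    exact zero_le
  rcases eq_or_ne m ⊤ with hmt | hmt
  · have hRtop : ENNReal.ofReal p * m ^ (1/p) = ⊤ := by
      rw [hmt, ENNReal.top_rpow_of_pos (by positivity), ENNReal.mul_top]
      simp only [ne_eq, ENNReal.ofReal_eq_zero, not_le]
      linarith
    exact hRtop ▸ le_top
  have hmr : 0 < m.toReal := ENNReal.toReal_pos hm0 hmt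
  set mr := m.toReal with hmrdef
  set G : ℝ → ℝ≥0∞ := fun r => ENNReal.ofReal (Real.sinh r) ^ (-((n:ℝ) - (d:ℝ))) with hG
  have hGm : Measurable G := Real.measurable_sinh.ennreal_ofReal.pow measurable_const
  set μE := (volume.restrict E).withDensity
      (fun r => ENNReal.ofReal (Real.sinh r ^ (n-1))) with hμE
  have hμEuniv : μE Set.univ = m := by
    rw [hμE, withDensity_apply _ MeasurableSet.univ, Measure.restrict_univ, hm]
  haveI : IsFiniteMeasure μE := ⟨by rw [hμEuniv]; exact hmt.lt_top⟩
  have step1 : ∫⁻ r in E, ENNReal.ofReal (Real.sinh r ^ (d-1)) = ∫⁻ r, G r ∂μE := by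
    rw [hμE, lintegral_withDensity_eq_lintegral_mul _ hρm hGm]
    refine setLIntegral_congr_fun hE (fun r hr => ?_)
    have hs : 0 < Real.sinh r := Real.sinh_pos_iff.mpr (hE' hr)
    have hx0 : ENNReal.ofReal (Real.sinh r) ≠ 0 := by
      simp only [ne_eq, ENNReal.ofReal_eq_zero, not_le]; exact hs
    have hxt : ENNReal.ofReal (Real.sinh r) ≠ ⊤ := ENNReal.ofReal_ne_top
    have c1 : ((d-1 : ℕ):ℝ) = (d:ℝ)-1 := by
      have : 1 ≤ d := by omega
      push_cast [Nat.cast_sub this]; ring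
    have c2 : ((n-1 : ℕ):ℝ) = (n:ℝ)-1 := by
      have : 1 ≤ n := by omega
      push_cast [Nat.cast_sub this]; ring
    calc ENNReal.ofReal (Real.sinh r ^ (d-1))
        = ENNReal.ofReal (Real.sinh r) ^ ((d-1 : ℕ):ℝ) := by
          rw [ENNReal.rpow_natCast, ← ENNReal.ofReal_pow hs.le]
      _ = ENNReal.ofReal (Real.sinh r) ^ (((n-1:ℕ):ℝ) + (-((n:ℝ)-(d:ℝ)))) := by
          rw [c1, c2]; ring_nf
      _ = ENNReal.ofReal (Real.sinh r) ^ ((n-1:ℕ):ℝ)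
            * ENNReal.ofReal (Real.sinh r) ^ (-((n:ℝ)-(d:ℝ))) :=
          ENNReal.rpow_add _ _ hx0 hxt
      _ = ((fun r : ℝ => ENNReal.ofReal (Real.sinh r ^ (n-1))) * G) r := by
          rw [hG]
          simp only [Pi.mul_apply]
          rw [ENNReal.rpow_natCast, ← ENNReal.ofReal_pow hs.le]
  have step3 : ∀ l ∈ Set.Ioi (0:ℝ),
      μE {t | ENNReal.ofReal l < G t} ≤ min m (ENNReal.ofReal (l ^ (-q))) := by
    intro l hl
    have hl0 : 0 < l := hl
    refine le_min (le_trans (measure_mono (Set.subset_univ _)) (le_of_eq hμEuniv)) ?_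
    set T : ℝ := l ^ (-(1/((n:ℝ)-(d:ℝ)))) with hT
    have hT0 : 0 < T := Real.rpow_pos_of_pos hl0 _
    have hSm : MeasurableSet {t | ENNReal.ofReal l < G t} :=
      measurableSet_lt measurable_const hGm
    have hsub : {t | ENNReal.ofReal l < G t} ∩ E ⊆ {r | 0 < r ∧ Real.sinh r < T} := by
      rintro r ⟨hrG, hrE⟩
      have hr0 : 0 < r := hE' hrE
      have hs : 0 < Real.sinh r := Real.sinh_pos_iff.mpr hr0
      refine ⟨hr0, ?_⟩
      have hGr : G r = ENNReal.ofReal (Real.sinh r ^ (-((n:ℝ)-(d:ℝ)))) := by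
        simp only [hG]
        rw [ENNReal.ofReal_rpow_of_pos hs]
      rw [Set.mem_setOf_eq, hGr] at hrG
      have hlt : l < Real.sinh r ^ (-((n:ℝ)-(d:ℝ))) := by
        rwa [ENNReal.ofReal_lt_ofReal_iff (Real.rpow_pos_of_pos hs _)] at hrG
      by_contra hcon
      push_neg at hcon
      have hmono : Real.sinh r ^ (-((n:ℝ)-(d:ℝ))) ≤ T ^ (-((n:ℝ)-(d:ℝ))) :=
        Real.rpow_le_rpow_of_nonpos hT0 hcon (by linarith)
      have hTpow : T ^ (-((n:ℝ)-(d:ℝ))) = l := by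
        rw [hT, ← Real.rpow_mul hl0.le]
        have hne : (n:ℝ)-(d:ℝ) ≠ 0 := ne_of_gt hnd
        rw [show (-(1/((n:ℝ)-(d:ℝ)))) * (-((n:ℝ)-(d:ℝ))) = 1 by field_simp]
        exact Real.rpow_one l
      rw [hTpow] at hmono
      linarith
    have hμES : μE {t | ENNReal.ofReal l < G t}
        = ∫⁻ r in {t | ENNReal.ofReal l < G t} ∩ E,
            ENNReal.ofReal (Real.sinh r ^ (n-1)) ∂volume := by
      rw [hμE, withDensity_apply _ hSm, Measure.restrict_restrict hSm]
    rw [hμES]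
    refine le_trans (lintegral_mono_set hsub) ?_
    have hkey := lint_sinh_pow_lt (k := n-2) (by omega) hT0
    have hk : n - 2 + 1 = n - 1 := by omega
    rw [hk] at hkey
    refine hkey.trans (ENNReal.ofReal_le_ofReal ?_)
    have c2 : ((n-1 : ℕ):ℝ) = (n:ℝ)-1 := by
      have : 1 ≤ n := by omega
      push_cast [Nat.cast_sub this]; ring
    have h1 : T ^ (n-1 : ℕ) = l ^ (-q) := by
      rw [hT, ← Real.rpow_natCast (l ^ (-(1/((n:ℝ)-(d:ℝ))))) (n-1), ← Real.rpow_mul hl0.le]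
      congr 1
      rw [c2, hqdef]
      field_simp
    rw [h1]
    have h2 : (1:ℝ) ≤ ((n-2:ℕ):ℝ) + 1 := by
      have : (1:ℕ) ≤ n - 2 := by omega
      have := (Nat.one_le_cast (α := ℝ)).mpr this
      linarith
    calc l ^ (-q) / (((n-2:ℕ):ℝ)+1) ≤ l ^ (-q) / 1 := by
          apply div_le_div_of_nonneg_left (Real.rpow_nonneg hl0.le _) one_pos ?_ |>.trans ?_
          · exact h2
          · rfl
      _ = l ^ (-q) := div_one _
  set t0 : ℝ := mr ^ (-(1/q)) with ht0
  have ht00 : 0 < t0 := Real.rpow_pos_of_pos hmr _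
  have hql : -q < -1 := by linarith
  have hq0 : (0:ℝ) < q - 1 := by linarith
  have part1 : ∫⁻ l in Set.Ioc (0:ℝ) t0, min m (ENNReal.ofReal (l ^ (-q)))
      ≤ ENNReal.ofReal (mr ^ (1/p)) := by
    refine le_trans (setLIntegral_mono measurable_const (fun l _ => min_le_left _ _)) ?_
    rw [setLIntegral_const, Real.volume_Ioc, sub_zero]
    rw [← ENNReal.ofReal_toReal hmt, ← hmrdef, ← ENNReal.ofReal_mul hmr.le]
    refine ENNReal.ofReal_le_ofReal (le_of_eq ?_)
    calc mr * t0 = mr ^ (1:ℝ) * mr ^ (-(1/q)) := by rw [Real.rpow_one, ht0]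
      _ = mr ^ (1 + -(1/q)) := (Real.rpow_add hmr 1 _).symm
      _ = mr ^ (1/p) := by rw [hinvp]
  have hnnae : 0 ≤ᵐ[volume.restrict (Set.Ioi t0)] fun l : ℝ => l ^ (-q) :=
    (ae_restrict_iff' measurableSet_Ioi).mpr
      (ae_of_all _ fun l hl => Real.rpow_nonneg (le_of_lt (ht00.trans hl)) _)
  have part2 : ∫⁻ l in Set.Ioi t0, min m (ENNReal.ofReal (l ^ (-q)))
      ≤ ENNReal.ofReal (mr ^ (1/p) / (q-1)) := by
    refine le_trans (setLIntegral_mono (g := fun l => ENNReal.ofReal (l ^ (-q)))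
      ((measurable_id.pow_const _).ennreal_ofReal)
      (fun l _ => min_le_right _ _)) ?_
    have heq : ∫⁻ l in Set.Ioi t0, ENNReal.ofReal (l ^ (-q)) ∂volume
        = ENNReal.ofReal (∫ l in Set.Ioi t0, l ^ (-q) ∂volume) :=
      (ofReal_integral_eq_lintegral_ofReal (integrableOn_Ioi_rpow_of_lt hql ht00) hnnae).symm
    rw [heq]
    refine ENNReal.ofReal_le_ofReal (le_of_eq ?_)
    rw [integral_Ioi_rpow_of_lt hql ht00]
    rw [show (-q+1 : ℝ) = -(q-1) by ring]
    rw [show t0 ^ (-(q-1)) = mr ^ (1/p) from ?_]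
    · rw [div_neg, neg_div, neg_neg]
    · rw [ht0, ← Real.rpow_mul hmr.le]
      congr 1
      have : -(1/q) * -(q-1) = 1 + -(1/q) := by
        have hqne : q ≠ 0 := by linarith
        field_simp
        ring
      rw [this, hinvp]
  have hfin : ENNReal.ofReal (mr ^ (1/p)) + ENNReal.ofReal (mr ^ (1/p) / (q-1))
      = ENNReal.ofReal p * m ^ (1/p) := by
    have hpq : mr ^ (1/p) + mr ^ (1/p) / (q-1) = p * mr ^ (1/p) := by
      have h1 : p = 1 + 1/(q-1) := by
        rw [hpdef, hqdef]
        have h2 : (n:ℝ) - (d:ℝ) ≠ 0 := ne_of_gt hnd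
        have h3 : (d:ℝ) - 1 ≠ 0 := ne_of_gt hd1
        have h4 : ((n:ℝ)-1)/((n:ℝ)-(d:ℝ)) - 1 = ((d:ℝ)-1)/((n:ℝ)-(d:ℝ)) := by
          field_simp
          ring
        rw [h4, one_div_div]
        field_simp
        ring
      rw [h1]
      field_simp
    rw [← ENNReal.ofReal_add (Real.rpow_nonneg hmr.le _)
      (by positivity), hpq, ENNReal.ofReal_mul hp0.le]
    congr 1
    rw [← ENNReal.ofReal_rpow_of_pos hmr, hmrdef, ENNReal.ofReal_toReal hmt]
  calc ∫⁻ r in E, ENNReal.ofReal (Real.sinh r ^ (d-1))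
      = ∫⁻ t, G t ∂μE := step1
    _ = ∫⁻ l in Set.Ioi (0:ℝ), μE {t | ENNReal.ofReal l < G t} := (layercake_enn μE hGm).symm
    _ ≤ ∫⁻ l in Set.Ioi (0:ℝ), min m (ENNReal.ofReal (l ^ (-q))) :=
        setLIntegral_mono (g := fun l => min m (ENNReal.ofReal (l ^ (-q))))
          (measurable_const.min ((measurable_id.pow_const _).ennreal_ofReal)) step3
    _ ≤ (∫⁻ l in Set.Ioc (0:ℝ) t0, min m (ENNReal.ofReal (l ^ (-q))))
          + ∫⁻ l in Set.Ioi t0, min m (ENNReal.ofReal (l ^ (-q))) := by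
        rw [← Set.Ioc_union_Ioi_eq_Ioi ht00.le]
        exact lintegral_union_le _ _ _
    _ ≤ ENNReal.ofReal (mr ^ (1/p)) + ENNReal.ofReal (mr ^ (1/p) / (q-1)) :=
        add_le_add part1 part2
    _ = ENNReal.ofReal p * m ^ (1/p) := hfin

lemma main_bound (n d : ℕ) (hn : 3 ≤ n) (hd2 : 2 ≤ d) (hdn : d ≤ n - 1)
    (f : ℝ → ℝ≥0∞) (hf : Measurable f) :
    ∫⁻ r in Set.Ioi (0:ℝ), f r * ENNReal.ofReal (Real.sinh r ^ (d-1))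
      ≤ lorentzNorm ((volume.restrict (Set.Ioi (0:ℝ))).withDensity
          (fun r => ENNReal.ofReal (Real.sinh r ^ (n-1)))) (((n:ℝ)-1)/((d:ℝ)-1)) f := by
  set μ1 := (volume.restrict (Set.Ioi (0:ℝ))).withDensity
      (fun r => ENNReal.ofReal (Real.sinh r ^ (n-1))) with hμ1
  set μ2 := (volume.restrict (Set.Ioi (0:ℝ))).withDensity
      (fun r => ENNReal.ofReal (Real.sinh r ^ (d-1))) with hμ2
  have hdm : Measurable fun r : ℝ => ENNReal.ofReal (Real.sinh r ^ (d-1)) :=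
    (Real.measurable_sinh.pow_const _).ennreal_ofReal
  have h1 : ∫⁻ r in Set.Ioi (0:ℝ), f r * ENNReal.ofReal (Real.sinh r ^ (d-1))
      = ∫⁻ r, f r ∂μ2 := by
    rw [hμ2, lintegral_withDensity_eq_lintegral_mul _ hdm hf]
    exact lintegral_congr fun r => (mul_comm _ _)
  have h2 : ∫⁻ r, f r ∂μ2 = ∫⁻ l in Set.Ioi (0:ℝ), μ2 {t | ENNReal.ofReal l < f t} :=
    (layercake_enn μ2 hf).symm
  have h3 : ∀ l ∈ Set.Ioi (0:ℝ), μ2 {t | ENNReal.ofReal l < f t}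
      ≤ ENNReal.ofReal (((n:ℝ)-1)/((d:ℝ)-1)) *
        (μ1 {t | ENNReal.ofReal l < f t}) ^ (1 / (((n:ℝ)-1)/((d:ℝ)-1))) := by
    intro l _
    have hEl : MeasurableSet {t | ENNReal.ofReal l < f t} :=
      measurableSet_lt measurable_const hf
    have e2 : μ2 {t | ENNReal.ofReal l < f t}
        = ∫⁻ r in {t | ENNReal.ofReal l < f t} ∩ Set.Ioi 0,
            ENNReal.ofReal (Real.sinh r ^ (d-1)) ∂volume := by
      rw [hμ2, withDensity_apply _ hEl, Measure.restrict_restrict hEl]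
    have e1 : μ1 {t | ENNReal.ofReal l < f t}
        = ∫⁻ r in {t | ENNReal.ofReal l < f t} ∩ Set.Ioi 0,
            ENNReal.ofReal (Real.sinh r ^ (n-1)) ∂volume := by
      rw [hμ1, withDensity_apply _ hEl, Measure.restrict_restrict hEl]
    rw [e1, e2]
    exact set_bound n d hn hd2 hdn (hEl.inter measurableSet_Ioi) Set.inter_subset_right
  have hmono : Antitone fun l : ℝ => μ1 {t | ENNReal.ofReal l < f t} := by
    intro a b hab
    exact measure_mono fun t ht => lt_of_le_of_lt (ENNReal.ofReal_le_ofReal hab) ht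
  have hmeas : Measurable fun l : ℝ => μ1 {t | ENNReal.ofReal l < f t} :=
    Antitone.measurable hmono
  calc ∫⁻ r in Set.Ioi (0:ℝ), f r * ENNReal.ofReal (Real.sinh r ^ (d-1))
      = ∫⁻ l in Set.Ioi (0:ℝ), μ2 {t | ENNReal.ofReal l < f t} := h1.trans h2
    _ ≤ ∫⁻ l in Set.Ioi (0:ℝ), ENNReal.ofReal (((n:ℝ)-1)/((d:ℝ)-1)) *
          (μ1 {t | ENNReal.ofReal l < f t}) ^ (1 / (((n:ℝ)-1)/((d:ℝ)-1))) :=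
        setLIntegral_mono (measurable_const.mul (hmeas.pow_const _)) h3
    _ = lorentzNorm μ1 (((n:ℝ)-1)/((d:ℝ)-1)) f := by
        rw [lorentzNorm, lintegral_const_mul _ (hmeas.pow_const _)]

/-- Weak-type `L^{(n−1)/(d−1),1} → L^{n−1,∞}` bound for the Abel transform
`A_d⁻ f(s) = (cosh s)^{−1} ∫_s^∞ f(r)(1 − tanh²s/tanh²r)^{(d−2)/2} sinh^{d−1} r dr`
on radial functions of `ℍⁿ`: for `n ≥ 3`, `2 ≤ d ≤ n−1` there is `C > 0` with
`sup_{λ>0} λ · ν({u > 0 : A_d⁻ f(u) > λ})^{1/(n−1)}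
  ≤ C ‖f‖_{L^{(n−1)/(d−1),1}((0,∞), sinh^{n−1} r dr)}`,
where `ν = sinh^{n−d−1} u cosh^d u du` on `(0,∞)`. -/
theorem abel_hyperbolic_weak_type (n d : ℕ) (hn : 3 ≤ n) (hd : 2 ≤ d) (hdn : d ≤ n - 1) :
    ∃ C : ℝ, 0 < C ∧ ∀ f : ℝ → ℝ≥0∞, Measurable f →
      ∀ l : ℝ, 0 < l →
        ENNReal.ofReal l *
            (((volume.restrict (Set.Ioi (0 : ℝ))).withDensity
                (fun u => ENNReal.ofReal (Real.sinh u ^ (n - d - 1) * Real.cosh u ^ d)))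
              {u | ENNReal.ofReal l <
                (ENNReal.ofReal (Real.cosh u))⁻¹ *
                  ∫⁻ r in Set.Ioi u,
                    f r * ENNReal.ofReal
                      ((1 - Real.tanh u ^ 2 / Real.tanh r ^ 2) ^ (((d : ℝ) - 2) / 2) *
                        Real.sinh r ^ (d - 1))}) ^ (1 / ((n : ℝ) - 1)) ≤
          ENNReal.ofReal C *
            lorentzNorm
              ((volume.restrict (Set.Ioi (0 : ℝ))).withDensity
                (fun r => ENNReal.ofReal (Real.sinh r ^ (n - 1))))
              (((n : ℝ) - 1) / ((d : ℝ) - 1)) f := by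
  refine ⟨2, two_pos, ?_⟩
  intro f hf l hl
  have hnR : (3:ℝ) ≤ (n:ℝ) := by exact_mod_cast hn
  have hn1 : (0:ℝ) < (n:ℝ) - 1 := by linarith
  set ν := (volume.restrict (Set.Ioi (0 : ℝ))).withDensity
      (fun u => ENNReal.ofReal (Real.sinh u ^ (n - d - 1) * Real.cosh u ^ d)) with hν
  set μ1 := (volume.restrict (Set.Ioi (0 : ℝ))).withDensity
      (fun r => ENNReal.ofReal (Real.sinh r ^ (n - 1))) with hμ1
  set N := lorentzNorm μ1 (((n : ℝ) - 1) / ((d : ℝ) - 1)) f with hN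
  set S := {u : ℝ | ENNReal.ofReal l <
      (ENNReal.ofReal (Real.cosh u))⁻¹ *
        ∫⁻ r in Set.Ioi u,
          f r * ENNReal.ofReal
            ((1 - Real.tanh u ^ 2 / Real.tanh r ^ 2) ^ (((d : ℝ) - 2) / 2) *
              Real.sinh r ^ (d - 1))} with hS
  have h2ne : (ENNReal.ofReal 2) ≠ 0 := by simp
  rcases eq_or_ne N ⊤ with hNt | hNt
  · rw [hNt, ENNReal.mul_top h2ne]
    exact le_top
  have hdm : Measurable fun r : ℝ => ENNReal.ofReal (Real.sinh r ^ (d-1)) :=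
    (Real.measurable_sinh.pow_const _).ennreal_ofReal
  have hl0 : ENNReal.ofReal l ≠ 0 := by simp [hl]
  -- key bound on S points
  have key : ∀ u ∈ S ∩ Set.Ioi (0:ℝ),
      ν (Set.Ioc 0 u) ≤ (2 * N / ENNReal.ofReal l) ^ ((n:ℝ)-1) := by
    rintro u ⟨huS, hu0⟩
    have hu0' : (0:ℝ) < u := hu0
    have hcosh : 0 < Real.cosh u := Real.cosh_pos u
    have hw : ∀ r ∈ Set.Ioi u,
        f r * ENNReal.ofReal
            ((1 - Real.tanh u ^ 2 / Real.tanh r ^ 2) ^ (((d : ℝ) - 2) / 2) *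
              Real.sinh r ^ (d - 1))
          ≤ f r * ENNReal.ofReal (Real.sinh r ^ (d-1)) := by
      intro r hr
      have hru : u < r := hr
      have hr0 : (0:ℝ) < r := hu0'.trans hru
      have hsr : 0 < Real.sinh r := Real.sinh_pos_iff.mpr hr0
      have htr : 0 < Real.tanh r := by
        rw [Real.tanh_eq_sinh_div_cosh]
        exact div_pos hsr (Real.cosh_pos r)
      have htu : 0 ≤ Real.tanh u := by
        rw [Real.tanh_eq_sinh_div_cosh]
        exact div_nonneg (Real.sinh_pos_iff.mpr hu0').le (Real.cosh_pos u).le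
      have hmono : Real.tanh u ≤ Real.tanh r := by
        rw [Real.tanh_eq_sinh_div_cosh, Real.tanh_eq_sinh_div_cosh,
          div_le_div_iff₀ (Real.cosh_pos u) (Real.cosh_pos r)]
        have h1 := Real.sinh_sub u r
        have h2 : Real.sinh (u - r) < 0 := Real.sinh_neg_iff.mpr (by linarith)
        nlinarith
      have hratio : Real.tanh u ^ 2 / Real.tanh r ^ 2 ≤ 1 := by
        rw [div_le_one (by positivity)]
        exact pow_le_pow_left₀ htu hmono 2
      have hratio0 : 0 ≤ Real.tanh u ^ 2 / Real.tanh r ^ 2 := by positivity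
      refine mul_le_mul_right (ENNReal.ofReal_le_ofReal ?_) _
      have hle1 : (1 - Real.tanh u ^ 2 / Real.tanh r ^ 2) ^ (((d : ℝ) - 2) / 2) ≤ 1 := by
        refine Real.rpow_le_one (by linarith) (by linarith) ?_
        have : (2:ℝ) ≤ (d:ℝ) := by exact_mod_cast hd
        linarith
      have hge0 : 0 ≤ (1 - Real.tanh u ^ 2 / Real.tanh r ^ 2) ^ (((d : ℝ) - 2) / 2) :=
        Real.rpow_nonneg (by linarith) _
      calc (1 - Real.tanh u ^ 2 / Real.tanh r ^ 2) ^ (((d : ℝ) - 2) / 2) * Real.sinh r ^ (d-1)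
          ≤ 1 * Real.sinh r ^ (d-1) :=
            mul_le_mul_of_nonneg_right hle1 (by positivity)
        _ = Real.sinh r ^ (d-1) := one_mul _
    have hIN : (∫⁻ r in Set.Ioi u,
        f r * ENNReal.ofReal
          ((1 - Real.tanh u ^ 2 / Real.tanh r ^ 2) ^ (((d : ℝ) - 2) / 2) *
            Real.sinh r ^ (d - 1))) ≤ N := by
      calc (∫⁻ r in Set.Ioi u, f r * ENNReal.ofReal
              ((1 - Real.tanh u ^ 2 / Real.tanh r ^ 2) ^ (((d : ℝ) - 2) / 2) *
                Real.sinh r ^ (d - 1)))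
          ≤ ∫⁻ r in Set.Ioi u, f r * ENNReal.ofReal (Real.sinh r ^ (d-1)) :=
            setLIntegral_mono (hf.mul hdm) hw
        _ ≤ ∫⁻ r in Set.Ioi (0:ℝ), f r * ENNReal.ofReal (Real.sinh r ^ (d-1)) :=
            lintegral_mono_set (Set.Ioi_subset_Ioi hu0'.le)
        _ ≤ N := main_bound n d hn hd hdn f hf
    have hc0 : ENNReal.ofReal (Real.cosh u) ≠ 0 := by
      simp only [ne_eq, ENNReal.ofReal_eq_zero, not_le]; exact hcosh
    have hlN : ENNReal.ofReal l * ENNReal.ofReal (Real.cosh u) ≤ N := by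
      have hub : ENNReal.ofReal l < (ENNReal.ofReal (Real.cosh u))⁻¹ * N :=
        lt_of_lt_of_le huS (mul_le_mul_right hIN _)
      rw [← ENNReal.div_eq_inv_mul] at hub
      exact (ENNReal.le_div_iff_mul_le (Or.inl hc0)
        (Or.inl ENNReal.ofReal_ne_top)).mp hub.le
    have hν1 : ν (Set.Ioc 0 u) ≤ (ENNReal.ofReal (Real.exp u)) ^ ((n:ℝ)-1) := by
      rw [hν, withDensity_apply _ measurableSet_Ioc,
        Measure.restrict_restrict measurableSet_Ioc,
        Set.inter_eq_left.mpr Set.Ioc_subset_Ioi_self]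
      refine (nu_Ioc_le n d hn hd hdn hu0').trans (le_of_eq ?_)
      rw [ENNReal.ofReal_rpow_of_pos (Real.exp_pos u)]
      congr 1
      rw [← Real.exp_mul]
      ring_nf
    have hexpN : ENNReal.ofReal (Real.exp u) ≤ 2 * N / ENNReal.ofReal l := by
      have he2 : Real.exp u ≤ 2 * Real.cosh u := by
        rw [Real.cosh_eq]
        nlinarith [Real.exp_pos (-u)]
      have hcN : ENNReal.ofReal (Real.cosh u) ≤ N / ENNReal.ofReal l :=
        (ENNReal.le_div_iff_mul_le (Or.inl hl0) (Or.inl ENNReal.ofReal_ne_top)).mpr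
          (by rw [mul_comm]; exact hlN)
      calc ENNReal.ofReal (Real.exp u) ≤ ENNReal.ofReal (2 * Real.cosh u) :=
            ENNReal.ofReal_le_ofReal he2
        _ = 2 * ENNReal.ofReal (Real.cosh u) := by
            rw [ENNReal.ofReal_mul (by norm_num : (0:ℝ) ≤ 2)]
            norm_num
        _ ≤ 2 * (N / ENNReal.ofReal l) := mul_le_mul_right hcN _
        _ = 2 * N / ENNReal.ofReal l := (mul_div_assoc _ _ _).symm
    exact hν1.trans (ENNReal.rpow_le_rpow hexpN (by linarith))
  -- conclude
  have hνout : ν (S ∩ (Set.Ioi (0:ℝ))ᶜ) = 0 := by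
    have hc : ν ((Set.Ioi (0:ℝ))ᶜ) = 0 := by
      rw [hν, withDensity_apply _ measurableSet_Ioi.compl,
        Measure.restrict_restrict measurableSet_Ioi.compl]
      have he : Set.Iic (0:ℝ) ∩ Set.Ioi 0 = ∅ := by
        rw [← Set.compl_Ioi]
        exact Set.compl_inter_self _
      simp [Set.compl_Ioi, he]
    exact le_antisymm (le_trans (measure_mono Set.inter_subset_right) hc.le) zero_le
  have hSsub : ν S ≤ (2 * N / ENNReal.ofReal l) ^ ((n:ℝ)-1) := by
    calc ν S ≤ ν (S ∩ Set.Ioi 0) + ν (S ∩ (Set.Ioi (0:ℝ))ᶜ) := by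
          nth_rewrite 1 [← Set.inter_union_compl S (Set.Ioi 0)]
          exact measure_union_le _ _
      _ ≤ (2 * N / ENNReal.ofReal l) ^ ((n:ℝ)-1) + 0 :=
          add_le_add (union_bound ν Set.inter_subset_right key) hνout.le
      _ = (2 * N / ENNReal.ofReal l) ^ ((n:ℝ)-1) := add_zero _
  calc ENNReal.ofReal l * (ν S) ^ (1/((n:ℝ)-1))
      ≤ ENNReal.ofReal l * (((2 * N / ENNReal.ofReal l) ^ ((n:ℝ)-1)) ^ (1/((n:ℝ)-1))) :=
        mul_le_mul_right (ENNReal.rpow_le_rpow hSsub (by positivity)) _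
    _ = ENNReal.ofReal l * (2 * N / ENNReal.ofReal l) := by
        rw [← ENNReal.rpow_mul, mul_one_div, div_self (ne_of_gt hn1), ENNReal.rpow_one]
    _ = 2 * N := ENNReal.mul_div_cancel hl0 ENNReal.ofReal_ne_top
    _ = ENNReal.ofReal 2 * N := by norm_num
end
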